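/- arXiv:1509.05291 — 4 statements merged into one kernel-verified Lean document; each statement's English description precedes it below -/
import Mathlib

section
/- Suppose κ = 2^λ for some cardinal λ < κ. Then E^κ_{μ-club} on κ^κ is reducible to the λ-fold product Π_λ E^2_{μ-club} on (2^κ)^λ: there is a function F : κ^κ → (2^κ)^λ such that f E^κ_{μ-club} g iff for every γ < λ, F(f)_γ E^2_{μ-club} F(g)_γ. -/
open Set Cardinal

/-- `A ⊆ κ` is a `μ`-club: unbounded in `κ` and closed under suprema of
strictly increasing sequences of order type `μ`. -/
def IsMuClub (κ μ : Cardinal.{0}) (A : Set Ordinal.{0}) : Prop :=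
  A ⊆ Set.Iio κ.ord ∧
  (∀ β < κ.ord, ∃ α ∈ A, β < α) ∧
  ∀ s : Ordinal → Ordinal, StrictMonoOn s (Set.Iio μ.ord) →
    (∀ i < μ.ord, s i ∈ A) → sSup (s '' Set.Iio μ.ord) ∈ A

/-- Sup of `Y j γ` over `j < i`, `γ < lam.ord`, indexed by Type-0 types. -/
noncomputable def famSup (lam : Cardinal.{0}) (Y : Ordinal.{0} → Ordinal.{0} → Ordinal.{0})
    (i : Ordinal.{0}) : Ordinal.{0} :=
  ⨆ x : i.ToType × lam.ord.ToType,
    Y (((Ordinal.ToType.mk (o := i))).symm x.1).1 (((Ordinal.ToType.mk (o := lam.ord))).symm x.2).1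

theorem le_famSup (lam : Cardinal.{0}) (Y : Ordinal → Ordinal → Ordinal) {i j γ : Ordinal}
    (hj : j < i) (hγ : γ < lam.ord) : Y j γ ≤ famSup lam Y i := by
  have h := le_ciSup (f := fun x : i.ToType × lam.ord.ToType =>
      Y (((Ordinal.ToType.mk (o := i))).symm x.1).1 (((Ordinal.ToType.mk (o := lam.ord))).symm x.2).1)
    (Ordinal.bddAbove_range _)
    (((Ordinal.ToType.mk (o := i)) ⟨j, hj⟩), ((Ordinal.ToType.mk (o := lam.ord)) ⟨γ, hγ⟩))
  simp only [OrderIso.symm_apply_apply] at h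
  exact h

theorem famSup_lt {κ lam : Cardinal.{0}} (hκ : κ.IsRegular) (hlam : lam < κ)
    {Y : Ordinal → Ordinal → Ordinal} {i : Ordinal} (hi : i.card < κ)
    (hY : ∀ j < i, ∀ γ < lam.ord, Y j γ < κ.ord) : famSup lam Y i < κ.ord := by
  apply Cardinal.iSup_lt_ord_of_isRegular hκ
  · rw [Cardinal.mk_prod, Cardinal.mk_toType, Cardinal.mk_toType, Cardinal.lift_id,
      Cardinal.lift_id, Cardinal.card_ord]
    exact Cardinal.mul_lt_of_lt hκ.aleph0_le hi hlam
  · intro x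
    exact hY _ (((Ordinal.ToType.mk (o := i))).symm x.1).2 _ (((Ordinal.ToType.mk (o := lam.ord))).symm x.2).2

/-- The diagonal recursion: at stage `i`, pick (via `p γ`) an element of `A γ` above `β` and
above all values at earlier stages. -/
noncomputable def Yrec (lam : Cardinal.{0}) (p : Ordinal → Ordinal → Ordinal) (β : Ordinal.{0}) :
    Ordinal.{0} → Ordinal.{0} → Ordinal.{0} :=
  Ordinal.lt_wf.fix (C := fun _ => Ordinal → Ordinal) fun i ih γ =>
    p γ (max β (famSup lam (fun j γ' => if h : j < i then ih j h γ' else 0) i))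

theorem famSup_congr (lam : Cardinal.{0}) {Y Z : Ordinal → Ordinal → Ordinal} {i : Ordinal}
    (h : ∀ j < i, ∀ γ' < lam.ord, Y j γ' = Z j γ') : famSup lam Y i = famSup lam Z i := by
  unfold famSup
  congr 1
  funext x
  exact h _ (((Ordinal.ToType.mk (o := i))).symm x.1).2 _ (((Ordinal.ToType.mk (o := lam.ord))).symm x.2).2

theorem Yrec_eq (lam : Cardinal.{0}) (p : Ordinal → Ordinal → Ordinal) (β i γ : Ordinal) :
    Yrec lam p β i γ = p γ (max β (famSup lam (Yrec lam p β) i)) := by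
  have h1 : Yrec lam p β i γ
      = p γ (max β (famSup lam (fun j γ' => if _ : j < i then Yrec lam p β j γ' else 0) i)) := by
    change (Ordinal.lt_wf.fix (C := fun _ => Ordinal → Ordinal) _ i) γ = _
    rw [WellFounded.fix_eq]
    rfl
  rw [h1]
  congr 2
  exact famSup_congr lam fun j hj γ' _ => dif_pos hj

theorem isMuClub_iInter {κ lam μ : Cardinal.{0}} (hκ : κ.IsRegular)
    (hμ : μ.IsRegular) (hμκ : μ < κ) (hlam : lam < κ) (hlam0 : 0 < lam.ord)
    (A : Ordinal → Set Ordinal) (hA : ∀ γ < lam.ord, IsMuClub κ μ (A γ)) :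
    IsMuClub κ μ (⋂ γ ∈ Iio lam.ord, A γ) := by
  have hμκo : μ.ord < κ.ord := Cardinal.ord_lt_ord.2 hμκ
  have hμlim : Order.IsSuccLimit μ.ord := Cardinal.isSuccLimit_ord hμ.aleph0_le
  refine ⟨?_, ?_, ?_⟩
  · intro x hx
    exact (hA 0 hlam0).1 (mem_iInter₂.mp hx 0 hlam0)
  · -- unboundedness
    intro β hβ
    -- Skolem function for unboundedness of each A γ
    have hpick : ∃ p : Ordinal → Ordinal → Ordinal,
        ∀ γ < lam.ord, ∀ b < κ.ord, p γ b ∈ A γ ∧ b < p γ b := by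
      classical
      refine ⟨fun γ b => if h : γ < lam.ord ∧ b < κ.ord then
        Classical.choose ((hA γ h.1).2.1 b h.2) else 0, fun γ hγ b hb => ?_⟩
      simp only [dif_pos (And.intro hγ hb)]
      exact Classical.choose_spec ((hA γ hγ).2.1 b hb)
    obtain ⟨p, hp⟩ := hpick
    set Y : Ordinal → Ordinal → Ordinal := Yrec lam p β with hY
    -- main invariant
    have key : ∀ i < μ.ord, ∀ γ < lam.ord, Y i γ ∈ A γ ∧ max β (famSup lam Y i) < Y i γ := by
      intro i
      induction i using Ordinal.induction with
      | _ i IH =>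
        intro hi γ hγ
        have hval : ∀ j < i, ∀ γ' < lam.ord, Y j γ' < κ.ord := fun j hj γ' hγ' =>
          (hA γ' hγ').1 ((IH j hj (hj.trans hi) γ' hγ').1)
        have hb : famSup lam Y i < κ.ord :=
          famSup_lt hκ hlam (Cardinal.lt_ord.mp (hi.trans hμκo)) hval
        have harg : max β (famSup lam Y i) < κ.ord := max_lt hβ hb
        have hYeq : Y i γ = p γ (max β (famSup lam Y i)) := Yrec_eq lam p β i γ
        refine ⟨hYeq ▸ (hp γ hγ _ harg).1, hYeq ▸ (hp γ hγ _ harg).2⟩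
    -- cross-monotonicity
    have mono : ∀ j i, j < i → i < μ.ord → ∀ γ < lam.ord, ∀ γ' < lam.ord, Y j γ' < Y i γ :=
      fun j i hji hi γ hγ γ' hγ' =>
        lt_of_le_of_lt ((le_famSup lam Y hji hγ').trans (le_max_right β _)) (key i hi γ hγ).2
    have hβY : ∀ i < μ.ord, ∀ γ < lam.ord, β < Y i γ := fun i hi γ hγ =>
      lt_of_le_of_lt (le_max_left β _) (key i hi γ hγ).2
    -- the common supremum
    have hbdd : ∀ γ : Ordinal, BddAbove ((fun i => Y i γ) '' Iio μ.ord) :=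
      fun γ => Ordinal.bddAbove_of_small
    have hXmem : ∀ γ < lam.ord, sSup ((fun i => Y i γ) '' Iio μ.ord) ∈ A γ := by
      intro γ hγ
      refine (hA γ hγ).2.2 (fun i => Y i γ) ?_ (fun i hi => (key i hi γ hγ).1)
      intro a ha b hb hab
      exact mono a b hab hb γ hγ γ hγ
    have hXeq : ∀ γ < lam.ord, ∀ γ' < lam.ord,
        sSup ((fun i => Y i γ) '' Iio μ.ord) ≤ sSup ((fun i => Y i γ') '' Iio μ.ord) := by
      intro γ hγ γ' hγ'
      refine csSup_le (Set.Nonempty.image _ ⟨0, hμlim.pos⟩) ?_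
      rintro x ⟨i, hi, rfl⟩
      have hsi : Order.succ i < μ.ord := hμlim.succ_lt hi
      exact le_of_lt (lt_of_lt_of_le (mono i (Order.succ i) (Order.lt_succ i) hsi γ' hγ' γ hγ)
        (le_csSup (hbdd γ') (mem_image_of_mem _ hsi)))
    refine ⟨sSup ((fun i => Y i 0) '' Iio μ.ord), ?_, ?_⟩
    · refine mem_iInter₂.mpr fun γ hγ => ?_
      have := le_antisymm (hXeq 0 hlam0 γ hγ) (hXeq γ hγ 0 hlam0)
      rw [this]
      exact hXmem γ hγ
    · exact lt_of_lt_of_le (hβY 0 hμlim.pos 0 hlam0)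
        (le_csSup (hbdd 0) (mem_image_of_mem _ hμlim.pos))
  · intro s hs hmem
    refine mem_iInter₂.mpr fun γ hγ => ?_
    exact (hA γ hγ).2.2 s hs fun i hi => mem_iInter₂.mp (hmem i hi) γ hγ

/-- `E^κ_{μ-club}` on `κ^κ`. -/
def EMuClub (κ μ : Cardinal.{0}) (f g : Ordinal → Ordinal) : Prop :=
  ∃ A : Set Ordinal, IsMuClub κ μ A ∧ ∀ α ∈ A, f α = g α

/-- `E^2_{μ-club}` on `2^κ` (functions `κ → Bool`). -/
def EMuClubBool (κ μ : Cardinal.{0}) (f g : Ordinal → Bool) : Prop :=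
  ∃ A : Set Ordinal, IsMuClub κ μ A ∧ ∀ α ∈ A, f α = g α

/-- If `κ = 2^λ` with `λ < κ`, then `E^κ_{μ-club}` reduces to the `λ`-fold
product `Π_λ E^2_{μ-club}` on `(2^κ)^λ`: there is `F` such that
`f E^κ_{μ-club} g` iff `F(f)_γ E^2_{μ-club} F(g)_γ` for every `γ < λ`. -/
theorem eMuClub_reducible_prod (κ lam μ : Cardinal.{0}) (hκ : κ.IsRegular) (hκω : ℵ₀ < κ)
    (hμ : μ.IsRegular) (hμκ : μ < κ) (hlam : lam < κ) (h2 : κ = 2 ^ lam) :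
    ∃ F : (Ordinal → Ordinal) → (Ordinal → Ordinal → Bool),
      ∀ f g : Ordinal → Ordinal,
        (∀ α < κ.ord, f α < κ.ord) → (∀ α < κ.ord, g α < κ.ord) →
        (EMuClub κ μ f g ↔ ∀ γ < lam.ord, EMuClubBool κ μ (F f γ) (F g γ)) := by
  classical
  have hlamω : ℵ₀ ≤ lam := by
    by_contra hcon
    push_neg at hcon
    have h2a : (2 : Cardinal) < ℵ₀ := by exact_mod_cast Cardinal.nat_lt_aleph0 2
    exact absurd (h2 ▸ hκω) (not_lt.mpr (le_of_lt (Cardinal.power_lt_aleph0 h2a hcon)))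
  have hlam0 : 0 < lam.ord := (Cardinal.isSuccLimit_ord hlamω).pos
  have hcard : #(κ.ord.ToType) ≤ #(lam.ord.ToType → Bool) := by
    rw [Cardinal.mk_toType, Cardinal.card_ord, ← Cardinal.power_def, Cardinal.mk_bool,
      Cardinal.mk_toType, Cardinal.card_ord]
    exact le_of_eq h2
  obtain ⟨e⟩ := (Cardinal.le_def _ _).mp hcard
  set G : Ordinal → Ordinal → Bool := fun x γ =>
    if hx : x < κ.ord then
      if hγ : γ < lam.ord then
        e ((Ordinal.ToType.mk (o := κ.ord)) ⟨x, hx⟩) ((Ordinal.ToType.mk (o := lam.ord)) ⟨γ, hγ⟩)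
      else false
    else false with hGdef
  have hG : ∀ x, x < κ.ord → ∀ y, y < κ.ord → (∀ γ < lam.ord, G x γ = G y γ) → x = y := by
    intro x hx y hy h
    have he : e ((Ordinal.ToType.mk (o := κ.ord)) ⟨x, hx⟩)
        = e ((Ordinal.ToType.mk (o := κ.ord)) ⟨y, hy⟩) := by
      funext t
      have ht : ((((Ordinal.ToType.mk (o := lam.ord))).symm t : Iio lam.ord) : Ordinal) < lam.ord :=
        (((Ordinal.ToType.mk (o := lam.ord))).symm t).2
      have h' := h _ ht
      simp only [hGdef, dif_pos hx, dif_pos hy, dif_pos ht] at h'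
      have e3 : (Ordinal.ToType.mk (o := lam.ord))
          ⟨(((Ordinal.ToType.mk (o := lam.ord))).symm t : Ordinal), ht⟩ = t :=
        (Ordinal.ToType.mk (o := lam.ord)).apply_symm_apply t
      exact (congrArg (e _) e3).symm.trans (h'.trans (congrArg (e _) e3))
    exact congrArg Subtype.val (((Ordinal.ToType.mk (o := κ.ord))).injective (e.injective he))
  refine ⟨fun f γ α => G (f α) γ, ?_⟩
  intro f g hf hg
  constructor
  · rintro ⟨A, hclub, hfg⟩ γ hγ
    exact ⟨A, hclub, fun α hα => by simp only []; rw [hfg α hα]⟩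
  · intro h
    choose A hA1 hA2 using fun γ : ↥(Iio lam.ord) => h γ.1 γ.2
    set A' : Ordinal → Set Ordinal := fun γ => if hγ : γ < lam.ord then A ⟨γ, hγ⟩ else ∅ with hA'
    have hA'club : ∀ γ < lam.ord, IsMuClub κ μ (A' γ) := fun γ hγ => by
      simpa [hA', dif_pos hγ] using hA1 ⟨γ, hγ⟩
    have hBclub := isMuClub_iInter hκ hμ hμκ hlam hlam0 A' hA'club
    refine ⟨⋂ γ ∈ Iio lam.ord, A' γ, hBclub, ?_⟩
    intro α hα
    have hακ : α < κ.ord := hBclub.1 hα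
    refine hG (f α) (hf α hακ) (g α) (hg α hακ) fun γ hγ => ?_
    have hmem : α ∈ A ⟨γ, hγ⟩ := by
      have := mem_iInter₂.mp hα γ hγ
      simpa [hA', dif_pos hγ] using this
    exact hA2 ⟨γ, hγ⟩ α hmem
end

section
/- Suppose (t₀,c₀) and (t₁,c₁) are isomorphic coloured trees and I = (I_α)_{α<κ}, J = (J_α)_{α<κ} are good filtrations of t₀ and t₁ respectively. Then the associated functions H_{I,t₀} and H_{J,t₁} in κ^κ are E^κ_{ω-club} equivalent. -/
open Set Cardinal

/-- A node of the tree `κ^{≤ω}`: a sequence of ordinals whose domain is a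
downward closed subset of `ℕ` (so a function from some `s ≤ ω` to the ordinals). -/
def Node : Type 1 :=
  { f : ℕ → Option Ordinal.{0} // ∀ m n : ℕ, m ≤ n → f n ≠ none → f m ≠ none }

namespace Node

/-- The tree (end-extension) order on nodes. -/
def le (x y : Node) : Prop := ∀ n a, x.1 n = some a → y.1 n = some a

/-- The restriction `x↾k` of a node to its first `k` values. -/
def restrict (x : Node) (k : ℕ) : Node :=
  ⟨fun m => if m < k then x.1 m else none, by
    intro m n hmn h
    simp only [ne_eq] at h ⊢
    by_cases hn : n < k
    · have hm : m < k := lt_of_le_of_lt hmn hn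
      rw [if_pos hm]
      exact x.2 m n hmn (by rwa [if_pos hn] at h)
    · rw [if_neg hn] at h
      exact absurd rfl h⟩

/-- A node has height `ω` iff it is defined at every `n < ω`. -/
def full (x : Node) : Prop := ∀ n, x.1 n ≠ none

/-- All entries of the node are `< δ` (the node lies in `δ^{≤ω}`). -/
def entriesLt (x : Node) (δ : Ordinal) : Prop := ∀ n a, x.1 n = some a → a < δ

end Node

/-- A set of nodes is a chain w.r.t. the tree order. -/
def IsChainLe (b : Set Node) : Prop := ∀ x ∈ b, ∀ y ∈ b, Node.le x y ∨ Node.le y x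

/-- A (maximal) branch of the tree `t`. -/
def IsMaxBranch (t b : Set Node) : Prop :=
  b ⊆ t ∧ IsChainLe b ∧ ∀ c : Set Node, b ⊆ c → c ⊆ t → IsChainLe c → c = b

/-- A filtration of a tree `t ⊆ κ^{≤ω}`. -/
def IsTreeFiltration (κ : Cardinal.{0}) (t : Set Node) (I : Ordinal → Set Node) : Prop :=
  (∀ α < κ.ord, I α ⊆ t) ∧
  (∀ α < κ.ord, ∀ x ∈ I α, ∀ k, x.restrict k ∈ I α) ∧
  (∀ α < κ.ord, #(I α) < Cardinal.lift.{1} κ) ∧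
  (∀ α β : Ordinal, α < β → β < κ.ord → I α ⊆ I β) ∧
  (∀ γ < κ.ord, Order.IsSuccLimit γ → I γ = ⋃ (α : Ordinal) (_ : α < γ), I α) ∧
  (⋃ (α : Ordinal) (_ : α < κ.ord), I α) = t

/-- `B_α`: the nodes of height `ω` of `t` that are not in `I α` although all
their finite restrictions are. -/
def Bset (t : Set Node) (I : Ordinal → Set Node) (α : Ordinal) : Set Node :=
  {x | x ∈ t ∧ x.full ∧ x ∉ I α ∧ ∀ n : ℕ, x.restrict n ∈ I α}

/-- A filtration is good if the colouring is constant on each nonempty `B_α`. -/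
def IsGoodFiltration (κ : Cardinal.{0}) (t : Set Node) (c : Node → Ordinal)
    (I : Ordinal → Set Node) : Prop :=
  IsTreeFiltration κ t I ∧ ∀ α < κ.ord, ∀ x ∈ Bset t I α, ∀ y ∈ Bset t I α, c x = c y

open scoped Classical in
/-- The function `H_{I,t} ∈ κ^κ` attached to a filtration of a coloured tree. -/
noncomputable def Hfun (t : Set Node) (c : Node → Ordinal) (I : Ordinal → Set Node) :
    Ordinal → Ordinal := fun α =>
  if h : (Bset t I α).Nonempty ∧ ∀ x ∈ Bset t I α, ∀ y ∈ Bset t I α, c x = c y then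
    c h.1.choose
  else 0

/-- `E^κ_{ω-club}` on `κ^κ`. -/
def EOmegaClub (κ : Cardinal.{0}) (f g : Ordinal → Ordinal) : Prop :=
  ∃ A : Set Ordinal, IsMuClub κ ℵ₀ A ∧ ∀ α ∈ A, f α = g α


namespace Node

lemma ext' {x y : Node} (h : ∀ n, x.1 n = y.1 n) : x = y := Subtype.ext (funext h)

lemma restrict_apply (x : Node) (k m : ℕ) :
    (x.restrict k).1 m = if m < k then x.1 m else none := rfl

lemma le_restrict (x : Node) (k : ℕ) : le (x.restrict k) x := by
  intro n a h
  rw [restrict_apply] at h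
  split at h
  · exact h
  · exact absurd h (by simp)

lemma restrict_eq_restrict {x : Node} {k m : ℕ} (hk : x.1 k = none) (hkm : k ≤ m) :
    x.restrict m = x.restrict k := by
  apply ext'; intro n
  rw [restrict_apply, restrict_apply]
  by_cases h1 : n < k
  · rw [if_pos h1, if_pos (lt_of_lt_of_le h1 hkm)]
  · rw [if_neg h1]
    have hn : x.1 n = none := by
      by_contra hne
      exact x.2 k n (not_lt.mp h1) hne hk
    split <;> simp [hn]

lemma le_cases {y x : Node} (h : le y x) : y = x ∨ ∃ k, y = x.restrict k := by
  by_cases hf : ∀ n, y.1 n ≠ none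
  · left
    apply ext'; intro n
    cases hyn : y.1 n with
    | none => exact absurd hyn (hf n)
    | some a => exact (h n a hyn).symm
  · right
    push_neg at hf
    have hkmem : y.1 (sInf {n | y.1 n = none}) = none := Nat.sInf_mem hf
    refine ⟨sInf {n | y.1 n = none}, ext' fun n => ?_⟩
    rw [restrict_apply]
    by_cases hn : n < sInf {n | y.1 n = none}
    · rw [if_pos hn]
      cases hyn : y.1 n with
      | none => exact absurd (Nat.sInf_le hyn) (not_le.mpr hn)
      | some a => rw [h n a hyn]
    · rw [if_neg hn]
      by_contra hne
      exact y.2 _ n (not_lt.mp hn) hne hkmem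

lemma restrict_ne_self {x : Node} (hx : full x) (k : ℕ) : x.restrict k ≠ x := by
  intro h
  have h2 := congrArg (fun z : Node => z.1 k) h
  simp only [restrict_apply] at h2
  rw [if_neg (lt_irrefl k)] at h2
  exact hx k h2.symm

lemma full_iff_infinite {t : Set Node} (hdc : ∀ x ∈ t, ∀ k, x.restrict k ∈ t) {x : Node}
    (hx : x ∈ t) : x.full ↔ {y | y ∈ t ∧ le y x}.Infinite := by
  constructor
  · intro hf
    apply Set.infinite_of_injective_forall_mem (f := fun k : ℕ => x.restrict k)
    · intro m n h
      by_contra hmn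
      rcases Nat.lt_or_ge m n with h' | h'
      · have h2 := congrArg (fun z : Node => z.1 m) h
        simp only [restrict_apply] at h2
        rw [if_neg (lt_irrefl m), if_pos h'] at h2
        exact hf m h2.symm
      · have h'' : n < m := lt_of_le_of_ne h' (Ne.symm hmn)
        have h2 := congrArg (fun z : Node => z.1 n) h
        simp only [restrict_apply] at h2
        rw [if_pos h'', if_neg (lt_irrefl n)] at h2
        exact hf n h2
    · intro k; exact ⟨hdc x hx k, le_restrict x k⟩
  · intro hinf
    by_contra hnf
    apply hinf
    simp only [full, not_forall, not_not] at hnf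
    obtain ⟨k, hk⟩ := hnf
    apply Set.Finite.subset (Set.Finite.insert x ((Set.finite_Iic k).image fun m => x.restrict m))
    rintro y ⟨hyt, hyx⟩
    rcases le_cases hyx with rfl | ⟨m, rfl⟩
    · exact Set.mem_insert _ _
    · rcases le_or_gt m k with hm | hm
      · exact Set.mem_insert_of_mem _ ⟨m, hm, rfl⟩
      · exact Set.mem_insert_of_mem _ ⟨k, le_refl k, (restrict_eq_restrict hk (le_of_lt hm)).symm⟩

end Node

lemma Hfun_eq_of_mem {t : Set Node} {c : Node → Ordinal} {I : Ordinal → Set Node} {α : Ordinal}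
    (hgood : ∀ x ∈ Bset t I α, ∀ y ∈ Bset t I α, c x = c y) {x : Node} (hx : x ∈ Bset t I α) :
    Hfun t c I α = c x := by
  have h : (Bset t I α).Nonempty ∧ ∀ x ∈ Bset t I α, ∀ y ∈ Bset t I α, c x = c y :=
    ⟨⟨x, hx⟩, hgood⟩
  simp only [Hfun]
  rw [dif_pos h]
  exact hgood _ h.1.choose_spec _ hx

lemma Hfun_eq_zero {t : Set Node} {c : Node → Ordinal} {I : Ordinal → Set Node} {α : Ordinal}
    (h : ¬ (Bset t I α).Nonempty) : Hfun t c I α = 0 := by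
  simp only [Hfun]
  rw [dif_neg (fun hh => h hh.1)]

lemma exists_filtration_bound (κ : Cardinal.{0}) (hκ : κ.IsRegular)
    (t : Set Node) (K : Ordinal → Set Node) (hK : IsTreeFiltration κ t K)
    (S : Set Node) (hSt : S ⊆ t) (hS : #S < Cardinal.lift.{1} κ) :
    ∃ β < κ.ord, S ⊆ K β := by
  have hord : Order.IsSuccLimit κ.ord := Cardinal.isSuccLimit_ord hκ.aleph0_le
  have hchoice : ∀ x : S, ∃ β, β < κ.ord ∧ (x : Node) ∈ K β := by
    intro x
    have hx : (x : Node) ∈ ⋃ (α : Ordinal), ⋃ (_ : α < κ.ord), K α := by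
      rw [hK.2.2.2.2.2]; exact hSt x.2
    simpa using hx
  choose g hg1 hg2 using hchoice
  obtain ⟨μ, hμκ, hμS⟩ := Cardinal.lt_lift_iff.mp hS
  have hequiv : Nonempty (μ.out ≃ S) := by
    rw [← Cardinal.lift_mk_eq']
    rw [Cardinal.mk_out, Cardinal.lift_id']
    exact hμS
  obtain ⟨e⟩ := hequiv
  have hsup : (⨆ i, g (e i)) < κ.ord :=
    Ordinal.iSup_lt_ord (by rw [Cardinal.mk_out, hκ.cof_eq]; exact hμκ) (fun i => hg1 (e i))
  refine ⟨(⨆ i, g (e i)) + 1, ?_, ?_⟩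
  · rw [Ordinal.add_one_eq_succ]; exact hord.succ_lt hsup
  · intro x hx
    have hle : g ⟨x, hx⟩ ≤ ⨆ i, g (e i) := by
      have h := le_ciSup (Ordinal.bddAbove_range fun i => g (e i)) (e.symm ⟨x, hx⟩)
      simpa using h
    have hlt : g ⟨x, hx⟩ < (⨆ i, g (e i)) + 1 := by
      rw [Ordinal.add_one_eq_succ]
      exact lt_of_le_of_lt hle (Order.lt_succ _)
    have hlt2 : (⨆ i, g (e i)) + 1 < κ.ord := by
      rw [Ordinal.add_one_eq_succ]; exact hord.succ_lt hsup
    exact hK.2.2.2.1 _ _ hlt hlt2 (hg2 ⟨x, hx⟩)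


/-- If `(t₀,c₀)` and `(t₁,c₁)` are isomorphic coloured trees and `I`, `J` are
good filtrations of `t₀`, `t₁` respectively, then `H_{I,t₀} E^κ_{ω-club} H_{J,t₁}`. -/
theorem good_filtrations_EOmegaClub (κ : Cardinal.{0}) (hκ : κ.IsRegular) (hκω : ℵ₀ < κ)
    (t0 t1 : Set Node)
    (hdc0 : ∀ x ∈ t0, ∀ k, x.restrict k ∈ t0) (hdc1 : ∀ x ∈ t1, ∀ k, x.restrict k ∈ t1)
    (c0 c1 : Node → Ordinal)
    (hc0 : ∀ x ∈ t0, x.full → c0 x ≠ 0 ∧ c0 x < κ.ord)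
    (hc1 : ∀ x ∈ t1, x.full → c1 x ≠ 0 ∧ c1 x < κ.ord)
    (F : Node → Node) (hFbij : Set.BijOn F t0 t1)
    (hFord : ∀ x ∈ t0, ∀ y ∈ t0, (Node.le x y ↔ Node.le (F x) (F y)))
    (hFcol : ∀ x ∈ t0, x.full → c1 (F x) = c0 x)
    (I J : Ordinal → Set Node)
    (hI : IsGoodFiltration κ t0 c0 I) (hJ : IsGoodFiltration κ t1 c1 J) :
    EOmegaClub κ (Hfun t0 c0 I) (Hfun t1 c1 J) := by
  classical
  have hIfilt := hI.1
  have hJfilt := hJ.1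
  have hIg := hI.2
  have hJg := hJ.2
  obtain ⟨hI1, hI2, hI3, hI4, hI5, hI6⟩ := hIfilt
  obtain ⟨hJ1, hJ2, hJ3, hJ4, hJ5, hJ6⟩ := hJfilt
  have hκ0 : ℵ₀ ≤ κ := hκ.aleph0_le
  have hord : Order.IsSuccLimit κ.ord := Cardinal.isSuccLimit_ord hκ0
  have hNcof : #ℕ < κ.ord.cof := by rw [hκ.cof_eq, Cardinal.mk_nat]; exact hκω
  -- image of the set of predecessors
  have hpred : ∀ x ∈ t0, F '' {y | y ∈ t0 ∧ Node.le y x} = {z | z ∈ t1 ∧ Node.le z (F x)} := by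
    intro x hx
    ext z
    constructor
    · rintro ⟨y, ⟨hy, hyx⟩, rfl⟩
      exact ⟨hFbij.1 hy, (hFord y hy x hx).1 hyx⟩
    · rintro ⟨hz, hzx⟩
      obtain ⟨y, hy, rfl⟩ := hFbij.2.2 hz
      exact ⟨y, ⟨hy, (hFord y hy x hx).2 hzx⟩, rfl⟩
  -- F preserves fullness
  have hfull : ∀ x ∈ t0, (x.full ↔ (F x).full) := by
    intro x hx
    rw [Node.full_iff_infinite hdc0 hx, Node.full_iff_infinite hdc1 (hFbij.1 hx), ← hpred x hx,
      Set.infinite_image_iff (hFbij.2.1.mono fun y hy => hy.1)]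
  -- Bset transfer, forward
  have hBf : ∀ α, α < κ.ord → F '' I α = J α → ∀ x ∈ Bset t0 I α, F x ∈ Bset t1 J α := by
    intro α hα hFIα x hx
    obtain ⟨hxt, hxf, hxI, hxr⟩ := hx
    have hFxt : F x ∈ t1 := hFbij.1 hxt
    have hFxf : (F x).full := (hfull x hxt).mp hxf
    refine ⟨hFxt, hFxf, ?_, ?_⟩
    · intro hmem
      rw [← hFIα] at hmem
      obtain ⟨y, hyI, hyx⟩ := hmem
      have hyx' : y = x := hFbij.2.1 (hI1 α hα hyI) hxt hyx
      exact hxI (hyx' ▸ hyI)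
    · intro n
      have hrt : (F x).restrict n ∈ t1 := hdc1 _ hFxt n
      obtain ⟨y, hyt, hyF⟩ := hFbij.2.2 hrt
      have hyx : Node.le y x := (hFord y hyt x hxt).mpr (by rw [hyF]; exact Node.le_restrict (F x) n)
      rcases Node.le_cases hyx with rfl | ⟨m, rfl⟩
      · exact absurd hyF.symm (Node.restrict_ne_self hFxf n)
      · rw [← hyF, ← hFIα]
        exact ⟨x.restrict m, hxr m, rfl⟩
  -- Bset transfer, backward
  have hBb : ∀ α, α < κ.ord → F '' I α = J α → ∀ z ∈ Bset t1 J α, ∃ x ∈ Bset t0 I α, F x = z := by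
    intro α hα hFIα z hz
    obtain ⟨hzt, hzf, hzJ, hzr⟩ := hz
    obtain ⟨x, hxt, rfl⟩ := hFbij.2.2 hzt
    have hxf : x.full := (hfull x hxt).mpr hzf
    refine ⟨x, ⟨hxt, hxf, ?_, ?_⟩, rfl⟩
    · intro hxI; exact hzJ (hFIα ▸ ⟨x, hxI, rfl⟩)
    · intro n
      have hle : Node.le (F (x.restrict n)) (F x) :=
        (hFord _ (hdc0 x hxt n) x hxt).mp (Node.le_restrict x n)
      rcases Node.le_cases hle with heq | ⟨m, heq⟩
      · have hxx := hFbij.2.1 (hdc0 x hxt n) hxt heq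
        exact absurd hxx (Node.restrict_ne_self hxf n)
      · have hmem : F (x.restrict n) ∈ J α := by rw [heq]; exact hzr m
        rw [← hFIα] at hmem
        obtain ⟨w, hwI, hwF⟩ := hmem
        have hwx : w = x.restrict n := hFbij.2.1 (hI1 α hα hwI) (hdc0 x hxt n) hwF
        exact hwx ▸ hwI
  -- limit stage lemma
  have key : ∀ u : ℕ → Ordinal, (∀ n, u n < u (n + 1)) → (∀ n, u n < κ.ord) →
      (∀ n, F '' I (u n) ⊆ J (u (n + 1))) →
      (∀ n, ∀ x ∈ t0, F x ∈ J (u n) → x ∈ I (u (n + 1))) →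
      (⨆ n, u n) < κ.ord ∧ F '' I (⨆ n, u n) = J (⨆ n, u n) := by
    intro u hu hult hc hd
    have hmono : ∀ n, u n ≤ ⨆ m, u m := fun n => le_ciSup (Ordinal.bddAbove_range u) n
    have hlt : ∀ n, u n < ⨆ m, u m := fun n => lt_of_lt_of_le (hu n) (hmono (n + 1))
    have hγκ : (⨆ n, u n) < κ.ord := Ordinal.iSup_lt_ord hNcof hult
    have hγlim : Order.IsSuccLimit (⨆ n, u n) := by
      rw [Ordinal.isSuccLimit_iff, Order.isSuccPrelimit_iff_succ_lt]
      constructor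
      · intro h0
        exact absurd (h0 ▸ hlt 0) (not_lt_zero' (a := u 0))
      · intro a ha
        obtain ⟨n, hn⟩ := (lt_ciSup_iff (Ordinal.bddAbove_range u)).mp ha
        exact lt_of_le_of_lt (Order.succ_le_of_lt hn) (hlt n)
    refine ⟨hγκ, ?_⟩
    rw [hI5 _ hγκ hγlim, hJ5 _ hγκ hγlim]
    ext z
    simp only [Set.mem_image, Set.mem_iUnion]
    constructor
    · rintro ⟨x, ⟨α, hα, hxα⟩, rfl⟩
      obtain ⟨n, hn⟩ := (lt_ciSup_iff (Ordinal.bddAbove_range u)).mp hα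
      have hxn : x ∈ I (u n) := hI4 α (u n) hn (hult n) hxα
      exact ⟨u (n + 1), hlt (n + 1), hc n ⟨x, hxn, rfl⟩⟩
    · rintro ⟨α, hα, hz⟩
      obtain ⟨n, hn⟩ := (lt_ciSup_iff (Ordinal.bddAbove_range u)).mp hα
      have hzn : z ∈ J (u n) := hJ4 α (u n) hn (hult n) hz
      have hzt1 : z ∈ t1 := hJ1 (u n) (hult n) hzn
      obtain ⟨x, hx, rfl⟩ := hFbij.2.2 hzt1
      exact ⟨x, ⟨u (n + 1), hlt (n + 1), hd n x hx hzn⟩, rfl⟩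
  -- bounding function
  have hbnd0 : ∀ α : Ordinal, ∃ β, β < κ.ord ∧ (α < κ.ord →
      (F '' I α ⊆ J β ∧ ∀ x ∈ t0, F x ∈ J α → x ∈ I β)) := by
    intro α
    by_cases hα : α < κ.ord
    · obtain ⟨β₁, hβ₁, hβ₁s⟩ := exists_filtration_bound κ hκ t1 J hJ.1 (F '' I α)
        ((Set.image_mono (hI1 α hα)).trans hFbij.1.image_subset)
        (lt_of_le_of_lt Cardinal.mk_image_le (hI3 α hα))
      have hpre : #({x | x ∈ t0 ∧ F x ∈ J α} : Set Node) < Cardinal.lift.{1} κ := by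
        have himg : F '' {x | x ∈ t0 ∧ F x ∈ J α} ⊆ J α := by
          rintro _ ⟨x, hx, rfl⟩; exact hx.2
        calc #({x | x ∈ t0 ∧ F x ∈ J α} : Set Node)
            = #(F '' {x | x ∈ t0 ∧ F x ∈ J α}) :=
              (Cardinal.mk_image_eq_of_injOn F _ (hFbij.2.1.mono fun x hx => hx.1)).symm
          _ ≤ #(J α) := Cardinal.mk_le_mk_of_subset himg
          _ < Cardinal.lift.{1} κ := hJ3 α hα
      obtain ⟨β₂, hβ₂, hβ₂s⟩ := exists_filtration_bound κ hκ t0 I hI.1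
        {x | x ∈ t0 ∧ F x ∈ J α} (fun x hx => hx.1) hpre
      have hmax : max β₁ β₂ + 1 < κ.ord := by
        rw [Ordinal.add_one_eq_succ]; exact hord.succ_lt (max_lt hβ₁ hβ₂)
      have hl1 : β₁ < max β₁ β₂ + 1 := by
        rw [Ordinal.add_one_eq_succ]
        exact lt_of_le_of_lt (le_max_left _ _) (Order.lt_succ _)
      have hl2 : β₂ < max β₁ β₂ + 1 := by
        rw [Ordinal.add_one_eq_succ]
        exact lt_of_le_of_lt (le_max_right _ _) (Order.lt_succ _)
      refine ⟨max β₁ β₂ + 1, hmax, fun _ => ⟨?_, ?_⟩⟩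
      · exact hβ₁s.trans (hJ4 β₁ _ hl1 hmax)
      · intro x hxt hxJ
        exact hI4 β₂ _ hl2 hmax (hβ₂s ⟨hxt, hxJ⟩)
    · exact ⟨0, hord.pos, fun h => absurd h hα⟩
  choose bnd hbnd1 hbnd2 using hbnd0
  refine ⟨{α | α < κ.ord ∧ F '' I α = J α}, ⟨fun α hα => hα.1, ?_, ?_⟩, ?_⟩
  · -- unbounded
    intro β hβ
    set u : ℕ → Ordinal := fun n => Nat.rec (β + 1) (fun _ a => max a (bnd a) + 1) n with hu
    have hus : ∀ n, u (n + 1) = max (u n) (bnd (u n)) + 1 := fun n => rfl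
    have hult : ∀ n, u n < κ.ord := by
      intro n; induction n with
      | zero =>
        show β + 1 < κ.ord
        rw [Ordinal.add_one_eq_succ]; exact hord.succ_lt hβ
      | succ n ih =>
        rw [hus, Ordinal.add_one_eq_succ]
        exact hord.succ_lt (max_lt ih (hbnd1 (u n)))
    have huinc : ∀ n, u n < u (n + 1) := by
      intro n
      rw [hus, Ordinal.add_one_eq_succ]
      exact lt_of_le_of_lt (le_max_left _ _) (Order.lt_succ _)
    have hbinc : ∀ n, bnd (u n) < u (n + 1) := by
      intro n
      rw [hus, Ordinal.add_one_eq_succ]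
      exact lt_of_le_of_lt (le_max_right _ _) (Order.lt_succ _)
    have hc : ∀ n, F '' I (u n) ⊆ J (u (n + 1)) := by
      intro n
      exact ((hbnd2 (u n) (hult n)).1).trans (hJ4 _ _ (hbinc n) (hult (n + 1)))
    have hd : ∀ n, ∀ x ∈ t0, F x ∈ J (u n) → x ∈ I (u (n + 1)) := by
      intro n x hxt hxJ
      exact hI4 _ _ (hbinc n) (hult (n + 1)) ((hbnd2 (u n) (hult n)).2 x hxt hxJ)
    obtain ⟨hγκ, hγeq⟩ := key u huinc hult hc hd
    refine ⟨⨆ n, u n, ⟨hγκ, hγeq⟩, ?_⟩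
    have hβ0 : β < u 0 := by
      show β < β + 1
      rw [Ordinal.add_one_eq_succ]; exact Order.lt_succ β
    exact lt_of_lt_of_le hβ0 (le_ciSup (Ordinal.bddAbove_range u) 0)
  · -- closed under ω-suprema
    intro s hs hsA
    have homega : (ℵ₀ : Cardinal).ord = Ordinal.omega0 := Cardinal.ord_aleph0
    set u : ℕ → Ordinal := fun n => s n with hu
    have hmem : ∀ n : ℕ, (n : Ordinal) ∈ Set.Iio (ℵ₀ : Cardinal).ord := by
      intro n
      rw [Set.mem_Iio, homega]
      exact Ordinal.nat_lt_omega0 n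
    have hsAn : ∀ n : ℕ, s n < κ.ord ∧ F '' I (s n) = J (s n) := fun n => hsA _ (hmem n)
    have huinc : ∀ n, u n < u (n + 1) := by
      intro n
      exact hs (hmem n) (hmem (n + 1)) (by exact_mod_cast Nat.lt_succ_self n)
    have hult : ∀ n, u n < κ.ord := fun n => (hsAn n).1
    have huA : ∀ n, F '' I (u n) = J (u n) := fun n => (hsAn n).2
    have hc : ∀ n, F '' I (u n) ⊆ J (u (n + 1)) := by
      intro n
      rw [huA n]
      exact hJ4 _ _ (huinc n) (hult (n + 1))
    have hd : ∀ n, ∀ x ∈ t0, F x ∈ J (u n) → x ∈ I (u (n + 1)) := by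
      intro n x hxt hxJ
      rw [← huA n] at hxJ
      obtain ⟨y, hyI, hyF⟩ := hxJ
      have hyx : y = x := hFbij.2.1 (hI1 _ (hult n) hyI) hxt hyF
      exact hI4 _ _ (huinc n) (hult (n + 1)) (hyx ▸ hyI)
    obtain ⟨hγκ, hγeq⟩ := key u huinc hult hc hd
    have himg : s '' Set.Iio (ℵ₀ : Cardinal).ord = Set.range u := by
      ext o
      constructor
      · rintro ⟨a, ha, rfl⟩
        rw [Set.mem_Iio, homega] at ha
        obtain ⟨n, rfl⟩ := Ordinal.lt_omega0.mp ha
        exact ⟨n, rfl⟩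
      · rintro ⟨n, rfl⟩
        exact ⟨n, hmem n, rfl⟩
    rw [himg]
    have hss : sSup (Set.range u) = ⨆ n, u n := rfl
    rw [hss]
    exact ⟨hγκ, hγeq⟩
  · -- Hfun agree on the club
    intro α hα
    obtain ⟨hακ, hFIα⟩ := hα
    by_cases hne : (Bset t0 I α).Nonempty
    · obtain ⟨x, hx⟩ := hne
      rw [Hfun_eq_of_mem (hIg α hακ) hx, Hfun_eq_of_mem (hJg α hακ) (hBf α hακ hFIα x hx)]
      exact (hFcol x hx.1 hx.2.1).symm
    · have hne' : ¬ (Bset t1 J α).Nonempty := by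
        rintro ⟨z, hz⟩
        obtain ⟨x, hx, _⟩ := hBb α hακ hFIα z hz
        exact hne ⟨x, hx⟩
      rw [Hfun_eq_zero hne, Hfun_eq_zero hne']
end

section
/- Let T be a complete first-order theory in a countable vocabulary, κ regular uncountable with κ^{<κ} = κ, and let A, B be structures with domain κ. Then player II has a winning strategy in the Ehrenfeucht–Fraïssé game EF^κ_ω(A,B) if and only if player II has a winning strategy in the restricted game EF^κ_ω(A↾α, B↾α) for club-many α < κ. -/
open Set Cardinal FirstOrder FirstOrder.Language

variable {L : Language}

/-- A set of pairs `g` is (the graph of) a partial isomorphism between the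
structures `A` and `B`: it is functional, injective, and preserves all
relations in both directions. -/
def IsPartialIso (A B : L.Structure Ordinal.{0}) (g : Set (Ordinal × Ordinal)) : Prop :=
  (∀ p ∈ g, ∀ q ∈ g, p.1 = q.1 → p.2 = q.2) ∧
  (∀ p ∈ g, ∀ q ∈ g, p.2 = q.2 → p.1 = q.1) ∧
  ∀ (n : ℕ) (R : L.Relations n) (v : Fin n → Ordinal × Ordinal), (∀ i, v i ∈ g) →
    (A.RelMap R (fun i => (v i).1) ↔ B.RelMap R (fun i => (v i).2))

/-- The moves of player I up to round `n` (as a list). -/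
def histMoves (β : ℕ → Ordinal) (n : ℕ) : List Ordinal := (List.range (n + 1)).map β

/-- Legality of I's move at round `n` in the (unrestricted) game `EF^κ_ω`:
moves are ordinals `< κ` and the chosen sets `X_{β_n}` strictly increase. -/
def ILegalAt (κo : Ordinal) (X : Ordinal → Set Ordinal) (β : ℕ → Ordinal) (n : ℕ) : Prop :=
  β n < κo ∧ (n = 0 → (X (β 0)).Nonempty) ∧ ∀ m, n = m + 1 → X (β m) ⊂ X (β n)

/-- Legality of II's move at round `n` in the (unrestricted) game `EF^κ_ω`:
the chosen partial functions `f_{θ_n}` strictly increase and cover `X_{β_n}`. -/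
def IILegalAt (κo : Ordinal) (X : Ordinal → Set Ordinal)
    (Fp : Ordinal → Set (Ordinal × Ordinal)) (β θ : ℕ → Ordinal) (n : ℕ) : Prop :=
  θ n < κo ∧ X (β n) ⊆ Prod.fst '' Fp (θ n) ∧ X (β n) ⊆ Prod.snd '' Fp (θ n) ∧
    ∀ m, n = m + 1 → Fp (θ m) ⊂ Fp (θ n)

/-- `σ` is a winning strategy for player II in `EF^κ_ω(A,B)`. -/
def IsWinFull (A B : L.Structure Ordinal) (κo : Ordinal) (X : Ordinal → Set Ordinal)
    (Fp : Ordinal → Set (Ordinal × Ordinal)) (σ : List Ordinal → Ordinal) : Prop :=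
  ∀ β : ℕ → Ordinal, (∀ n, ILegalAt κo X β n) →
    (∀ n, IILegalAt κo X Fp β (fun k => σ (histMoves β k)) n) ∧
    IsPartialIso A B (⋃ n, Fp (σ (histMoves β n)))

/-- Legality of I's move at round `n` in the restricted game
`EF^κ_ω(A↾α, B↾α)` : everything lives below `α`. -/
def ILegalResAt (α : Ordinal) (X : Ordinal → Set Ordinal) (β : ℕ → Ordinal) (n : ℕ) : Prop :=
  β n < α ∧ X (β n) ⊆ Set.Iio α ∧ ∀ m, n = m + 1 → X (β m) ⊆ X (β n)

/-- Legality of II's move at round `n` in the restricted game. -/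
def IILegalResAt (α : Ordinal) (X : Ordinal → Set Ordinal)
    (Fp : Ordinal → Set (Ordinal × Ordinal)) (β θ : ℕ → Ordinal) (n : ℕ) : Prop :=
  θ n < α ∧ Fp (θ n) ⊆ (Set.Iio α) ×ˢ (Set.Iio α) ∧
    X (β n) ⊆ Prod.fst '' Fp (θ n) ∧ X (β n) ⊆ Prod.snd '' Fp (θ n) ∧
    ∀ m, n = m + 1 → Fp (θ m) ⊆ Fp (θ n)

/-- `σ` is a winning strategy for player II in the restricted game
`EF^κ_ω(A↾α, B↾α)`. -/
def IsWinRes (A B : L.Structure Ordinal) (α : Ordinal) (X : Ordinal → Set Ordinal)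
    (Fp : Ordinal → Set (Ordinal × Ordinal)) (σ : List Ordinal → Ordinal) : Prop :=
  ∀ β : ℕ → Ordinal, (∀ n, ILegalResAt α X β n) →
    (∀ n, IILegalResAt α X Fp β (fun k => σ (histMoves β k)) n) ∧
    IsPartialIso A B (⋃ n, Fp (σ (histMoves β n)))

/-- `C ⊆ κ` is club in `κ`. -/
def IsClubIn (κ : Cardinal.{0}) (C : Set Ordinal.{0}) : Prop :=
  C ⊆ Set.Iio κ.ord ∧
  (∀ β < κ.ord, ∃ α ∈ C, β < α) ∧
  ∀ B ⊆ C, B.Nonempty → sSup B < κ.ord → sSup B ∈ C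

/-- The enumerations `(X_γ)_{γ<κ}` of `P_κ(κ)` and `(f_γ)_{γ<κ}` of all partial
functions with small domain and range are adequate. -/
def GoodEnum (κ : Cardinal.{0}) (X : Ordinal → Set Ordinal)
    (Fp : Ordinal → Set (Ordinal × Ordinal)) : Prop :=
  (∀ γ < κ.ord, X γ ⊆ Set.Iio κ.ord ∧ #(X γ) < Cardinal.lift.{1} κ) ∧
  (∀ s : Set Ordinal, s ⊆ Set.Iio κ.ord → #s < Cardinal.lift.{1} κ →
    ∃ γ < κ.ord, X γ = s) ∧
  (∀ γ < κ.ord, Fp γ ⊆ (Set.Iio κ.ord) ×ˢ (Set.Iio κ.ord) ∧ #(Fp γ) < Cardinal.lift.{1} κ ∧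
    ∀ p ∈ Fp γ, ∀ q ∈ Fp γ, p.1 = q.1 → p.2 = q.2) ∧
  (∀ g : Set (Ordinal × Ordinal), g ⊆ (Set.Iio κ.ord) ×ˢ (Set.Iio κ.ord) →
    #g < Cardinal.lift.{1} κ → (∀ p ∈ g, ∀ q ∈ g, p.1 = q.1 → p.2 = q.2) →
    ∃ γ < κ.ord, Fp γ = g)


-- ==================== auxiliary machinery ====================
namespace EFAux

structure Ctx (L : Language) where
  κ : Cardinal.{0}
  hreg : κ.IsRegular
  hω : ℵ₀ < κ
  A : L.Structure Ordinal.{0}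
  B : L.Structure Ordinal.{0}
  X : Ordinal.{0} → Set Ordinal.{0}
  Fp : Ordinal.{0} → Set (Ordinal.{0} × Ordinal.{0})
  hEnum : GoodEnum κ X Fp

variable {L : Language} (c : Ctx L)

noncomputable def κo : Ordinal.{0} := c.κ.ord

lemma haleph : ℵ₀ ≤ c.κ := c.hω.le

lemma κo_limit : Order.IsSuccLimit (κo c) := Cardinal.isSuccLimit_ord (haleph c)

lemma κo_pos : 0 < κo c := (κo_limit c).pos

lemma succ_lt_κo {x : Ordinal} (h : x < κo c) : x + 1 < κo c := by
  rw [Ordinal.add_one_eq_succ]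
  exact (κo_limit c).succ_lt h

lemma cof_κo : (κo c).cof = c.κ := c.hreg.cof_eq

lemma mk_Iio_κo : #(Set.Iio (κo c)) = Cardinal.lift.{1} c.κ := by
  rw [κo, Ordinal.mk_Iio_ordinal, Cardinal.card_ord]

lemma lift_κ_pos : (0 : Cardinal.{1}) < Cardinal.lift.{1} c.κ := by
  have := c.hreg.pos
  simpa using (Cardinal.lift_lt.{0,1}).2 this

lemma aleph0_lt_lift : (ℵ₀ : Cardinal.{1}) < Cardinal.lift.{1} c.κ := by
  have := c.hω
  have h := (Cardinal.lift_lt.{0,1}).2 this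
  simpa using h

/-- sup of a small set of ordinals below `κo` stays below `κo`. -/
lemma csSup_lt_κo {s : Set Ordinal.{0}} (h1 : ∀ x ∈ s, x < κo c)
    (h2 : #s < Cardinal.lift.{1} c.κ) : sSup s < κo c := by
  rcases s.eq_empty_or_nonempty with rfl | hne
  · simpa [csSup_empty] using κo_pos c
  · have hsub : s ⊆ Set.Iio (κo c) := fun x hx => h1 x hx
    have hsmall : Small.{0} s := small_subset hsub
    set f : Shrink.{0} s → Ordinal.{0} := fun i => ((equivShrink s).symm i : Ordinal) with hf
    have hmk : #(Shrink.{0} s) < c.κ := by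
      have := Cardinal.lift_mk_shrink''.{1,0} (↥s)
      rw [← this] at h2
      exact (Cardinal.lift_lt.{0,1}).1 h2
    have hsup : iSup f < κo c := by
      apply Ordinal.iSup_lt_ord
      · rw [cof_κo]; exact hmk
      · intro i; exact h1 _ (((equivShrink s).symm i)).2
    refine lt_of_le_of_lt (csSup_le hne ?_) hsup
    intro x hx
    have : x = f (equivShrink s ⟨x, hx⟩) := by simp [hf]
    rw [this]
    exact le_ciSup (Ordinal.bddAbove_range f) _

lemma exists_fresh {s : Set Ordinal.{0}} (h2 : #s < Cardinal.lift.{1} c.κ) :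
    ∃ x, x < κo c ∧ x ∉ s := by
  by_contra h
  push_neg at h
  have hsub : Set.Iio (κo c) ⊆ s := fun x hx => h x hx
  have := Cardinal.mk_le_mk_of_subset hsub
  rw [mk_Iio_κo] at this
  exact absurd (this.trans_lt h2) (lt_irrefl _)

-- enum facts
lemma X_sub {γ : Ordinal} (h : γ < κo c) : c.X γ ⊆ Set.Iio (κo c) := (c.hEnum.1 γ h).1
lemma X_small {γ : Ordinal} (h : γ < κo c) : #(c.X γ) < Cardinal.lift.{1} c.κ := (c.hEnum.1 γ h).2
lemma Fp_sub {γ : Ordinal} (h : γ < κo c) :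
    c.Fp γ ⊆ (Set.Iio (κo c)) ×ˢ (Set.Iio (κo c)) := (c.hEnum.2.2.1 γ h).1
lemma Fp_small {γ : Ordinal} (h : γ < κo c) : #(c.Fp γ) < Cardinal.lift.{1} c.κ :=
  (c.hEnum.2.2.1 γ h).2.1

/-- index of a small set in the enumeration `X`. -/
noncomputable def enumX (s : Set Ordinal.{0}) : Ordinal :=
  sInf {γ | γ < κo c ∧ c.X γ = s}

lemma enumX_spec {s : Set Ordinal.{0}} (h1 : s ⊆ Set.Iio (κo c))
    (h2 : #s < Cardinal.lift.{1} c.κ) : enumX c s < κo c ∧ c.X (enumX c s) = s := by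
  have hne : {γ | γ < κo c ∧ c.X γ = s}.Nonempty := by
    obtain ⟨γ, hγ, he⟩ := c.hEnum.2.1 s h1 h2
    exact ⟨γ, hγ, he⟩
  exact csInf_mem hne

/-- index of the empty partial function. -/
noncomputable def γe : Ordinal := sInf {γ | γ < κo c ∧ c.Fp γ = ∅}

lemma γe_spec : γe c < κo c ∧ c.Fp (γe c) = ∅ := by
  have hne : {γ | γ < κo c ∧ c.Fp γ = ∅}.Nonempty := by
    obtain ⟨γ, hγ, he⟩ := c.hEnum.2.2.2 ∅ (by simp) (by simpa using lift_κ_pos c)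
      (by simp)
    exact ⟨γ, hγ, he⟩
  exact csInf_mem hne

-- partial iso lemmas
lemma iso_mono {g g' : Set (Ordinal × Ordinal)} (h : g' ⊆ g)
    (hg : IsPartialIso c.A c.B g) : IsPartialIso c.A c.B g' := by
  obtain ⟨h1, h2, h3⟩ := hg
  exact ⟨fun p hp q hq => h1 p (h hp) q (h hq), fun p hp q hq => h2 p (h hp) q (h hq),
    fun n R v hv => h3 n R v (fun i => h (hv i))⟩

lemma iso_empty {g : Set (Ordinal × Ordinal)} (hg : IsPartialIso c.A c.B g) :
    IsPartialIso c.A c.B (∅ : Set (Ordinal × Ordinal)) :=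
  iso_mono c (empty_subset g) hg

lemma iso_iUnion {g : ℕ → Set (Ordinal × Ordinal)} (hmono : ∀ m n, m ≤ n → g m ⊆ g n)
    (hiso : ∀ n, IsPartialIso c.A c.B (g n)) : IsPartialIso c.A c.B (⋃ n, g n) := by
  refine ⟨?_, ?_, ?_⟩
  · intro p hp q hq he
    obtain ⟨i, hi⟩ := mem_iUnion.1 hp
    obtain ⟨j, hj⟩ := mem_iUnion.1 hq
    exact (hiso (max i j)).1 p (hmono i _ (le_max_left i j) hi) q
      (hmono j _ (le_max_right i j) hj) he
  · intro p hp q hq he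
    obtain ⟨i, hi⟩ := mem_iUnion.1 hp
    obtain ⟨j, hj⟩ := mem_iUnion.1 hq
    exact (hiso (max i j)).2.1 p (hmono i _ (le_max_left i j) hi) q
      (hmono j _ (le_max_right i j) hj) he
  · intro n R v hv
    have hch : ∀ i, ∃ k, v i ∈ g k := fun i => mem_iUnion.1 (hv i)
    classical
    set N : ℕ := Finset.univ.sup (fun i : Fin n => (hch i).choose) with hN
    refine (hiso N).2.2 n R v (fun i => ?_)
    exact hmono _ N (Finset.le_sup (f := fun i : Fin n => (hch i).choose)
      (Finset.mem_univ i)) (hch i).choose_spec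

end EFAux

-- PART2 (appended to part1 for testing)
namespace EFAux

variable {L : Language} (c : Ctx L)

-- ---------- list utilities ----------
def lastD (l : List Ordinal) : Ordinal := l.getD (l.length - 1) 0

lemma lastD_append (l : List Ordinal) (b : Ordinal) : lastD (l ++ [b]) = b := by
  unfold lastD
  rw [List.length_append]
  simp only [List.length_singleton]
  rw [List.getD_append_right _ _ _ _ (by omega)]
  simp

lemma lastD_single (b : Ordinal) : lastD [b] = b := by
  simpa using lastD_append [] b

lemma histMoves_succ (β : ℕ → Ordinal) (n : ℕ) :
    histMoves β (n + 1) = histMoves β n ++ [β (n + 1)] := by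
  unfold histMoves
  rw [List.range_succ, List.map_append]
  rfl

lemma histMoves_zero (β : ℕ → Ordinal) : histMoves β 0 = [β 0] := rfl

lemma histMoves_length (β : ℕ → Ordinal) (n : ℕ) : (histMoves β n).length = n + 1 := by
  simp [histMoves]

lemma histMoves_getElem (β : ℕ → Ordinal) (n i : ℕ) (h : i < (histMoves β n).length) :
    (histMoves β n)[i] = β i := by
  simp [histMoves]

lemma histMoves_eq_take {β : ℕ → Ordinal} {l : List Ordinal} {k : ℕ} (hk : k < l.length)
    (hagree : ∀ i ≤ k, β i = l.getD i 0) : histMoves β k = l.take (k + 1) := by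
  apply List.ext_getElem
  · rw [histMoves_length, List.length_take]
    omega
  · intro i h1 h2
    rw [histMoves_getElem]
    rw [List.getElem_take]
    have hi : i ≤ k := by
      have := h1; rw [histMoves_length] at this; omega
    rw [hagree i hi, List.getD_eq_getElem]

lemma lastD_eq_getD (l : List Ordinal) : lastD l = l.getD (l.length - 1) 0 := rfl

-- ---------- local legality of finite histories ----------
def seqOf (l : List Ordinal) : ℕ → Ordinal := fun n => l.getD n 0

def LocLegal (l : List Ordinal) : Prop :=
  l ≠ [] ∧ ∀ m < l.length, ILegalAt (κo c) c.X (seqOf l) m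

lemma ILegalAt_congr {κo' : Ordinal} {X' : Ordinal → Set Ordinal} {β β' : ℕ → Ordinal} {n : ℕ}
    (h : ∀ i ≤ n, β i = β' i) (hβ : ILegalAt κo' X' β n) : ILegalAt κo' X' β' n := by
  obtain ⟨h1, h2, h3⟩ := hβ
  refine ⟨by rw [← h n le_rfl]; exact h1, ?_, ?_⟩
  · intro h0; subst h0; rw [← h 0 le_rfl]; exact h2 rfl
  · intro m hm
    rw [← h m (by omega), ← h n le_rfl]
    exact h3 m hm

lemma locLegal_single {b : Ordinal} (hb : b < κo c) (hne : (c.X b).Nonempty) :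
    LocLegal c [b] := by
  refine ⟨by simp, ?_⟩
  intro m hm
  simp only [List.length_singleton] at hm
  have hm0 : m = 0 := by omega
  subst hm0
  exact ⟨by simpa [seqOf] using hb, fun _ => by simpa [seqOf] using hne, fun m hm => by omega⟩

lemma locLegal_append {l : List Ordinal} {b : Ordinal} (hl : LocLegal c l) (hb : b < κo c)
    (hX : c.X (lastD l) ⊂ c.X b) : LocLegal c (l ++ [b]) := by
  obtain ⟨hne, hleg⟩ := hl
  have hlen : 0 < l.length := List.length_pos_iff.2 hne
  refine ⟨by simp, ?_⟩
  intro m hm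
  rw [List.length_append, List.length_singleton] at hm
  rcases Nat.lt_or_ge m l.length with h | h
  · refine ILegalAt_congr (fun i hi => ?_) (hleg m h)
    simp only [seqOf]
    rw [List.getD_append _ _ _ _ (by omega)]
  · have hm' : m = l.length := by omega
    subst hm'
    have hseq : seqOf (l ++ [b]) l.length = b := by
      simp only [seqOf]
      rw [List.getD_append_right _ _ _ _ le_rfl]
      simp
    refine ⟨by rw [hseq]; exact hb, ?_, ?_⟩
    · intro h0
      exfalso; omega
    · intro k hk
      have hk' : k = l.length - 1 := by omega
      subst hk'
      have : seqOf (l ++ [b]) (l.length - 1) = lastD l := by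
        simp only [seqOf, lastD]
        rw [List.getD_append _ _ _ _ (by omega)]
      rw [this, hseq]
      exact hX

-- ---------- extension of a locally legal history to an infinite legal play ----------
noncomputable def freshX (b : Ordinal) : Ordinal := sInf {x | x < κo c ∧ x ∉ c.X b}

lemma freshX_spec {b : Ordinal} (hb : b < κo c) :
    freshX c b < κo c ∧ freshX c b ∉ c.X b := by
  have hne : {x | x < κo c ∧ x ∉ c.X b}.Nonempty := by
    obtain ⟨x, h1, h2⟩ := exists_fresh c (X_small c hb)
    exact ⟨x, h1, h2⟩
  exact csInf_mem hne

noncomputable def nxt (b : Ordinal) : Ordinal := enumX c (c.X b ∪ {freshX c b})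

lemma nxt_spec {b : Ordinal} (hb : b < κo c) :
    nxt c b < κo c ∧ c.X (nxt c b) = c.X b ∪ {freshX c b} := by
  obtain ⟨hf1, _⟩ := freshX_spec c hb
  have hsub : c.X b ∪ {freshX c b} ⊆ Set.Iio (κo c) := by
    apply union_subset (X_sub c hb)
    intro x hx
    rw [mem_singleton_iff] at hx
    subst hx; exact hf1
  have hsmall : #(c.X b ∪ {freshX c b} : Set Ordinal) < Cardinal.lift.{1} c.κ := by
    apply lt_of_le_of_lt (mk_union_le _ _)
    apply Cardinal.add_lt_of_lt (aleph0_lt_lift c).le (X_small c hb)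
    rw [mk_singleton]
    exact lt_of_lt_of_le Cardinal.one_lt_aleph0 (aleph0_lt_lift c).le
  exact enumX_spec c hsub hsmall

noncomputable def extSeq (l : List Ordinal) : ℕ → Ordinal
  | 0 => l.getD 0 0
  | n + 1 => if n + 1 < l.length then l.getD (n + 1) 0 else nxt c (extSeq l n)

lemma extSeq_agree (l : List Ordinal) : ∀ i < l.length, extSeq c l i = l.getD i 0 := by
  intro i hi
  cases i with
  | zero => rfl
  | succ n => simp [extSeq, hi]

lemma extSeq_legal {l : List Ordinal} (hl : LocLegal c l) :
    (∀ n, ILegalAt (κo c) c.X (extSeq c l) n) ∧ ∀ n, extSeq c l n < κo c := by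
  obtain ⟨hne, hleg⟩ := hl
  have hlen : 0 < l.length := List.length_pos_iff.2 hne
  suffices key : ∀ n, ILegalAt (κo c) c.X (extSeq c l) n ∧ extSeq c l n < κo c by
    exact ⟨fun n => (key n).1, fun n => (key n).2⟩
  intro n
  induction n with
    | zero =>
      have h0 := hleg 0 hlen
      have h0' : ILegalAt (κo c) c.X (extSeq c l) 0 := by
        refine ILegalAt_congr (fun i hi => ?_) h0
        have : i = 0 := by omega
        subst this
        rw [extSeq_agree c l 0 hlen]; rfl
      exact ⟨h0', h0'.1⟩
    | succ n ih =>
      rcases Nat.lt_or_ge (n + 1) l.length with h | h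
      · have hs := hleg (n + 1) h
        have hs' : ILegalAt (κo c) c.X (extSeq c l) (n + 1) := by
          refine ILegalAt_congr (fun i hi => ?_) hs
          rw [extSeq_agree c l i (by omega)]; rfl
        exact ⟨hs', hs'.1⟩
      · have hdef : extSeq c l (n + 1) = nxt c (extSeq c l n) := by
          simp [extSeq, Nat.not_lt.2 h]
        obtain ⟨hlt, hXeq⟩ := nxt_spec c ih.2
        obtain ⟨hf1, hf2⟩ := freshX_spec c ih.2
        refine ⟨⟨by rw [hdef]; exact hlt, fun h0 => by omega, ?_⟩, by rw [hdef]; exact hlt⟩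
        intro m hm
        have : m = n := by omega
        subst this
        rw [hdef, hXeq]
        constructor
        · exact subset_union_left
        · intro hsub
          exact hf2 (hsub (mem_union_right _ (mem_singleton _)))

lemma extSeq_hist {l : List Ordinal} (hne : l ≠ []) :
    histMoves (extSeq c l) (l.length - 1) = l := by
  have hlen : 0 < l.length := List.length_pos_iff.2 hne
  have := histMoves_eq_take (β := extSeq c l) (l := l) (k := l.length - 1) (by omega)
    (fun i hi => extSeq_agree c l i (by omega))
  rw [this, Nat.sub_add_cancel (by omega), List.take_length]

lemma extSeq_hist_take {l : List Ordinal} {k : ℕ} (hk : k < l.length) :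
    histMoves (extSeq c l) k = l.take (k + 1) :=
  histMoves_eq_take hk (fun i hi => extSeq_agree c l i (by omega))

-- ---------- the auxiliary game `G*` and its prefix facts ----------
def GoodAt (β θ : ℕ → Ordinal) (n : ℕ) : Prop :=
  θ n < κo c ∧ c.X (β n) ⊆ Prod.fst '' c.Fp (θ n) ∧ c.X (β n) ⊆ Prod.snd '' c.Fp (θ n) ∧
    IsPartialIso c.A c.B (c.Fp (θ n)) ∧ ∀ m, n = m + 1 → c.Fp (θ m) ⊆ c.Fp (θ n)

def WinStar (σ : List Ordinal → Ordinal) : Prop :=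
  ∀ β : ℕ → Ordinal, (∀ n, ILegalAt (κo c) c.X β n) →
    ∀ n, GoodAt c β (fun k => σ (histMoves β k)) n

lemma isWinFull_winStar {σ : List Ordinal → Ordinal}
    (hσ : IsWinFull c.A c.B (κo c) c.X c.Fp σ) : WinStar c σ := by
  intro β hβ n
  obtain ⟨hleg, hiso⟩ := hσ β hβ
  obtain ⟨h1, h2, h3, h4⟩ := hleg n
  exact ⟨h1, h2, h3,
    iso_mono c (subset_iUnion (fun k => c.Fp (σ (histMoves β k))) n) hiso,
    fun m hm => (h4 m hm).subset⟩

lemma star_facts {σ : List Ordinal → Ordinal} (hσ : WinStar c σ) {l : List Ordinal}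
    (hl : LocLegal c l) :
    σ l < κo c ∧ c.X (lastD l) ⊆ Prod.fst '' c.Fp (σ l) ∧
      c.X (lastD l) ⊆ Prod.snd '' c.Fp (σ l) ∧ IsPartialIso c.A c.B (c.Fp (σ l)) := by
  have hlen : 0 < l.length := List.length_pos_iff.2 hl.1
  obtain ⟨hlegal, _⟩ := extSeq_legal c hl
  have hg := hσ (extSeq c l) hlegal (l.length - 1)
  simp only [GoodAt] at hg
  have hb : extSeq c l (l.length - 1) = lastD l := extSeq_agree c l _ (by omega)
  rw [extSeq_hist c hl.1, hb] at hg
  exact ⟨hg.1, hg.2.1, hg.2.2.1, hg.2.2.2.1⟩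

lemma star_chain {σ : List Ordinal → Ordinal} (hσ : WinStar c σ) {l : List Ordinal}
    {b : Ordinal} (hl : LocLegal c (l ++ [b])) (hne : l ≠ []) :
    c.Fp (σ l) ⊆ c.Fp (σ (l ++ [b])) := by
  have hlen : 0 < l.length := List.length_pos_iff.2 hne
  have hlen2 : (l ++ [b]).length = l.length + 1 := by simp
  obtain ⟨hlegal, _⟩ := extSeq_legal c hl
  have hg := hσ (extSeq c (l ++ [b])) hlegal l.length
  simp only [GoodAt] at hg
  have e1 : histMoves (extSeq c (l ++ [b])) l.length = l ++ [b] := by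
    have := extSeq_hist c hl.1
    rwa [hlen2, Nat.add_sub_cancel] at this
  have e2 : histMoves (extSeq c (l ++ [b])) (l.length - 1) = l := by
    rw [extSeq_hist_take c (by omega), Nat.sub_add_cancel (by omega), List.take_left]
  have := hg.2.2.2.2 (l.length - 1) (by omega)
  rwa [e1, e2] at this

lemma chain_mono {g : ℕ → Set (Ordinal × Ordinal)} (h : ∀ n, g n ⊆ g (n + 1)) :
    ∀ m n, m ≤ n → g m ⊆ g n := by
  intro m n hmn
  induction n with
  | zero => have : m = 0 := by omega
            subst this; exact subset_rfl
  | succ k ih =>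
    rcases Nat.lt_or_ge m (k + 1) with h' | h'
    · exact (ih (by omega)).trans (h k)
    · have : m = k + 1 := by omega
      subst this; exact subset_rfl

end EFAux
-- PART3: bounds, closure clubs, club intersection
namespace EFAux

variable {L : Language} (c : Ctx L)

lemma lt_add_one_ord (x : Ordinal) : x < x + 1 := by
  rw [Ordinal.add_one_eq_succ]; exact Order.lt_succ x

/-- strict bound on a small set of ordinals -/
noncomputable def scX (s : Set Ordinal.{0}) : Ordinal := sSup ((fun x => x + 1) '' s)

lemma scX_spec {s : Set Ordinal.{0}} (h1 : s ⊆ Set.Iio (κo c))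
    (h2 : #s < Cardinal.lift.{1} c.κ) : scX s < κo c ∧ ∀ x ∈ s, x < scX s := by
  have hel : ∀ y ∈ (fun x => x + 1) '' s, y < κo c := by
    rintro y ⟨x, hx, rfl⟩
    exact succ_lt_κo c (h1 hx)
  constructor
  · exact csSup_lt_κo c hel (lt_of_le_of_lt mk_image_le h2)
  · intro x hx
    have : x + 1 ≤ scX s :=
      le_csSup ⟨κo c, fun y hy => (hel y hy).le⟩ (mem_image_of_mem _ hx)
    exact lt_of_lt_of_le (lt_add_one_ord x) this

/-- strict bound on the coordinates of a small set of pairs -/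
noncomputable def scF (g : Set (Ordinal.{0} × Ordinal.{0})) : Ordinal :=
  sSup ((fun p : Ordinal × Ordinal => max p.1 p.2 + 1) '' g)

lemma scF_spec {g : Set (Ordinal.{0} × Ordinal.{0})}
    (h1 : g ⊆ (Set.Iio (κo c)) ×ˢ (Set.Iio (κo c))) (h2 : #g < Cardinal.lift.{1} c.κ) :
    scF g < κo c ∧ ∀ p ∈ g, p.1 < scF g ∧ p.2 < scF g := by
  have hel : ∀ y ∈ (fun p : Ordinal × Ordinal => max p.1 p.2 + 1) '' g, y < κo c := by
    rintro y ⟨p, hp, rfl⟩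
    exact succ_lt_κo c (max_lt (h1 hp).1 (h1 hp).2)
  constructor
  · exact csSup_lt_κo c hel (lt_of_le_of_lt mk_image_le h2)
  · intro p hp
    have : max p.1 p.2 + 1 ≤ scF g :=
      le_csSup ⟨κo c, fun y hy => (hel y hy).le⟩ (mem_image_of_mem _ hp)
    have h1' : max p.1 p.2 < scF g := lt_of_lt_of_le (lt_add_one_ord _) this
    exact ⟨lt_of_le_of_lt (le_max_left _ _) h1', lt_of_le_of_lt (le_max_right _ _) h1'⟩

lemma Fp_in_square {γ δ : Ordinal} (hγ : γ < κo c) (hδ : scF (c.Fp γ) ≤ δ) :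
    c.Fp γ ⊆ (Set.Iio δ) ×ˢ (Set.Iio δ) := by
  intro p hp
  obtain ⟨h1, h2⟩ := (scF_spec c (Fp_sub c hγ) (Fp_small c hγ)).2 p hp
  exact ⟨lt_of_lt_of_le h1 hδ, lt_of_lt_of_le h2 hδ⟩

lemma mk_lists_lt {δ : Ordinal} (hδ : δ < κo c) :
    #{l : List Ordinal.{0} | ∀ x ∈ l, x < δ} < Cardinal.lift.{1} c.κ := by
  have hsurj : ∀ (p : {l : List Ordinal.{0} | ∀ x ∈ l, x < δ}),
      ∃ lst : List ↥(Set.Iio δ), lst.map Subtype.val = (p : List Ordinal) := by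
    rintro ⟨l, hl⟩
    refine ⟨l.attach.map (fun x => (⟨x.1, hl x.1 x.2⟩ : ↥(Set.Iio δ))), ?_⟩
    rw [List.map_map]
    simp [Function.comp]
  have hle : #{l : List Ordinal.{0} | ∀ x ∈ l, x < δ} ≤ #(List ↥(Set.Iio δ)) := by
    let f : List ↥(Set.Iio δ) → List Ordinal := fun lst => lst.map Subtype.val
    have : ∀ p : {l : List Ordinal.{0} | ∀ x ∈ l, x < δ}, ∃ lst, f lst = (p : List Ordinal) :=
      hsurj
    choose g hg using this
    apply Cardinal.mk_le_of_injective (f := g)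
    intro p q hpq
    apply Subtype.ext
    rw [← hg p, ← hg q, hpq]
  refine lt_of_le_of_lt hle ?_
  refine lt_of_le_of_lt (Cardinal.mk_list_le_max _) ?_
  apply max_lt (aleph0_lt_lift c)
  rw [Ordinal.mk_Iio_ordinal]
  exact Cardinal.lift_lt.2 (Cardinal.lt_ord.1 hδ)

/-- closure points of a function on finite sequences -/
def CG (G : List Ordinal.{0} → Ordinal.{0}) : Set Ordinal.{0} :=
  {α | α < κo c ∧ ∀ l : List Ordinal, (∀ x ∈ l, x < α) → G l < α}

noncomputable def nextα (G : List Ordinal.{0} → Ordinal.{0}) (δ : Ordinal) : Ordinal :=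
  max (δ + 1) (sSup ((fun l => G l + 1) '' {l : List Ordinal.{0} | ∀ x ∈ l, x < δ}))

lemma nextα_spec (G : List Ordinal.{0} → Ordinal.{0}) (hG : ∀ l, G l < κo c)
    {δ : Ordinal} (hδ : δ < κo c) :
    nextα G δ < κo c ∧ δ < nextα G δ ∧
      ∀ l : List Ordinal, (∀ x ∈ l, x < δ) → G l < nextα G δ := by
  have hel : ∀ y ∈ (fun l => G l + 1) '' {l : List Ordinal.{0} | ∀ x ∈ l, x < δ}, y < κo c := by
    rintro y ⟨l, _, rfl⟩
    exact succ_lt_κo c (hG l)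
  refine ⟨?_, ?_, ?_⟩
  · exact max_lt (succ_lt_κo c hδ) (csSup_lt_κo c hel (lt_of_le_of_lt mk_image_le
      (mk_lists_lt c hδ)))
  · exact lt_of_lt_of_le (lt_add_one_ord δ) (le_max_left _ _)
  · intro l hl
    have : G l + 1 ≤ nextα G δ := by
      refine le_trans (le_csSup ⟨κo c, fun y hy => (hel y hy).le⟩
        (mem_image_of_mem _ hl)) (le_max_right _ _)
    exact lt_of_lt_of_le (lt_add_one_ord _) this

lemma CG_club (G : List Ordinal.{0} → Ordinal.{0}) (hG : ∀ l, G l < κo c) :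
    IsClubIn c.κ (CG c G) := by
  refine ⟨fun α hα => hα.1, ?_, ?_⟩
  · -- unbounded
    intro b hb
    set u : ℕ → Ordinal := fun n => Nat.rec (b + 1) (fun _ δ => nextα G δ) n with hu
    have hu0 : u 0 = b + 1 := rfl
    have husucc : ∀ n, u (n + 1) = nextα G (u n) := fun n => rfl
    have hult : ∀ n, u n < κo c := by
      intro n
      induction n with
      | zero => exact succ_lt_κo c hb
      | succ n ih => rw [husucc]; exact (nextα_spec c G hG ih).1
    have humono : StrictMono u := by
      apply strictMono_nat_of_lt_succ
      intro n
      rw [husucc]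
      exact (nextα_spec c G hG (hult n)).2.1
    have hbdd : BddAbove (Set.range u) := Ordinal.bddAbove_range u
    set α := ⨆ n, u n with hα
    have hαlt : α < κo c := by
      apply Ordinal.iSup_lt_ord _ hult
      rw [cof_κo]
      simpa using c.hω
    refine ⟨α, ⟨hαlt, ?_⟩, ?_⟩
    · intro l hl
      have hex : ∃ n, ∀ x ∈ l, x < u n := by
        induction l with
        | nil => exact ⟨0, by simp⟩
        | cons a t ih =>
          obtain ⟨n, hn⟩ := ih (fun x hx => hl x (List.mem_cons_of_mem _ hx))
          have ha : a < α := hl a List.mem_cons_self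
          obtain ⟨m, hm⟩ := (lt_ciSup_iff hbdd).1 ha
          refine ⟨max n m, ?_⟩
          intro x hx
          rcases List.mem_cons.1 hx with rfl | hx'
          · exact lt_of_lt_of_le hm (humono.monotone (le_max_right n m))
          · exact lt_of_lt_of_le (hn x hx') (humono.monotone (le_max_left n m))
      obtain ⟨n, hn⟩ := hex
      have : G l < u (n + 1) := by
        rw [husucc]; exact (nextα_spec c G hG (hult n)).2.2 l hn
      exact lt_of_lt_of_le this (le_ciSup hbdd (n + 1))
    · exact lt_of_lt_of_le (lt_of_lt_of_le (lt_add_one_ord b) hu0.ge) (le_ciSup hbdd 0)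
  · -- closed
    intro B hB hBne hsup
    refine ⟨hsup, ?_⟩
    intro l hl
    have hex : ∃ b ∈ B, ∀ x ∈ l, x < b := by
      induction l with
      | nil =>
        obtain ⟨b, hb⟩ := hBne
        exact ⟨b, hb, by simp⟩
      | cons a t ih =>
        obtain ⟨b1, hb1, h1⟩ := ih (fun x hx => hl x (List.mem_cons_of_mem _ hx))
        have ha : a < sSup B := hl a List.mem_cons_self
        have hex2 : ∃ b2 ∈ B, a < b2 := by
          by_contra h
          push_neg at h
          exact absurd (csSup_le hBne h) (not_le.2 ha)
        obtain ⟨b2, hb2, h2⟩ := hex2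
        rcases le_total b1 b2 with hle | hle
        · exact ⟨b2, hb2, fun x hx => by
            rcases List.mem_cons.1 hx with rfl | hx'
            · exact h2
            · exact lt_of_lt_of_le (h1 x hx') hle⟩
        · exact ⟨b1, hb1, fun x hx => by
            rcases List.mem_cons.1 hx with rfl | hx'
            · exact lt_of_lt_of_le h2 hle
            · exact h1 x hx'⟩
    obtain ⟨b, hbB, hball⟩ := hex
    have hbCG := hB hbB
    have hGl : G l < b := hbCG.2 l hball
    have : b ≤ sSup B := le_csSup ⟨κo c, fun x hx => ((hB hx).1).le⟩ hbB
    exact lt_of_lt_of_le hGl this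

/-- any two clubs meet -/
lemma club_inter {C D : Set Ordinal.{0}} (hC : IsClubIn c.κ C) (hD : IsClubIn c.κ D) :
    ∃ α, α ∈ C ∧ α ∈ D := by
  classical
  obtain ⟨hC1, hC2, hC3⟩ := hC
  obtain ⟨hD1, hD2, hD3⟩ := hD
  -- interleaved sequences
  have step : ∀ δ : Ordinal, δ < κo c → ∃ p : Ordinal × Ordinal,
      p.1 ∈ C ∧ p.2 ∈ D ∧ δ < p.1 ∧ p.1 < p.2 ∧ p.2 < κo c := by
    intro δ hδ
    obtain ⟨x, hxC, hx⟩ := hC2 δ hδ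
    obtain ⟨y, hyD, hy⟩ := hD2 x (hC1 hxC)
    exact ⟨(x, y), hxC, hyD, hx, hy, hD1 hyD⟩
  have h0 : (0 : Ordinal) < κo c := κo_pos c
  -- build sequences by recursion
  let F : (Ordinal × Ordinal) → (Ordinal × Ordinal) := fun p =>
    if h : p.2 < κo c then Classical.choose (step p.2 h) else p
  let v : ℕ → Ordinal × Ordinal := fun n =>
    Nat.rec (Classical.choose (step 0 h0)) (fun _ p => F p) n
  have hv0 : v 0 = Classical.choose (step 0 h0) := rfl
  have hvs : ∀ n, v (n + 1) = F (v n) := fun n => rfl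
  have hinv : ∀ n, (v n).1 ∈ C ∧ (v n).2 ∈ D ∧ (v n).1 < (v n).2 ∧ (v n).2 < κo c ∧
      ((v (n+1)).1 > (v n).2) := by
    have hmem : ∀ n, (v n).1 ∈ C ∧ (v n).2 ∈ D ∧ (v n).1 < (v n).2 ∧ (v n).2 < κo c := by
      intro n
      induction n with
      | zero =>
        have := Classical.choose_spec (step 0 h0)
        exact ⟨this.1, this.2.1, this.2.2.2.1, this.2.2.2.2⟩
      | succ n ih =>
        rw [hvs]
        have hlt := ih.2.2.2
        simp only [F, dif_pos hlt]
        have := Classical.choose_spec (step (v n).2 hlt)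
        exact ⟨this.1, this.2.1, this.2.2.2.1, this.2.2.2.2⟩
    intro n
    refine ⟨(hmem n).1, (hmem n).2.1, (hmem n).2.2.1, (hmem n).2.2.2, ?_⟩
    rw [hvs]
    have hlt := (hmem n).2.2.2
    simp only [F, dif_pos hlt]
    exact (Classical.choose_spec (step (v n).2 hlt)).2.2.1
  set cs : ℕ → Ordinal := fun n => (v n).1 with hcs
  set ds : ℕ → Ordinal := fun n => (v n).2 with hds
  have hcd : ∀ n, cs n < ds n := fun n => (hinv n).2.2.1
  have hdc : ∀ n, ds n < cs (n + 1) := fun n => (hinv n).2.2.2.2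
  have hcsC : ∀ n, cs n ∈ C := fun n => (hinv n).1
  have hdsD : ∀ n, ds n ∈ D := fun n => (hinv n).2.1
  have hcslt : ∀ n, cs n < κo c := fun n => hC1 (hcsC n)
  have hdslt : ∀ n, ds n < κo c := fun n => hD1 (hdsD n)
  have hrange_small : ∀ f : ℕ → Ordinal.{0}, #(Set.range f) < Cardinal.lift.{1} c.κ := by
    intro f
    have h := Cardinal.mk_range_le_lift (f := f)
    rw [Cardinal.mk_nat, Cardinal.lift_aleph0, Cardinal.lift_id'] at h
    exact lt_of_le_of_lt h (aleph0_lt_lift c)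
  have hsupc : sSup (Set.range cs) < κo c :=
    csSup_lt_κo c (by rintro x ⟨n, rfl⟩; exact hcslt n) (hrange_small cs)
  have hbddc : BddAbove (Set.range cs) := ⟨κo c, by rintro x ⟨n, rfl⟩; exact (hcslt n).le⟩
  have hbddd : BddAbove (Set.range ds) := ⟨κo c, by rintro x ⟨n, rfl⟩; exact (hdslt n).le⟩
  have heq : sSup (Set.range cs) = sSup (Set.range ds) := by
    apply le_antisymm
    · apply csSup_le (Set.range_nonempty cs)
      rintro x ⟨n, rfl⟩
      exact le_trans (hcd n).le (le_csSup hbddd ⟨n, rfl⟩)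
    · apply csSup_le (Set.range_nonempty ds)
      rintro x ⟨n, rfl⟩
      exact le_trans (hdc n).le (le_csSup hbddc ⟨n + 1, rfl⟩)
  refine ⟨sSup (Set.range cs), ?_, ?_⟩
  · exact hC3 _ (by rintro x ⟨n, rfl⟩; exact hcsC n) (Set.range_nonempty cs) hsupc
  · rw [heq]
    exact hD3 _ (by rintro x ⟨n, rfl⟩; exact hdsD n) (Set.range_nonempty ds) (heq ▸ hsupc)

end EFAux
-- PART4: forward direction
namespace EFAux

variable {L : Language} (c : Ctx L)

def lastSet (l : List Ordinal) : Set Ordinal :=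
  match l.getLast? with
  | none => ∅
  | some g => c.X g

lemma lastSet_nil : lastSet c [] = ∅ := rfl

lemma lastSet_append (l : List Ordinal) (b : Ordinal) : lastSet c (l ++ [b]) = c.X b := by
  unfold lastSet
  rw [List.getLast?_concat]

lemma lastSet_eq {l : List Ordinal} (hne : l ≠ []) : lastSet c l = c.X (lastD l) := by
  rcases List.eq_nil_or_concat l with rfl | ⟨l', b, rfl⟩
  · exact absurd rfl hne
  · rw [List.concat_eq_append, lastSet_append, lastD_append]

open Classical in
noncomputable def condStep (acc : List Ordinal) (b : Ordinal) : List Ordinal :=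
  if c.X b = lastSet c acc then acc else acc ++ [b]

noncomputable def cond (l : List Ordinal) : List Ordinal := l.foldl (condStep c) []

lemma cond_append (l : List Ordinal) (b : Ordinal) :
    cond c (l ++ [b]) = condStep c (cond c l) b := by
  simp [cond, List.foldl_append]

lemma condStep_nil {a : List Ordinal} {b : Ordinal} (h : condStep c a b = []) : a = [] := by
  unfold condStep at h
  split at h
  · exact h
  · exact absurd h (by simp)

lemma condStep_len {a : List Ordinal} {b : Ordinal} :
    (condStep c a b).length ≤ a.length + 1 := by
  unfold condStep
  split
  · omega
  · simp

lemma condStep_prefix {a : List Ordinal} {b : Ordinal} : a <+: condStep c a b := by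
  unfold condStep
  split
  · exact List.prefix_refl a
  · exact List.prefix_append a [b]

noncomputable def resStrat (σ : List Ordinal → Ordinal) : List Ordinal → Ordinal :=
  fun h => if cond c h = [] then γe c else σ (cond c h)

lemma resStrat_congr (σ : List Ordinal → Ordinal) {h h' : List Ordinal}
    (he : cond c h = cond c h') : resStrat c σ h = resStrat c σ h' := by
  simp [resStrat, he]

lemma cond_succ (β : ℕ → Ordinal) (n : ℕ) :
    cond c (histMoves β (n + 1)) = condStep c (cond c (histMoves β n)) (β (n + 1)) := by
  rw [histMoves_succ, cond_append]

lemma cond_zero (β : ℕ → Ordinal) :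
    cond c (histMoves β 0) = condStep c [] (β 0) := by
  rw [histMoves_zero, show [β 0] = [] ++ [β 0] by simp, cond_append]
  rfl

lemma prefix_getD {l₁ l₂ : List Ordinal} (h : l₁ <+: l₂) {i : ℕ} (hi : i < l₁.length) :
    l₁.getD i 0 = l₂.getD i 0 := by
  obtain ⟨t, rfl⟩ := h
  rw [List.getD_append _ _ _ _ hi]

lemma cond_invariant {α : Ordinal} {β : ℕ → Ordinal} (hα : α < κo c)
    (hβ : ∀ n, ILegalResAt α c.X β n) : ∀ n,
    lastSet c (cond c (histMoves β n)) = c.X (β n) ∧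
    (cond c (histMoves β n) = [] ∨ LocLegal c (cond c (histMoves β n))) ∧
    (∀ x ∈ cond c (histMoves β n), x < α) := by
  intro n
  induction n with
  | zero =>
    rw [cond_zero]
    unfold condStep
    split
    · rename_i h
      rw [lastSet_nil] at h ⊢
      exact ⟨h.symm, Or.inl rfl, by simp⟩
    · rename_i h
      rw [lastSet_nil] at h
      have hb : β 0 < α := (hβ 0).1
      have he : ([] : List Ordinal) ++ [β 0] = [β 0] := by simp
      rw [he]
      refine ⟨?_, ?_, ?_⟩
      · rw [show [β 0] = ([] : List Ordinal) ++ [β 0] from by simp, lastSet_append]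
      · right
        exact locLegal_single c (hb.trans hα) (nonempty_iff_ne_empty.2 h)
      · intro x hx
        simp at hx
        subst hx
        exact hb
  | succ n ih =>
    obtain ⟨ih1, ih2, ih3⟩ := ih
    rw [cond_succ]
    have hbn : β (n + 1) < α := (hβ (n + 1)).1
    have hchain : c.X (β n) ⊆ c.X (β (n + 1)) := (hβ (n + 1)).2.2 n rfl
    unfold condStep
    split
    · rename_i h
      exact ⟨by rw [ih1] at h ⊢; exact h.symm, ih2, ih3⟩
    · rename_i h
      refine ⟨lastSet_append c _ _, ?_, ?_⟩
      · right
        rcases ih2 with hnil | hLL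
        · rw [hnil]
          rw [hnil, lastSet_nil] at h
          rw [show ([] : List Ordinal) ++ [β (n+1)] = [β (n+1)] by simp]
          exact locLegal_single c (hbn.trans hα) (nonempty_iff_ne_empty.2 h)
        · apply locLegal_append c hLL (hbn.trans hα)
          rw [← lastSet_eq c hLL.1, ih1]
          refine ⟨hchain, ?_⟩
          intro hsub
          apply h
          rw [ih1]
          exact subset_antisymm hsub hchain
      · intro x hx
        rcases List.mem_append.1 hx with hx' | hx'
        · exact ih3 x hx'
        · simp at hx'
          subst hx'
          exact hbn

end EFAux
-- PART5: forward direction main lemmas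
namespace EFAux

variable {L : Language} (c : Ctx L)

lemma condStep_cases (acc : List Ordinal) (b : Ordinal) :
    condStep c acc b = acc ∨ condStep c acc b = acc ++ [b] := by
  unfold condStep
  split
  · exact Or.inl rfl
  · exact Or.inr rfl

lemma forward_res {σ : List Ordinal → Ordinal} (hσ : WinStar c σ)
    (hiso : IsPartialIso c.A c.B (∅ : Set (Ordinal × Ordinal)))
    {α : Ordinal} (hα : α < κo c) (hγe : γe c < α)
    (hcl : ∀ l : List Ordinal, (∀ x ∈ l, x < α) → LocLegal c l →
      σ l < α ∧ c.Fp (σ l) ⊆ (Set.Iio α) ×ˢ (Set.Iio α)) :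
    IsWinRes c.A c.B α c.X c.Fp (resStrat c σ) := by
  intro β hβ
  have hK := cond_invariant c hα hβ
  set θ : ℕ → Ordinal := fun k => resStrat c σ (histMoves β k) with hθ
  have hθnil : ∀ n, cond c (histMoves β n) = [] → θ n = γe c := by
    intro n h; simp [hθ, resStrat, h]
  have hθcons : ∀ n, cond c (histMoves β n) ≠ [] → θ n = σ (cond c (histMoves β n)) := by
    intro n h; simp [hθ, resStrat, h]
  have hLL : ∀ n, cond c (histMoves β n) ≠ [] → LocLegal c (cond c (histMoves β n)) := by
    intro n h
    rcases (hK n).2.1 with h' | h'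
    · exact absurd h' h
    · exact h'
  have hleg : ∀ n, IILegalResAt α c.X c.Fp β θ n := by
    intro n
    by_cases h : cond c (histMoves β n) = []
    · have hXn : c.X (β n) = ∅ := by
        have := (hK n).1
        rw [h, lastSet_nil] at this
        exact this.symm
      refine ⟨?_, ?_, ?_, ?_, ?_⟩
      · rw [hθnil n h]; exact hγe
      · rw [hθnil n h, (γe_spec c).2]; exact empty_subset _
      · rw [hXn]; exact empty_subset _
      · rw [hXn]; exact empty_subset _
      · intro m hm
        subst hm
        have hKm : cond c (histMoves β m) = [] := by
          apply condStep_nil c (b := β (m + 1))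
          rw [← cond_succ]; exact h
        rw [hθnil m hKm, hθnil (m+1) h]
    · have hfl := star_facts c hσ (hLL n h)
      have hfa := hcl _ (hK n).2.2 (hLL n h)
      have hcov : c.X (β n) = c.X (lastD (cond c (histMoves β n))) :=
        ((hK n).1.symm).trans (lastSet_eq c h)
      refine ⟨?_, ?_, ?_, ?_, ?_⟩
      · rw [hθcons n h]; exact hfa.1
      · rw [hθcons n h]; exact hfa.2
      · rw [hθcons n h, hcov]; exact hfl.2.1
      · rw [hθcons n h, hcov]; exact hfl.2.2.1
      · intro m hm
        subst hm
        have hstep := cond_succ c β m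
        by_cases hKm : cond c (histMoves β m) = []
        · rw [hθnil m hKm, (γe_spec c).2]; exact empty_subset _
        · rw [hθcons m hKm, hθcons (m+1) h]
          rcases condStep_cases c (cond c (histMoves β m)) (β (m+1)) with hcs | hcs
          · rw [hstep, hcs]
          · have he : cond c (histMoves β (m+1)) = cond c (histMoves β m) ++ [β (m+1)] :=
              hstep.trans hcs
            rw [he]
            apply star_chain c hσ _ hKm
            rw [← he]
            exact hLL (m+1) h
  refine ⟨hleg, ?_⟩
  have hmono1 : ∀ n, c.Fp (θ n) ⊆ c.Fp (θ (n+1)) := fun n => (hleg (n+1)).2.2.2.2 n rfl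
  have hmono := chain_mono hmono1
  by_cases hstab : ∃ N, ∀ m, N ≤ m → cond c (histMoves β m) = cond c (histMoves β N)
  · obtain ⟨N, hN⟩ := hstab
    have hU : (⋃ n, c.Fp (θ n)) = c.Fp (θ N) := by
      apply subset_antisymm
      · apply iUnion_subset
        intro n
        rcases le_total n N with hn | hn
        · exact hmono n N hn
        · have : θ n = θ N := resStrat_congr c σ (by rw [hN n hn])
          rw [this]
      · exact subset_iUnion (fun n => c.Fp (θ n)) N
    rw [hU]
    by_cases h : cond c (histMoves β N) = []
    · rw [hθnil N h, (γe_spec c).2]; exact hiso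
    · rw [hθcons N h]
      exact (star_facts c hσ (hLL N h)).2.2.2
  · push_neg at hstab
    have hpre : ∀ m n, m ≤ n → cond c (histMoves β m) <+: cond c (histMoves β n) := by
      intro m n hmn
      induction n with
      | zero =>
        have : m = 0 := by omega
        subst this; exact List.prefix_refl _
      | succ k ih =>
        rcases Nat.lt_or_ge m (k+1) with h' | h'
        · refine (ih (by omega)).trans ?_
          rw [cond_succ]
          exact condStep_prefix c
        · have : m = k + 1 := by omega
          subst this; exact List.prefix_refl _
    have hgrow : ∀ N, ∃ m, N ≤ m ∧
        (cond c (histMoves β N)).length < (cond c (histMoves β m)).length := by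
      intro N
      obtain ⟨m, hm1, hm2⟩ := hstab N
      refine ⟨m, hm1, ?_⟩
      have hp := hpre N m hm1
      exact lt_of_le_of_ne hp.length_le (fun he => hm2 (hp.eq_of_length he).symm)
    have hunb : ∀ j, ∃ n, j < (cond c (histMoves β n)).length := by
      intro j
      induction j with
      | zero =>
        obtain ⟨m, _, hm⟩ := hgrow 0
        exact ⟨m, by omega⟩
      | succ j ih =>
        obtain ⟨n, hn⟩ := ih
        obtain ⟨m, hm1, hm2⟩ := hgrow n
        exact ⟨m, by omega⟩
    have hstep_len : ∀ n, (cond c (histMoves β (n+1))).length ≤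
        (cond c (histMoves β n)).length + 1 := by
      intro n; rw [cond_succ]; exact condStep_len c
    have hlen0 : (cond c (histMoves β 0)).length ≤ 1 := by
      rw [cond_zero]
      have := condStep_len c (a := ([] : List Ordinal)) (b := β 0)
      simpa using this
    have hhit : ∀ j, ∃ n, (cond c (histMoves β n)).length = j + 1 := by
      intro j
      have hex := hunb j
      have h1 : j < (cond c (histMoves β (Nat.find hex))).length := Nat.find_spec hex
      by_cases h0 : Nat.find hex = 0
      · rw [h0] at h1
        exact ⟨0, by omega⟩
      · have hm : Nat.find hex - 1 < Nat.find hex := by omega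
        have hmin : ¬ j < (cond c (histMoves β (Nat.find hex - 1))).length :=
          Nat.find_min hex hm
        have hst := hstep_len (Nat.find hex - 1)
        rw [Nat.sub_add_cancel (by omega)] at hst
        exact ⟨Nat.find hex, by omega⟩
    choose nj hnj using hunb
    set β' : ℕ → Ordinal := fun j => (cond c (histMoves β (nj j))).getD j 0 with hβ'
    have hstable : ∀ n j, j < (cond c (histMoves β n)).length →
        (cond c (histMoves β n)).getD j 0 = β' j := by
      intro n j hj
      rcases le_total n (nj j) with h' | h'
      · exact prefix_getD (hpre n _ h') hj
      · exact (prefix_getD (hpre _ n h') (hnj j)).symm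
    have hhist : ∀ n, cond c (histMoves β n) ≠ [] →
        histMoves β' ((cond c (histMoves β n)).length - 1) = cond c (histMoves β n) := by
      intro n hne
      have hlen : 0 < (cond c (histMoves β n)).length := List.length_pos_iff.2 hne
      apply List.ext_getElem
      · rw [histMoves_length]; omega
      · intro i h1 h2
        rw [histMoves_getElem, ← List.getD_eq_getElem _ 0 h2]
        exact (hstable n i h2).symm
    have hβ'leg : ∀ k, ILegalAt (κo c) c.X β' k := by
      intro k
      have hn : k < (cond c (histMoves β (nj k))).length := hnj k
      have hne : cond c (histMoves β (nj k)) ≠ [] := by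
        intro h; rw [h] at hn; simp at hn
      refine ILegalAt_congr (fun i hi => ?_) ((hLL (nj k) hne).2 k hn)
      exact hstable (nj k) i (by omega)
    have hgood := hσ β' hβ'leg
    have hUeq : (⋃ n, c.Fp (θ n)) = ⋃ k, c.Fp (σ (histMoves β' k)) := by
      apply subset_antisymm
      · apply iUnion_subset; intro n
        by_cases h : cond c (histMoves β n) = []
        · rw [hθnil n h, (γe_spec c).2]; exact empty_subset _
        · rw [hθcons n h, ← hhist n h]
          exact subset_iUnion (fun k => c.Fp (σ (histMoves β' k))) _
      · apply iUnion_subset; intro k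
        obtain ⟨n, hn⟩ := hhit k
        have hne : cond c (histMoves β n) ≠ [] := by
          intro h; rw [h] at hn; simp at hn
        have heq2 : histMoves β' k = cond c (histMoves β n) := by
          have := hhist n hne
          rwa [hn, Nat.add_sub_cancel] at this
        rw [heq2, ← hθcons n hne]
        exact subset_iUnion (fun m => c.Fp (θ m)) n
    rw [hUeq]
    apply iso_iUnion c
    · apply chain_mono
      intro k
      exact (hgood (k+1)).2.2.2.2 k rfl
    · intro k
      exact (hgood k).2.2.2.1

lemma exists_iso_empty {σ : List Ordinal → Ordinal}
    (hσ : IsWinFull c.A c.B (κo c) c.X c.Fp σ) :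
    IsPartialIso c.A c.B (∅ : Set (Ordinal × Ordinal)) := by
  have h0 : ({0} : Set Ordinal.{0}) ⊆ Set.Iio (κo c) := by
    intro x hx
    rw [mem_singleton_iff] at hx
    subst hx
    exact κo_pos c
  have hsm : #({0} : Set Ordinal.{0}) < Cardinal.lift.{1} c.κ := by
    rw [mk_singleton]
    exact lt_of_lt_of_le Cardinal.one_lt_aleph0 (aleph0_lt_lift c).le
  obtain ⟨hg, hX⟩ := enumX_spec c h0 hsm
  have hLL : LocLegal c [enumX c {0}] :=
    locLegal_single c hg (by rw [hX]; exact ⟨0, rfl⟩)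
  obtain ⟨hlegal, _⟩ := extSeq_legal c hLL
  exact iso_empty c (hσ _ hlegal).2

lemma forward {σ : List Ordinal → Ordinal} (hσ : IsWinFull c.A c.B (κo c) c.X c.Fp σ) :
    ∃ C, IsClubIn c.κ C ∧ ∀ α ∈ C, ∃ σ', IsWinRes c.A c.B α c.X c.Fp σ' := by
  classical
  have hstar := isWinFull_winStar c hσ
  have hiso := exists_iso_empty c hσ
  set G : List Ordinal → Ordinal := fun l =>
    max (γe c + 1) (if σ l < κo c then max (σ l + 1) (scF (c.Fp (σ l))) else 0) with hGdef
  have hG : ∀ l, G l < κo c := by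
    intro l
    apply max_lt (succ_lt_κo c (γe_spec c).1)
    split
    · rename_i h
      exact max_lt (succ_lt_κo c h) (scF_spec c (Fp_sub c h) (Fp_small c h)).1
    · exact κo_pos c
  refine ⟨CG c G, CG_club c G hG, ?_⟩
  intro α hα
  obtain ⟨hα1, hα2⟩ := hα
  refine ⟨resStrat c σ, ?_⟩
  apply forward_res c hstar hiso hα1
  · have h1 : γe c + 1 ≤ G [] := le_max_left _ _
    exact lt_of_lt_of_le (lt_of_lt_of_le (lt_add_one_ord _) h1) (hα2 [] (by simp)).le
  · intro l hlα hLL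
    have hfl := star_facts c hstar hLL
    have hGl : G l < α := hα2 l hlα
    have h2 : max (σ l + 1) (scF (c.Fp (σ l))) ≤ G l := by
      have : (if σ l < κo c then max (σ l + 1) (scF (c.Fp (σ l))) else 0) =
          max (σ l + 1) (scF (c.Fp (σ l))) := if_pos hfl.1
      calc max (σ l + 1) (scF (c.Fp (σ l)))
          = (if σ l < κo c then max (σ l + 1) (scF (c.Fp (σ l))) else 0) := this.symm
        _ ≤ G l := le_max_right _ _
    constructor
    · exact lt_of_lt_of_le (lt_of_lt_of_le (lt_add_one_ord _)
        (le_trans (le_max_left _ _) h2)) hGl.le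
    · exact Fp_in_square c hfl.1 (le_of_lt (lt_of_le_of_lt
        (le_trans (le_max_right _ _) h2) hGl))

end EFAux
-- PART6: restricted game prefix facts
namespace EFAux

variable {L : Language} (c : Ctx L)

def RLoc (α : Ordinal) (l : List Ordinal) : Prop :=
  l ≠ [] ∧ ∀ m < l.length, ILegalResAt α c.X (seqOf l) m

lemma ILegalResAt_congr {α : Ordinal} {X' : Ordinal → Set Ordinal} {β β' : ℕ → Ordinal} {n : ℕ}
    (h : ∀ i ≤ n, β i = β' i) (hβ : ILegalResAt α X' β n) : ILegalResAt α X' β' n := by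
  obtain ⟨h1, h2, h3⟩ := hβ
  refine ⟨by rw [← h n le_rfl]; exact h1, by rw [← h n le_rfl]; exact h2, ?_⟩
  intro m hm
  rw [← h m (by omega), ← h n le_rfl]
  exact h3 m hm

lemma rloc_single {α b : Ordinal} (hb : b < α) (hX : c.X b ⊆ Set.Iio α) : RLoc c α [b] := by
  refine ⟨by simp, ?_⟩
  intro m hm
  simp only [List.length_singleton] at hm
  have : m = 0 := by omega
  subst this
  exact ⟨by simpa [seqOf] using hb, by simpa [seqOf] using hX, fun m hm => by omega⟩

lemma rloc_append {α b : Ordinal} {l : List Ordinal} (hl : RLoc c α l) (hb : b < α)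
    (hX : c.X b ⊆ Set.Iio α) (hch : c.X (lastD l) ⊆ c.X b) : RLoc c α (l ++ [b]) := by
  obtain ⟨hne, hleg⟩ := hl
  have hlen : 0 < l.length := List.length_pos_iff.2 hne
  refine ⟨by simp, ?_⟩
  intro m hm
  rw [List.length_append, List.length_singleton] at hm
  rcases Nat.lt_or_ge m l.length with h | h
  · refine ILegalResAt_congr (fun i hi => ?_) (hleg m h)
    simp only [seqOf]
    rw [List.getD_append _ _ _ _ (by omega)]
  · have hm' : m = l.length := by omega
    subst hm'
    have hseq : seqOf (l ++ [b]) l.length = b := by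
      simp only [seqOf]
      rw [List.getD_append_right _ _ _ _ le_rfl]
      simp
    refine ⟨by rw [hseq]; exact hb, by rw [hseq]; exact hX, ?_⟩
    intro k hk
    have hk' : k = l.length - 1 := by omega
    subst hk'
    have h2 : seqOf (l ++ [b]) (l.length - 1) = lastD l := by
      simp only [seqOf, lastD]
      rw [List.getD_append _ _ _ _ (by omega)]
    rw [h2, hseq]
    exact hch

noncomputable def extRes (l : List Ordinal) : ℕ → Ordinal :=
  fun n => if n < l.length then l.getD n 0 else lastD l

lemma extRes_agree (l : List Ordinal) : ∀ i < l.length, extRes l i = l.getD i 0 := by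
  intro i hi
  simp [extRes, hi]

lemma extRes_ge (l : List Ordinal) {n : ℕ} (h : l.length ≤ n + 1) : extRes l n = lastD l := by
  rcases Nat.lt_or_ge n l.length with h' | h'
  · have : n = l.length - 1 := by omega
    subst this
    simp [extRes, h', lastD]
  · simp [extRes, Nat.not_lt.2 h']

lemma extRes_legal {α : Ordinal} {l : List Ordinal} (hl : RLoc c α l) :
    ∀ n, ILegalResAt α c.X (extRes l) n := by
  obtain ⟨hne, hleg⟩ := hl
  have hlen : 0 < l.length := List.length_pos_iff.2 hne
  have hlast : ILegalResAt α c.X (seqOf l) (l.length - 1) := hleg _ (by omega)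
  have hlastD : seqOf l (l.length - 1) = lastD l := rfl
  intro n
  rcases Nat.lt_or_ge n l.length with h | h
  · refine ILegalResAt_congr (fun i hi => ?_) (hleg n h)
    exact (extRes_agree l i (by omega)).symm
  · refine ⟨?_, ?_, ?_⟩
    · rw [extRes_ge l (by omega)]
      have h1 := hlast.1
      rwa [hlastD] at h1
    · rw [extRes_ge l (by omega)]
      have h1 := hlast.2.1
      rwa [hlastD] at h1
    · intro m hm
      rw [extRes_ge l (by omega), extRes_ge l (by omega)]

lemma extRes_hist {l : List Ordinal} (hne : l ≠ []) :
    histMoves (extRes l) (l.length - 1) = l := by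
  have hlen : 0 < l.length := List.length_pos_iff.2 hne
  have := histMoves_eq_take (β := extRes l) (l := l) (k := l.length - 1) (by omega)
    (fun i hi => extRes_agree l i (by omega))
  rw [this, Nat.sub_add_cancel (by omega), List.take_length]

lemma extRes_hist_take {l : List Ordinal} {k : ℕ} (hk : k < l.length) :
    histMoves (extRes l) k = l.take (k + 1) :=
  histMoves_eq_take hk (fun i hi => extRes_agree l i (by omega))

lemma res_facts {α : Ordinal} {σα : List Ordinal → Ordinal}
    (hσα : IsWinRes c.A c.B α c.X c.Fp σα) {l : List Ordinal} (hl : RLoc c α l) :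
    σα l < α ∧ c.Fp (σα l) ⊆ (Set.Iio α) ×ˢ (Set.Iio α) ∧
      c.X (lastD l) ⊆ Prod.fst '' c.Fp (σα l) ∧ c.X (lastD l) ⊆ Prod.snd '' c.Fp (σα l) ∧
      IsPartialIso c.A c.B (c.Fp (σα l)) := by
  have hlen : 0 < l.length := List.length_pos_iff.2 hl.1
  obtain ⟨hleg, hiso⟩ := hσα (extRes l) (extRes_legal c hl)
  have hg := hleg (l.length - 1)
  simp only [IILegalResAt] at hg
  rw [extRes_hist hl.1] at hg
  have hb : extRes l (l.length - 1) = lastD l := extRes_ge l (by omega)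
  rw [hb] at hg
  refine ⟨hg.1, hg.2.1, hg.2.2.1, hg.2.2.2.1, ?_⟩
  have hsub : c.Fp (σα l) ⊆ ⋃ n, c.Fp (σα (histMoves (extRes l) n)) := by
    have := subset_iUnion (fun n => c.Fp (σα (histMoves (extRes l) n))) (l.length - 1)
    rwa [extRes_hist hl.1] at this
  exact iso_mono c hsub hiso

lemma res_chain {α : Ordinal} {σα : List Ordinal → Ordinal}
    (hσα : IsWinRes c.A c.B α c.X c.Fp σα) {l : List Ordinal} {b : Ordinal}
    (hl : RLoc c α (l ++ [b])) (hne : l ≠ []) :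
    c.Fp (σα l) ⊆ c.Fp (σα (l ++ [b])) := by
  have hlen : 0 < l.length := List.length_pos_iff.2 hne
  have hlen2 : (l ++ [b]).length = l.length + 1 := by simp
  obtain ⟨hleg, _⟩ := hσα (extRes (l ++ [b])) (extRes_legal c hl)
  have hg := hleg l.length
  simp only [IILegalResAt] at hg
  have e1 : histMoves (extRes (l ++ [b])) l.length = l ++ [b] := by
    have := extRes_hist (l := l ++ [b]) hl.1
    rwa [hlen2, Nat.add_sub_cancel] at this
  have e2 : histMoves (extRes (l ++ [b])) (l.length - 1) = l := by
    rw [extRes_hist_take (by omega), Nat.sub_add_cancel (by omega), List.take_left]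
  have := hg.2.2.2.2 (l.length - 1) (by omega)
  rwa [e1, e2] at this

end EFAux
-- PART7: game states, Forces, rank, safety strategy
namespace EFAux

variable {L : Language} (c : Ctx L)

def IStepG (s : Option (Ordinal × Ordinal)) (b : Ordinal) : Prop :=
  match s with
  | none => b < κo c ∧ (c.X b).Nonempty
  | some p => b < κo c ∧ c.X p.1 ⊂ c.X b

lemma IStepG_lt {s : Option (Ordinal × Ordinal)} {b : Ordinal} (h : IStepG c s b) :
    b < κo c := by
  cases s with
  | none => exact h.1
  | some p => exact h.1

def IIStepG (s : Option (Ordinal × Ordinal)) (b t : Ordinal) : Prop :=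
  t < κo c ∧ c.X b ⊆ Prod.fst '' c.Fp t ∧ c.X b ⊆ Prod.snd '' c.Fp t ∧
    IsPartialIso c.A c.B (c.Fp t) ∧
    ∀ p : Ordinal × Ordinal, s = some p → c.Fp p.2 ⊆ c.Fp t

inductive Forces (c : Ctx L) : Option (Ordinal × Ordinal) → Type 1 where
  | intro : ∀ (s : Option (Ordinal × Ordinal)) (b : Ordinal), IStepG c s b →
      (∀ t, IIStepG c s b t → Forces c (some (b, t))) → Forces c s

noncomputable def rankF : ∀ {s : Option (Ordinal × Ordinal)}, Forces c s → Ordinal.{1}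
  | s, .intro _ b _ k =>
      Ordinal.lsub.{1, 1} (fun tp : {t : Ordinal.{0} // IIStepG c s b t} =>
        rankF (k tp.1 tp.2))

def witB {s : Option (Ordinal × Ordinal)} : Forces c s → Ordinal
  | .intro _ b _ _ => b

def witI {s : Option (Ordinal × Ordinal)} : (d : Forces c s) → IStepG c s (witB c d)
  | .intro _ _ hb _ => hb

def witK {s : Option (Ordinal × Ordinal)} :
    (d : Forces c s) → ∀ t, IIStepG c s (witB c d) t → Forces c (some (witB c d, t))
  | .intro _ _ _ k => k

lemma rankF_wit {s : Option (Ordinal × Ordinal)} (d : Forces c s) (t : Ordinal)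
    (ht : IIStepG c s (witB c d) t) : rankF c (witK c d t ht) < rankF c d := by
  cases d with
  | intro s b hb k =>
    show rankF c (k t ht) < rankF c (Forces.intro s b hb k)
    have : rankF c (Forces.intro s b hb k) =
        Ordinal.lsub.{1, 1} (fun tp : {t : Ordinal.{0} // IIStepG c s b t} =>
          rankF c (k tp.1 tp.2)) := rfl
    rw [this]
    exact Ordinal.lt_lsub (fun tp : {t : Ordinal.{0} // IIStepG c s b t} =>
      rankF c (k tp.1 tp.2)) ⟨t, ht⟩

lemma exists_minD (s : Option (Ordinal × Ordinal)) (h : Nonempty (Forces c s)) :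
    ∃ d : Forces c s, ∀ d' : Forces c s, rankF c d ≤ rankF c d' := by
  obtain ⟨d0⟩ := h
  have hne : (Set.range (fun d : Forces c s => rankF c d)).Nonempty := ⟨_, ⟨d0, rfl⟩⟩
  have hmem := csInf_mem hne
  obtain ⟨d, hd⟩ := hmem
  have hd' : rankF c d = sInf (Set.range (fun d : Forces c s => rankF c d)) := hd
  refine ⟨d, fun d' => ?_⟩
  rw [hd']
  exact csInf_le (OrderBot.bddBelow _) ⟨d', rfl⟩

noncomputable def minD (s : Option (Ordinal × Ordinal)) (h : Nonempty (Forces c s)) :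
    Forces c s := (exists_minD c s h).choose

lemma minD_min (s : Option (Ordinal × Ordinal)) (h : Nonempty (Forces c s)) :
    ∀ d' : Forces c s, rankF c (minD c s h) ≤ rankF c d' := (exists_minD c s h).choose_spec

open Classical in
noncomputable def χst (s : Option (Ordinal × Ordinal)) : Ordinal :=
  if h : Nonempty (Forces c s) then witB c (minD c s h) else 0

lemma χst_eq (s : Option (Ordinal × Ordinal)) (h : Nonempty (Forces c s)) :
    χst c s = witB c (minD c s h) := dif_pos h

-- ---------- safety: if there is no derivation at the root, II wins G* ----------
lemma stepII {s : Option (Ordinal × Ordinal)} {b : Ordinal}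
    (hs : ¬ Nonempty (Forces c s)) (hb : IStepG c s b) :
    ∃ t, IIStepG c s b t ∧ ¬ Nonempty (Forces c (some (b, t))) := by
  by_contra h
  push_neg at h
  exact hs ⟨Forces.intro s b hb (fun t ht => Classical.choice (h t ht))⟩

open Classical in
noncomputable def pickT (s : Option (Ordinal × Ordinal)) (b : Ordinal) : Ordinal :=
  if h : (¬ Nonempty (Forces c s)) ∧ IStepG c s b then
    (stepII c h.1 h.2).choose else 0

lemma pickT_spec {s : Option (Ordinal × Ordinal)} {b : Ordinal}
    (hs : ¬ Nonempty (Forces c s)) (hb : IStepG c s b) :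
    IIStepG c s b (pickT c s b) ∧ ¬ Nonempty (Forces c (some (b, pickT c s b))) := by
  have : pickT c s b = (stepII c hs hb).choose := dif_pos ⟨hs, hb⟩
  rw [this]
  exact (stepII c hs hb).choose_spec

noncomputable def runState (l : List Ordinal) : Option (Ordinal × Ordinal) :=
  l.foldl (fun s b => some (b, pickT c s b)) none

lemma runState_append (l : List Ordinal) (b : Ordinal) :
    runState c (l ++ [b]) = some (b, pickT c (runState c l) b) := by
  simp [runState, List.foldl_append]

noncomputable def σstar : List Ordinal → Ordinal := fun l =>
  match runState c l with
  | some p => p.2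
  | none => 0

lemma σstar_eq (l : List Ordinal) (b : Ordinal) :
    σstar c (l ++ [b]) = pickT c (runState c l) b := by
  simp [σstar, runState_append]

lemma safety_winStar (hnone : ¬ Nonempty (Forces c none)) : WinStar c (σstar c) := by
  intro β hβ
  have prevState : ℕ → Option (Ordinal × Ordinal) := fun n =>
    match n with
    | 0 => none
    | n + 1 => runState c (histMoves β n)
  -- main invariant
  have key : ∀ n, ¬ Nonempty (Forces c (runState c (histMoves β n))) ∧
      GoodAt c β (fun k => σstar c (histMoves β k)) n := by
    intro n
    induction n with
    | zero =>
      have h0 : histMoves β 0 = [] ++ [β 0] := by rw [histMoves_zero]; simp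
      have hIS : IStepG c none (β 0) := by
        have := hβ 0
        exact ⟨this.1, this.2.1 rfl⟩
      have hrs : runState c (histMoves β 0) = some (β 0, pickT c none (β 0)) := by
        rw [h0, runState_append]
        rfl
      have hσ : σstar c (histMoves β 0) = pickT c none (β 0) := by
        rw [h0, σstar_eq]
        rfl
      obtain ⟨hII, hnext⟩ := pickT_spec c hnone hIS
      constructor
      · rw [hrs]; exact hnext
      · simp only [GoodAt]
        rw [hσ]
        exact ⟨hII.1, hII.2.1, hII.2.2.1, hII.2.2.2.1, fun m hm => absurd hm (by omega)⟩
    | succ n ih =>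
      obtain ⟨ihn, ihg⟩ := ih
      have hrsn : runState c (histMoves β n) =
          some (β n, σstar c (histMoves β n)) := by
        rcases n with _ | m
        · rw [show histMoves β 0 = [] ++ [β 0] from by rw [histMoves_zero]; simp,
            runState_append, σstar_eq]
        · rw [histMoves_succ, runState_append, σstar_eq]
      have hIS : IStepG c (runState c (histMoves β n)) (β (n + 1)) := by
        rw [hrsn]
        exact ⟨(hβ (n + 1)).1, (hβ (n + 1)).2.2 n rfl⟩
      have hrs : runState c (histMoves β (n + 1)) =
          some (β (n + 1), pickT c (runState c (histMoves β n)) (β (n + 1))) := by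
        rw [histMoves_succ, runState_append]
      have hσ : σstar c (histMoves β (n + 1)) =
          pickT c (runState c (histMoves β n)) (β (n + 1)) := by
        rw [histMoves_succ, σstar_eq]
      obtain ⟨hII, hnext⟩ := pickT_spec c ihn hIS
      constructor
      · rw [hrs]; exact hnext
      · simp only [GoodAt]
        rw [hσ]
        refine ⟨hII.1, hII.2.1, hII.2.2.1, hII.2.2.2.1, ?_⟩
        intro m hm
        have hmn : m = n := by omega
        subst hmn
        exact hII.2.2.2.2 (β m, σstar c (histMoves β m)) hrsn
  exact fun n => (key n).2

end EFAux
-- PART8: WinStar implies a full winning strategy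
namespace EFAux

variable {L : Language} (c : Ctx L)

noncomputable def freshF (g : Set (Ordinal × Ordinal)) : Ordinal :=
  sInf {x | x < κo c ∧ x ∉ Prod.fst '' g}

lemma freshF_lt (g : Set (Ordinal × Ordinal)) : freshF c g < κo c := by
  rcases Set.eq_empty_or_nonempty {x | x < κo c ∧ x ∉ Prod.fst '' g} with he | hne
  · unfold freshF
    rw [he, Ordinal.sInf_empty]
    exact κo_pos c
  · exact (csInf_mem hne).1

lemma freshF_spec {t : Ordinal} (ht : t < κo c) :
    freshF c (c.Fp t) ∉ Prod.fst '' c.Fp t := by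
  have hne : {x | x < κo c ∧ x ∉ Prod.fst '' c.Fp t}.Nonempty := by
    obtain ⟨x, h1, h2⟩ := exists_fresh c (lt_of_le_of_lt mk_image_le (Fp_small c ht))
    exact ⟨x, h1, h2⟩
  exact (csInf_mem hne).2

lemma locLegal_lastD_lt {l : List Ordinal} (hl : LocLegal c l) : lastD l < κo c := by
  have hlen : 0 < l.length := List.length_pos_iff.2 hl.1
  exact (hl.2 (l.length - 1) (by omega)).1

noncomputable def nextSim (σ : List Ordinal → Ordinal) (acc : List Ordinal) (b : Ordinal) :
    Ordinal :=
  enumX c (lastSet c acc ∪ c.X b ∪ {freshF c (c.Fp (σ acc))})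

noncomputable def simList (σ : List Ordinal → Ordinal) : List Ordinal → List Ordinal :=
  fun l => l.foldl (fun acc b => acc ++ [nextSim c σ acc b]) []

lemma simList_append (σ : List Ordinal → Ordinal) (l : List Ordinal) (b : Ordinal) :
    simList c σ (l ++ [b]) = simList c σ l ++ [nextSim c σ (simList c σ l) b] := by
  simp [simList, List.foldl_append]

lemma enumX_union {s1 : Set Ordinal.{0}} {b x : Ordinal}
    (hs1 : s1 ⊆ Set.Iio (κo c)) (hsm : #s1 < Cardinal.lift.{1} c.κ)
    (hb : b < κo c) (hx : x < κo c) :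
    enumX c (s1 ∪ c.X b ∪ {x}) < κo c ∧ c.X (enumX c (s1 ∪ c.X b ∪ {x})) = s1 ∪ c.X b ∪ {x} := by
  apply enumX_spec
  · refine union_subset (union_subset hs1 (X_sub c hb)) ?_
    intro y hy
    rw [mem_singleton_iff] at hy
    subst hy
    exact hx
  · refine lt_of_le_of_lt (mk_union_le _ _) ?_
    apply Cardinal.add_lt_of_lt (aleph0_lt_lift c).le
    · refine lt_of_le_of_lt (mk_union_le _ _) ?_
      exact Cardinal.add_lt_of_lt (aleph0_lt_lift c).le hsm (X_small c hb)
    · rw [mk_singleton]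
      exact lt_of_lt_of_le Cardinal.one_lt_aleph0 (aleph0_lt_lift c).le

lemma winStar_to_full {σ : List Ordinal → Ordinal} (hσ : WinStar c σ) :
    IsWinFull c.A c.B (κo c) c.X c.Fp (fun l => σ (simList c σ l)) := by
  intro β hβ
  set T : ℕ → List Ordinal := fun n => simList c σ (histMoves β n) with hT
  have hTsucc : ∀ n, T (n + 1) = T n ++ [nextSim c σ (T n) (β (n + 1))] := by
    intro n
    show simList c σ (histMoves β (n + 1)) = _
    rw [histMoves_succ, simList_append]
  have hT0 : T 0 = [] ++ [nextSim c σ [] (β 0)] := by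
    show simList c σ (histMoves β 0) = _
    rw [histMoves_zero, show [β 0] = ([] : List Ordinal) ++ [β 0] from by simp,
      simList_append]
    rfl
  -- the invariant
  have inv : ∀ n, LocLegal c (T n) ∧ c.X (β n) ⊆ c.X (lastD (T n)) := by
    intro n
    induction n with
    | zero =>
      have hb0 : β 0 < κo c := (hβ 0).1
      have hfx : freshF c (c.Fp (σ [])) < κo c := freshF_lt c _
      have hset : nextSim c σ [] (β 0) < κo c ∧ c.X (nextSim c σ [] (β 0)) =
          lastSet c [] ∪ c.X (β 0) ∪ {freshF c (c.Fp (σ []))} := by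
        unfold nextSim
        rw [lastSet_nil]
        exact enumX_union c (by simp) (by simpa using lift_κ_pos c) hb0 hfx
      have hl0 : lastD (T 0) = nextSim c σ [] (β 0) := by rw [hT0]; exact lastD_append _ _
      have hX0 : c.X (lastD (T 0)) =
          lastSet c [] ∪ c.X (β 0) ∪ {freshF c (c.Fp (σ []))} := by
        rw [hl0]
        exact hset.2
      constructor
      · rw [hT0, List.nil_append]
        apply locLegal_single c hset.1
        rw [hset.2, lastSet_nil]
        exact ⟨freshF c (c.Fp (σ [])), by simp⟩
      · rw [hX0, lastSet_nil]
        intro y hy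
        exact mem_union_left _ (mem_union_right _ hy)
    | succ n ih =>
      obtain ⟨ihL, ihX⟩ := ih
      have hfacts := star_facts c hσ ihL
      have hbn : β (n + 1) < κo c := (hβ (n + 1)).1
      have hlast : lastD (T n) < κo c := locLegal_lastD_lt c ihL
      have hLS : lastSet c (T n) = c.X (lastD (T n)) := lastSet_eq c ihL.1
      have hfx : freshF c (c.Fp (σ (T n))) < κo c := freshF_lt c _
      have hset : nextSim c σ (T n) (β (n + 1)) < κo c ∧
          c.X (nextSim c σ (T n) (β (n + 1))) =
          lastSet c (T n) ∪ c.X (β (n + 1)) ∪ {freshF c (c.Fp (σ (T n)))} := by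
        unfold nextSim
        exact enumX_union c (by rw [hLS]; exact X_sub c hlast)
          (by rw [hLS]; exact X_small c hlast) hbn hfx
      have hnew : lastD (T (n + 1)) = nextSim c σ (T n) (β (n + 1)) := by
        rw [hTsucc]; exact lastD_append _ _
      have hXnew : c.X (lastD (T (n + 1))) =
          lastSet c (T n) ∪ c.X (β (n + 1)) ∪ {freshF c (c.Fp (σ (T n)))} := by
        rw [hnew]; exact hset.2
      have hxfree : freshF c (c.Fp (σ (T n))) ∉ c.X (lastD (T n)) := fun hmem =>
        freshF_spec c hfacts.1 (hfacts.2.1 hmem)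
      constructor
      · rw [hTsucc]
        apply locLegal_append c ihL hset.1
        rw [hset.2, hLS]
        constructor
        · intro y hy
          exact mem_union_left _ (mem_union_left _ hy)
        · intro hsub
          exact hxfree (hsub (by simp))
      · rw [hXnew]
        intro y hy
        exact mem_union_left _ (mem_union_right _ hy)
  -- the shadow play
  set β' : ℕ → Ordinal := fun n => lastD (T n) with hβ'
  have hTlen : ∀ n, (T n).length = n + 1 := by
    intro n
    induction n with
    | zero => rw [hT0]; simp
    | succ n ih => rw [hTsucc]; simp [ih]
  have hhist : ∀ n, histMoves β' n = T n := by
    intro n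
    induction n with
    | zero =>
      rw [histMoves_zero, hT0]
      simp only [List.nil_append]
      rfl
    | succ n ih =>
      rw [histMoves_succ, ih, hTsucc]
      congr 1
      rw [show β' (n + 1) = lastD (T (n + 1)) from rfl, hTsucc]
      rw [lastD_append]
  have hβ'leg : ∀ n, ILegalAt (κo c) c.X β' n := by
    intro n
    have hLL := (inv n).1
    have hlen : n < (T n).length := by rw [hTlen]; omega
    refine ILegalAt_congr (fun i hi => ?_) (hLL.2 n hlen)
    show seqOf (T n) i = β' i
    have hi' : i < (T i).length := by rw [hTlen]; omega
    have : (T n).getD i 0 = (histMoves β' n).getD i 0 := by rw [hhist]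
    rw [seqOf, this, List.getD_eq_getElem _ _ (by rw [histMoves_length]; omega),
      histMoves_getElem]
  have hgood := hσ β' hβ'leg
  have hθ : ∀ n, σ (simList c σ (histMoves β n)) = σ (histMoves β' n) := by
    intro n; rw [hhist]
  constructor
  · intro n
    have hg := hgood n
    simp only [GoodAt] at hg
    rw [hhist n] at hg
    refine ⟨?_, ?_, ?_, ?_⟩
    · exact hg.1
    · exact subset_trans ((inv n).2) hg.2.1
    · exact subset_trans ((inv n).2) hg.2.2.1
    · intro m hm
      subst hm
      have hgm := hgood m
      simp only [GoodAt] at hgm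
      rw [hhist m] at hgm
      have hsub : c.Fp (σ (T m)) ⊆ c.Fp (σ (T (m + 1))) := by
        have := hg.2.2.2.2 m rfl
        rwa [hhist m] at this
      refine ⟨hsub, ?_⟩
      intro hEq
      -- the fresh point witnesses strictness
      set x := freshF c (c.Fp (σ (T m))) with hx
      have hxin : x ∈ c.X (β' (m + 1)) := by
        show x ∈ c.X (lastD (T (m + 1)))
        have hnew : lastD (T (m + 1)) = nextSim c σ (T m) (β (m + 1)) := by
          rw [hTsucc]; exact lastD_append _ _
        have hbm : β (m + 1) < κo c := (hβ (m + 1)).1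
        have hlast : lastD (T m) < κo c := locLegal_lastD_lt c (inv m).1
        have hLS : lastSet c (T m) = c.X (lastD (T m)) := lastSet_eq c (inv m).1.1
        have hset : nextSim c σ (T m) (β (m + 1)) < κo c ∧
            c.X (nextSim c σ (T m) (β (m + 1))) =
            lastSet c (T m) ∪ c.X (β (m + 1)) ∪ {freshF c (c.Fp (σ (T m)))} := by
          unfold nextSim
          exact enumX_union c (by rw [hLS]; exact X_sub c hlast)
            (by rw [hLS]; exact X_small c hlast) hbm (freshF_lt c _)
        rw [hnew, hset.2]
        simp
        exact Or.inl hx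
      have hEq' : c.Fp (σ (T (m + 1))) ⊆ c.Fp (σ (T m)) := hEq
      have hxcov : x ∈ Prod.fst '' c.Fp (σ (T (m + 1))) := hg.2.1 hxin
      obtain ⟨p, hp, hpx⟩ := hxcov
      exact freshF_spec c hgm.1 ⟨p, hEq' hp, hpx⟩
  · apply iso_iUnion c
    · apply chain_mono
      intro k
      have h2 : c.Fp (σ (histMoves β' k)) ⊆ c.Fp (σ (histMoves β' (k + 1))) :=
        (hgood (k + 1)).2.2.2.2 k rfl
      rw [hhist k, hhist (k + 1)] at h2
      exact h2
    · intro k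
      have h2 : IsPartialIso c.A c.B (c.Fp (σ (histMoves β' k))) := (hgood k).2.2.2.1
      rw [hhist k] at h2
      exact h2

end EFAux
-- PART9: a Forces derivation at the root contradicts club-many restricted wins
namespace EFAux

variable {L : Language} (c : Ctx L)

lemma no_strictAnti (f : ℕ → Ordinal.{1}) (h : ∀ n, f (n + 1) < f n) : False := by
  have wf : WellFounded ((· < ·) : Ordinal.{1} → Ordinal.{1} → Prop) := wellFounded_lt
  have hmem : wf.min (Set.range f) (Set.range_nonempty f) ∈ Set.range f :=
    wf.min_mem (Set.range f) (Set.range_nonempty f)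
  obtain ⟨k, hk⟩ := hmem
  exact wf.not_lt_min (Set.range f) ⟨k + 1, rfl⟩ (hk ▸ h k)

lemma lastD_mem {l : List Ordinal} (hne : l ≠ []) : lastD l ∈ l := by
  have hlen : 0 < l.length := List.length_pos_iff.2 hne
  rw [lastD, List.getD_eq_getElem _ _ (by omega)]
  exact List.getElem_mem _

open Classical in
noncomputable def pk (x : Ordinal) : Ordinal :=
  if x < κo c then max (x + 1) (scX (c.X x)) else 0

lemma pk_lt (x : Ordinal) : pk c x < κo c := by
  unfold pk
  split
  · rename_i h
    exact max_lt (succ_lt_κo c h) (scX_spec c (X_sub c h) (X_small c h)).1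
  · exact κo_pos c

lemma pk_bound {x : Ordinal} (h : x < κo c) :
    x < pk c x ∧ c.X x ⊆ Set.Iio (pk c x) := by
  have hpk : pk c x = max (x + 1) (scX (c.X x)) := if_pos h
  rw [hpk]
  constructor
  · exact lt_of_lt_of_le (lt_add_one_ord x) (le_max_left _ _)
  · intro y hy
    exact lt_of_lt_of_le ((scX_spec c (X_sub c h) (X_small c h)).2 y hy) (le_max_right _ _)

noncomputable def GB : List Ordinal → Ordinal
  | [] => pk c (χst c none)
  | [b, t] => pk c (χst c (some (b, t)))
  | _ => 0

lemma GB_lt : ∀ l, GB c l < κo c := by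
  intro l
  rcases l with _ | ⟨b, _ | ⟨t, _ | ⟨u, rest⟩⟩⟩
  · exact pk_lt c _
  · exact κo_pos c
  · exact pk_lt c _
  · exact κo_pos c

noncomputable def runH (σα : List Ordinal → Ordinal) : ℕ → List Ordinal
  | 0 => [χst c none]
  | n + 1 => runH σα n ++ [χst c (some (lastD (runH σα n), σα (runH σα n)))]

noncomputable def prevSt (σα : List Ordinal → Ordinal) : ℕ → Option (Ordinal × Ordinal)
  | 0 => none
  | n + 1 => some (lastD (runH c σα n), σα (runH c σα n))

lemma rankF_cast {s1 s2 : Option (Ordinal × Ordinal)} (h : s1 = s2) (e : Forces c s1) :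
    rankF c (h ▸ e) = rankF c e := by
  subst h
  rfl

lemma claimC (hne : Nonempty (Forces c none)) {C : Set Ordinal.{0}}
    (hC : IsClubIn c.κ C)
    (hres : ∀ α ∈ C, ∃ σ', IsWinRes c.A c.B α c.X c.Fp σ') : False := by
  classical
  obtain ⟨α, hαC, hαD⟩ := club_inter c hC (CG_club c (GB c) (GB_lt c))
  obtain ⟨hακ, hαcl⟩ := hαD
  obtain ⟨σα, hσα⟩ := hres α hαC
  set H : ℕ → List Ordinal := runH c σα with hH
  have hH0 : H 0 = [χst c none] := rfl
  have hHs : ∀ n, H (n + 1) = H n ++ [χst c (some (lastD (H n), σα (H n)))] := fun n => rfl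
  have hHne : ∀ n, H n ≠ [] := by
    intro n
    cases n with
    | zero => simp [hH0]
    | succ n => rw [hHs]; simp
  set bet : ℕ → Ordinal := fun n => lastD (H n) with hbet
  have hβst : ∀ n, bet n = χst c (prevSt c σα n) := by
    intro n
    cases n with
    | zero => exact lastD_single _
    | succ n =>
      show lastD (H (n + 1)) = _
      rw [hHs n, lastD_append]
      rfl
  have hPs : ∀ n, prevSt c σα (n + 1) = some (bet n, σα (H n)) := fun n => rfl
  -- the invariant
  have inv : ∀ n, RLoc c α (H n) ∧ (∀ x ∈ H n, x < α) ∧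
      Nonempty (Forces c (prevSt c σα n)) := by
    intro n
    induction n with
    | zero =>
      have hχκ : χst c none < κo c := by
        rw [χst_eq c none hne]
        exact IStepG_lt c (witI c (minD c none hne))
      have hGB0 : GB c [] < α := hαcl [] (by simp)
      have hpk : χst c none < pk c (χst c none) ∧
          c.X (χst c none) ⊆ Set.Iio (pk c (χst c none)) := pk_bound c hχκ
      have hχα : χst c none < α := lt_of_lt_of_le hpk.1 (by
        have : GB c [] = pk c (χst c none) := rfl
        rw [this] at hGB0
        exact hGB0.le)
      have hXα : c.X (χst c none) ⊆ Set.Iio α := by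
        intro y hy
        have := hpk.2 hy
        have hGBa : pk c (χst c none) < α := by
          have h2 : GB c [] = pk c (χst c none) := rfl
          rwa [h2] at hGB0
        exact lt_trans this hGBa
      refine ⟨?_, ?_, hne⟩
      · rw [hH0]; exact rloc_single c hχα hXα
      · intro x hx
        rw [hH0] at hx
        simp at hx
        subst hx
        exact hχα
    | succ n ih =>
      obtain ⟨ihR, ihE, ihN⟩ := ih
      have hresf := res_facts c hσα ihR
      set θn := σα (H n) with hθn
      -- II's move is a good reply at the abstract state
      have hIIs : IIStepG c (prevSt c σα n) (bet n) θn := by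
        refine ⟨lt_trans hresf.1 hακ, hresf.2.2.1, hresf.2.2.2.1, hresf.2.2.2.2, ?_⟩
        intro p hp
        cases n with
        | zero => exact absurd hp (by simp [prevSt])
        | succ m =>
          have hp' : p = (bet m, σα (H m)) := by
            rw [hPs m] at hp
            exact (Option.some.inj hp).symm
          subst hp'
          show c.Fp (σα (H m)) ⊆ c.Fp θn
          have hb1 : bet (m + 1) = χst c (some (lastD (H m), σα (H m))) := by
            rw [hβst (m + 1), hPs m]
          have hHm1 : H (m + 1) = H m ++ [bet (m + 1)] := by rw [hHs m, hb1]
          rw [hθn, hHm1]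
          apply res_chain c hσα _ (hHne m)
          rw [← hHm1]
          exact ihR
      -- a derivation at the next state
      set d := minD c (prevSt c σα n) ihN with hd
      have hwit : witB c d = bet n := by rw [hβst n, χst_eq c _ ihN]
      have hIIs' : IIStepG c (prevSt c σα n) (witB c d) θn := by rw [hwit]; exact hIIs
      have hcast : some (witB c d, θn) = prevSt c σα (n + 1) := by
        rw [hwit, hPs n]
      have hNnext : Nonempty (Forces c (prevSt c σα (n + 1))) :=
        ⟨hcast ▸ witK c d θn hIIs'⟩
      -- closure bounds for the next move of I
      have hχκ : χst c (prevSt c σα (n + 1)) < κo c := by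
        rw [χst_eq c _ hNnext]
        exact IStepG_lt c (witI c (minD c _ hNnext))
      have hbetnα : bet n < α := ihE _ (lastD_mem (hHne n))
      have hGBn : GB c [bet n, θn] < α := by
        apply hαcl
        intro x hx
        simp at hx
        rcases hx with rfl | rfl
        · exact hbetnα
        · exact hresf.1
      have hGBeq : GB c [bet n, θn] = pk c (χst c (some (bet n, θn))) := rfl
      have hpkα : pk c (χst c (prevSt c σα (n + 1))) < α := by
        rw [hPs n]
        rw [hGBeq] at hGBn
        exact hGBn
      have hpk := pk_bound c hχκ
      have hbα : χst c (prevSt c σα (n + 1)) < α := lt_trans hpk.1 hpkα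
      have hXbα : c.X (χst c (prevSt c σα (n + 1))) ⊆ Set.Iio α := fun y hy =>
        lt_trans (hpk.2 hy) hpkα
      -- the chain condition for I's next move
      have hIS : IStepG c (prevSt c σα (n + 1)) (χst c (prevSt c σα (n + 1))) := by
        rw [χst_eq c _ hNnext]
        exact witI c (minD c _ hNnext)
      have hchain : c.X (lastD (H n)) ⊆ c.X (χst c (prevSt c σα (n + 1))) := by
        have h2 := hIS
        rw [hPs n] at h2
        exact h2.2.subset
      refine ⟨?_, ?_, hNnext⟩
      · rw [hHs n]
        have hae : χst c (some (lastD (H n), σα (H n))) = χst c (prevSt c σα (n + 1)) := by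
          rw [hPs n]
        rw [hae]
        exact rloc_append c ihR hbα hXbα hchain
      · intro x hx
        rw [hHs n] at hx
        rcases List.mem_append.1 hx with hx' | hx'
        · exact ihE x hx'
        · simp at hx'
          subst hx'
          have hae : χst c (some (lastD (H n), σα (H n))) = χst c (prevSt c σα (n + 1)) := by
            rw [hPs n]
          rw [hae]
          exact hbα
  -- the rank descent
  have hdec : ∀ n, rankF c (minD c (prevSt c σα (n + 1)) (inv (n + 1)).2.2) <
      rankF c (minD c (prevSt c σα n) (inv n).2.2) := by
    intro n
    obtain ⟨ihR, ihE, ihN⟩ := inv n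
    -- rebuild the witK term
    have hresf := res_facts c hσα ihR
    set θn := σα (H n) with hθn
    have hIIs : IIStepG c (prevSt c σα n) (bet n) θn := by
      refine ⟨lt_trans hresf.1 hακ, hresf.2.2.1, hresf.2.2.2.1, hresf.2.2.2.2, ?_⟩
      intro p hp
      cases n with
      | zero => exact absurd hp (by simp [prevSt])
      | succ m =>
        have hp' : p = (bet m, σα (H m)) := by
          rw [hPs m] at hp
          exact (Option.some.inj hp).symm
        subst hp'
        show c.Fp (σα (H m)) ⊆ c.Fp θn
        have hb1 : bet (m + 1) = χst c (some (lastD (H m), σα (H m))) := by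
          rw [hβst (m + 1), hPs m]
        have hHm1 : H (m + 1) = H m ++ [bet (m + 1)] := by rw [hHs m, hb1]
        rw [hθn, hHm1]
        apply res_chain c hσα _ (hHne m)
        rw [← hHm1]
        exact ihR
    set d := minD c (prevSt c σα n) ihN with hd
    have hwit : witB c d = bet n := by rw [hβst n, χst_eq c _ ihN]
    have hIIs' : IIStepG c (prevSt c σα n) (witB c d) θn := by rw [hwit]; exact hIIs
    have hcast : some (witB c d, θn) = prevSt c σα (n + 1) := by rw [hwit, hPs n]
    calc rankF c (minD c (prevSt c σα (n + 1)) (inv (n + 1)).2.2)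
        ≤ rankF c (hcast ▸ witK c d θn hIIs') := minD_min c _ _ _
      _ = rankF c (witK c d θn hIIs') := rankF_cast c hcast _
      _ < rankF c d := rankF_wit c d θn hIIs'
      _ = rankF c (minD c (prevSt c σα n) (inv n).2.2) := by rw [hd]
  exact no_strictAnti (fun n => rankF c (minD c (prevSt c σα n) (inv n).2.2)) hdec

end EFAux

-- PART10: backward direction and the main theorem
namespace EFAux

variable {L : Language} (c : Ctx L)

lemma backward
    (hRHS : ∃ C, IsClubIn c.κ C ∧ ∀ α ∈ C, ∃ σ', IsWinRes c.A c.B α c.X c.Fp σ') :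
    ∃ σ, IsWinFull c.A c.B (κo c) c.X c.Fp σ := by
  obtain ⟨C, hC, hres⟩ := hRHS
  by_cases h : Nonempty (Forces c none)
  · exact (claimC c h hC hres).elim
  · exact ⟨_, winStar_to_full c (safety_winStar c h)⟩

end EFAux


/-- For a complete first-order theory `T` in a countable relational vocabulary
and structures `A`, `B` with domain `κ` (`κ` regular uncountable with
`κ^{<κ} = κ`): player II has a winning strategy in `EF^κ_ω(A,B)` iff player II
has a winning strategy in `EF^κ_ω(A↾α, B↾α)` for club-many `α < κ`. -/
theorem II_wins_iff_club_many (κ : Cardinal.{0}) (hκ : κ.IsRegular) (hκω : ℵ₀ < κ)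
    (hκpow : ∀ lam < κ, ℵ₀ ≤ lam → κ ^ lam = κ)
    (L : Language) [Countable (Σ n, L.Relations n)] (hrel : ∀ n, IsEmpty (L.Functions n))
    (T : L.Theory) (hT : T.IsComplete)
    (A B : L.Structure Ordinal)
    (X : Ordinal → Set Ordinal) (Fp : Ordinal → Set (Ordinal × Ordinal))
    (hEnum : GoodEnum κ X Fp) :
    (∃ σ, IsWinFull A B κ.ord X Fp σ) ↔
      ∃ C : Set Ordinal, IsClubIn κ C ∧ ∀ α ∈ C, ∃ σ, IsWinRes A B α X Fp σ := by
  set c : EFAux.Ctx L := ⟨κ, hκ, hκω, A, B, X, Fp, hEnum⟩ with hc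
  constructor
  · rintro ⟨σ, hσ⟩
    exact EFAux.forward c hσ
  · rintro ⟨C, hC, hres⟩
    exact EFAux.backward c ⟨C, hC, hres⟩
end

section
/- Let T be a complete first-order theory in a countable relational vocabulary. There are club-many α < κ such that the relation R_EF^α on κ^κ is an equivalence relation, where η R_EF^α ξ holds iff either both A_η↾α and A_ξ↾α fail to model T, or both model T and player II has a winning strategy in EF^κ_ω(A_η↾α, A_ξ↾α). -/
open Set Cardinal FirstOrder FirstOrder.Language

variable {L : Language}

/-- The countable relational vocabulary `{P_m : m < ω}`, where `P_m` has arity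
`ar m`. -/
def Lang (ar : ℕ → ℕ) : Language :=
  { Functions := fun _ => Empty
    Relations := fun n => { m : ℕ // ar m = n } }

/-- The structure `A_η` with domain `κ` coded by `η ∈ κ^κ` via a fixed pairing
bijection `π : κ^{<ω} → κ` (Definition 2.1): a tuple `v` satisfies `P_m` iff
`η (π (m, v)) > 0`. -/
def codedStruct (ar : ℕ → ℕ) (π : ℕ × List Ordinal → Ordinal) (η : Ordinal → Ordinal) :
    (Lang ar).Structure Ordinal where
  funMap := fun f _ => f.elim
  RelMap := fun {n} R v => 0 < η (π (R.1, List.ofFn v))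

/-- The restriction `S↾α` of a relational structure with domain the ordinals to
the ordinals below `α`. -/
def restrictStruct {ar : ℕ → ℕ} (S : (Lang ar).Structure Ordinal) (α : Ordinal) :
    (Lang ar).Structure ↥(Set.Iio α) where
  funMap := fun f _ => f.elim
  RelMap := fun {n} R v => S.RelMap R (fun i => (v i : Ordinal))

/-- `A_η↾α ⊨ T`. -/
def ModelsRes (ar : ℕ → ℕ) (π : ℕ × List Ordinal → Ordinal) (T : (Lang ar).Theory)
    (η : Ordinal → Ordinal) (α : Ordinal) : Prop :=
  @Theory.Model (Lang ar) ↥(Set.Iio α) (restrictStruct (codedStruct ar π η) α) T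

/-- The relation `R_EF^α` on `κ^κ`: `η R_EF^α ξ` iff either both `A_η↾α` and
`A_ξ↾α` fail to model `T`, or both model `T` and II has a winning strategy in
`EF^κ_ω(A_η↾α, A_ξ↾α)`. -/
def REF (ar : ℕ → ℕ) (π : ℕ × List Ordinal → Ordinal) (T : (Lang ar).Theory)
    (X : Ordinal → Set Ordinal) (Fp : Ordinal → Set (Ordinal × Ordinal))
    (α : Ordinal) (η ξ : Ordinal → Ordinal) : Prop :=
  (¬ ModelsRes ar π T η α ∧ ¬ ModelsRes ar π T ξ α) ∨
  (ModelsRes ar π T η α ∧ ModelsRes ar π T ξ α ∧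
    ∃ σ, IsWinRes (codedStruct ar π η) (codedStruct ar π ξ) α X Fp σ)

/-! ### Auxiliary material -/

section Aux

/-- Composition of two graphs. -/
def comp2 (g h : Set (Ordinal.{0} × Ordinal.{0})) : Set (Ordinal.{0} × Ordinal.{0}) :=
  {p | ∃ y, (p.1, y) ∈ g ∧ (y, p.2) ∈ h}

/-- Identity graph on a set. -/
def idg (s : Set Ordinal.{0}) : Set (Ordinal.{0} × Ordinal.{0}) := (fun x => (x, x)) '' s

lemma comp2_mono {g g' h h' : Set (Ordinal.{0} × Ordinal.{0})} (hg : g ⊆ g') (hh : h ⊆ h') :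
    comp2 g h ⊆ comp2 g' h' := by
  rintro p ⟨y, h1, h2⟩; exact ⟨y, hg h1, hh h2⟩

lemma idg_mono {s t : Set Ordinal.{0}} (h : s ⊆ t) : idg s ⊆ idg t :=
  Set.image_mono h

lemma mem_idg {s : Set Ordinal.{0}} {p : Ordinal.{0} × Ordinal.{0}} :
    p ∈ idg s ↔ p.1 ∈ s ∧ p.2 = p.1 := by
  constructor
  · rintro ⟨x, hx, rfl⟩; exact ⟨hx, rfl⟩
  · rintro ⟨h1, h2⟩; exact ⟨p.1, h1, by ext <;> simp [h2]⟩

lemma fst_image_idg (s : Set Ordinal.{0}) : Prod.fst '' idg s = s := by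
  ext x; constructor
  · rintro ⟨p, hp, rfl⟩; exact (mem_idg.1 hp).1
  · intro hx; exact ⟨(x, x), mem_idg.2 ⟨hx, rfl⟩, rfl⟩

lemma snd_image_idg (s : Set Ordinal.{0}) : Prod.snd '' idg s = s := by
  ext x; constructor
  · rintro ⟨p, hp, rfl⟩; rw [(mem_idg.1 hp).2]; exact (mem_idg.1 hp).1
  · intro hx; exact ⟨(x, x), mem_idg.2 ⟨hx, rfl⟩, rfl⟩

lemma mem_swap_image {g : Set (Ordinal.{0} × Ordinal.{0})} {p : Ordinal.{0} × Ordinal.{0}} :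
    p ∈ Prod.swap '' g ↔ p.swap ∈ g := by
  rw [Set.image_swap_eq_preimage_swap]; rfl

lemma fst_image_swap (g : Set (Ordinal.{0} × Ordinal.{0})) :
    Prod.fst '' (Prod.swap '' g) = Prod.snd '' g := by
  rw [← Set.image_comp]; rfl

lemma snd_image_swap (g : Set (Ordinal.{0} × Ordinal.{0})) :
    Prod.snd '' (Prod.swap '' g) = Prod.fst '' g := by
  rw [← Set.image_comp]; rfl

variable {L' : Language}

lemma isPartialIso_mono {A B : L'.Structure Ordinal} {g g' : Set (Ordinal.{0} × Ordinal.{0})}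
    (h : IsPartialIso A B g) (hs : g' ⊆ g) : IsPartialIso A B g' :=
  ⟨fun p hp q hq => h.1 p (hs hp) q (hs hq),
   fun p hp q hq => h.2.1 p (hs hp) q (hs hq),
   fun n R v hv => h.2.2 n R v fun i => hs (hv i)⟩

lemma isPartialIso_idg (A : L'.Structure Ordinal) (s : Set Ordinal.{0}) :
    IsPartialIso A A (idg s) := by
  refine ⟨?_, ?_, ?_⟩
  · intro p hp q hq h
    rw [(mem_idg.1 hp).2, (mem_idg.1 hq).2, h]
  · intro p hp q hq h
    rw [← (mem_idg.1 hp).2, ← (mem_idg.1 hq).2, h]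
  · intro n R v hv
    have : (fun i => (v i).1) = fun i => (v i).2 := by
      funext i; exact ((mem_idg.1 (hv i)).2).symm
    rw [this]

lemma isPartialIso_swap {A B : L'.Structure Ordinal} {g : Set (Ordinal.{0} × Ordinal.{0})}
    (h : IsPartialIso A B g) : IsPartialIso B A (Prod.swap '' g) := by
  refine ⟨?_, ?_, ?_⟩
  · intro p hp q hq he
    exact h.2.1 _ (mem_swap_image.1 hp) _ (mem_swap_image.1 hq) he
  · intro p hp q hq he
    exact h.1 _ (mem_swap_image.1 hp) _ (mem_swap_image.1 hq) he
  · intro n R v hv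
    exact (h.2.2 n R (fun i => (v i).swap) fun i => mem_swap_image.1 (hv i)).symm

lemma isPartialIso_comp {A B C : L'.Structure Ordinal} {g h : Set (Ordinal.{0} × Ordinal.{0})}
    (hg : IsPartialIso A B g) (hh : IsPartialIso B C h) :
    IsPartialIso A C (comp2 g h) := by
  refine ⟨?_, ?_, ?_⟩
  · rintro p ⟨y, hp1, hp2⟩ q ⟨z, hq1, hq2⟩ he
    have hyz : y = z := hg.1 (p.1, y) hp1 (q.1, z) hq1 he
    exact hh.1 (y, p.2) hp2 (z, q.2) hq2 hyz
  · rintro p ⟨y, hp1, hp2⟩ q ⟨z, hq1, hq2⟩ he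
    have hyz : y = z := hh.2.1 (y, p.2) hp2 (z, q.2) hq2 he
    exact hg.2.1 (p.1, y) hp1 (q.1, z) hq1 hyz
  · intro n R v hv
    choose y hy1 hy2 using hv
    exact (hg.2.2 n R (fun i => ((v i).1, y i)) fun i => hy1 i).trans
      (hh.2.2 n R (fun i => (y i, (v i).2)) fun i => hy2 i)

/-! #### List lemmas -/

lemma histMoves_length (β : ℕ → Ordinal) (n : ℕ) : (histMoves β n).length = n + 1 := by
  simp [histMoves]

lemma histMoves_ne_nil (β : ℕ → Ordinal) (n : ℕ) : histMoves β n ≠ [] := by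
  have := histMoves_length β n
  intro h; rw [h] at this; simp at this

lemma histMoves_succ (β : ℕ → Ordinal) (n : ℕ) :
    histMoves β (n + 1) = histMoves β n ++ [β (n + 1)] := by
  simp [histMoves, List.range_succ]

lemma histMoves_zero (β : ℕ → Ordinal) : histMoves β 0 = [β 0] := by
  simp [histMoves, List.range_succ]

lemma histMoves_getElem (β : ℕ → Ordinal) (n k : ℕ) (h : k < (histMoves β n).length) :
    (histMoves β n)[k] = β k := by
  simp [histMoves]

lemma histMoves_getD (β : ℕ → Ordinal) {n k : ℕ} (h : k ≤ n) :
    (histMoves β n).getD k 0 = β k := by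
  rw [List.getD_eq_getElem _ _ (by rw [histMoves_length]; omega), histMoves_getElem]

lemma getLastD_of_ne_nil {α : Type*} {l : List α} (h : l ≠ []) (a b : α) :
    l.getLastD a = l.getLastD b := by
  obtain ⟨L, x, rfl⟩ := (List.eq_nil_or_concat l).resolve_left h
  simp [List.concat_eq_append]

lemma getLastD_eq_getD {α : Type*} {l : List α} (h : l ≠ []) (d : α) :
    l.getLastD d = l.getD (l.length - 1) d := by
  obtain ⟨L, x, rfl⟩ := (List.eq_nil_or_concat l).resolve_left h
  simp only [List.concat_eq_append, List.getLastD_concat, List.length_append,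
    List.length_singleton]
  rw [List.getD_eq_getElem _ _ (by simp), List.getElem_concat_length (l := L) (i := L.length + 1 - 1) (by omega)]

lemma getLastD_mem {α : Type*} {l : List α} (h : l ≠ []) (d : α) : l.getLastD d ∈ l := by
  rw [getLastD_eq_getD h]
  rw [List.getD_eq_getElem _ _ (by cases l with | nil => exact absurd rfl h | cons => simp)]
  exact List.getElem_mem _

lemma histMoves_getLastD (β : ℕ → Ordinal) (n : ℕ) :
    (histMoves β n).getLastD 0 = β n := by
  rw [getLastD_eq_getD (histMoves_ne_nil β n), histMoves_length]
  simpa using histMoves_getD β (le_refl n)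

lemma histMoves_take (β : ℕ → Ordinal) {m n : ℕ} (h : m ≤ n) :
    (histMoves β n).take (m + 1) = histMoves β m := by
  simp only [histMoves, ← List.map_take, List.take_range]
  rw [Nat.min_eq_left (by omega)]

lemma histMoves_dropLast (β : ℕ → Ordinal) (n : ℕ) :
    (histMoves β (n + 1)).dropLast = histMoves β n := by
  rw [histMoves_succ, List.dropLast_concat]

/-! #### Legal histories and facts about winning strategies -/

/-- A legal (finite) history of moves of player I in the restricted game. -/
def GoodH (α : Ordinal.{0}) (X : Ordinal → Set Ordinal) (l : List Ordinal) : Prop :=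
  (∀ x ∈ l, x < α ∧ X x ⊆ Set.Iio α) ∧ l.Chain' fun a b => X a ⊆ X b

lemma goodH_nil {α : Ordinal.{0}} {X : Ordinal → Set Ordinal} : GoodH α X [] :=
  ⟨by simp, List.isChain_nil⟩

lemma goodH_append {α : Ordinal.{0}} {X : Ordinal → Set Ordinal} {l : List Ordinal}
    {x : Ordinal} (h : GoodH α X l) (hx : x < α) (hX : X x ⊆ Set.Iio α)
    (hlast : l ≠ [] → X (l.getLastD 0) ⊆ X x) : GoodH α X (l ++ [x]) := by
  constructor
  · intro y hy
    rcases List.mem_append.1 hy with hy | hy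
    · exact h.1 y hy
    · rw [List.mem_singleton.1 hy]; exact ⟨hx, hX⟩
  · change List.IsChain _ _; rw [List.isChain_append]
    refine ⟨h.2, List.isChain_singleton _, ?_⟩
    intro a ha y hyy
    have hl : l ≠ [] := by rintro rfl; simp at ha
    have ha' : l.getLastD 0 = a := by
      rw [List.getLastD_eq_getLast?, Option.mem_def.1 ha]; rfl
    have hy' : y = x := (by simpa using hyy : x = y).symm
    rw [← ha', hy']
    exact hlast hl

lemma goodH_dropLast {α : Ordinal.{0}} {X : Ordinal → Set Ordinal} {l : List Ordinal}
    (h : GoodH α X l) : GoodH α X l.dropLast :=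
  ⟨fun x hx => h.1 x ((List.dropLast_sublist l).subset hx),
   h.2.prefix (List.dropLast_prefix l)⟩

/-- The key consequences of a winning strategy for a legal finite history,
obtained by extending the history by a constant tail. -/
lemma win_facts {L' : Language} {A B : L'.Structure Ordinal} {α : Ordinal.{0}}
    {X : Ordinal → Set Ordinal} {Fp : Ordinal → Set (Ordinal × Ordinal)}
    {σ : List Ordinal → Ordinal}
    (hw : IsWinRes A B α X Fp σ) {l : List Ordinal} (hne : l ≠ [])
    (hg : GoodH α X l) :
    σ l < α ∧ Fp (σ l) ⊆ (Set.Iio α) ×ˢ (Set.Iio α) ∧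
      X (l.getLastD 0) ⊆ Prod.fst '' Fp (σ l) ∧ X (l.getLastD 0) ⊆ Prod.snd '' Fp (σ l) ∧
      (2 ≤ l.length → Fp (σ l.dropLast) ⊆ Fp (σ l)) := by
  have hlpos : 0 < l.length := List.length_pos_iff.2 hne
  set r := l.length - 1 with hr
  have hrl : r < l.length := by omega
  set b : ℕ → Ordinal := fun k => l.getD (min k r) 0 with hb
  have hmin : ∀ k : ℕ, min k r < l.length := fun k => by omega
  have hbmem : ∀ k, b k ∈ l := by
    intro k
    rw [hb]
    simp only [List.getD_eq_getElem _ _ (hmin k)]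
    exact List.getElem_mem _
  have hleg : ∀ m, ILegalResAt α X b m := by
    intro m
    refine ⟨(hg.1 _ (hbmem m)).1, (hg.1 _ (hbmem m)).2, ?_⟩
    rintro m' rfl
    rcases le_or_gt r m' with hm | hm
    · have : min m' r = min (m' + 1) r := by omega
      simp only [hb, this]
      exact subset_rfl
    · have h1 : min m' r = m' := by omega
      have h2 : min (m' + 1) r = m' + 1 := by omega
      simp only [hb, h1, h2]
      rw [List.getD_eq_getElem _ _ (by omega : m' < l.length),
        List.getD_eq_getElem _ _ (by omega : m' + 1 < l.length)]
      have := List.isChain_iff_getElem.1 hg.2 m' (by omega)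
      simpa [List.get_eq_getElem] using this
  obtain ⟨hII, _⟩ := hw b hleg
  have hhist : ∀ m, m ≤ r → histMoves b m = l.take (m + 1) := by
    intro m hm
    apply List.ext_getElem
    · rw [histMoves_length, List.length_take]; omega
    · intro i h1 h2
      rw [histMoves_getElem, List.getElem_take]
      have hi : min i r = i := by rw [histMoves_length] at h1; omega
      show l.getD (min i r) 0 = l[i]'_
      rw [hi]
      exact List.getD_eq_getElem _ _ _
  have hl : histMoves b r = l := by
    rw [hhist r le_rfl]
    have : r + 1 = l.length := by omega
    rw [this, List.take_length]
  have hIIr := hII r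
  simp only [IILegalResAt, hl] at hIIr
  have hbr : b r = l.getLastD 0 := by
    rw [hb]
    simp only [min_self]
    exact (getLastD_eq_getD hne 0).symm
  obtain ⟨h1, h2, h3, h4, h5⟩ := hIIr
  rw [hbr] at h3 h4
  refine ⟨h1, h2, h3, h4, ?_⟩
  intro hlen
  have hr1 : r = (r - 1) + 1 := by omega
  have h6 := h5 (r - 1) hr1
  rw [hhist (r-1) (by omega)] at h6
  have hdl : l.take (r - 1 + 1) = l.dropLast := by
    rw [List.dropLast_eq_take]; congr 1; omega
  rwa [hdl] at h6

/-! #### Reflexivity and symmetry strategies -/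

lemma refl_win {L' : Language} (A : L'.Structure Ordinal) {α κo : Ordinal.{0}}
    {X : Ordinal → Set Ordinal} {Fp : Ordinal → Set (Ordinal × Ordinal)}
    (hα : α < κo) (iI : Ordinal → Ordinal)
    (hiI : ∀ a < κo, Fp (iI a) = idg (X a)) (hclI : ∀ a < α, iI a < α) :
    IsWinRes A A α X Fp (fun l => iI (l.getLastD 0)) := by
  intro β hβ
  have hFp : ∀ n, Fp (iI ((histMoves β n).getLastD 0)) = idg (X (β n)) := by
    intro n
    rw [histMoves_getLastD]
    exact hiI _ ((hβ n).1.trans hα)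
  constructor
  · intro n
    refine ⟨?_, ?_, ?_, ?_, ?_⟩
    · simp only [histMoves_getLastD]
      exact hclI _ (hβ n).1
    · simp only [hFp n]
      rintro p hp
      obtain ⟨h1, h2⟩ := mem_idg.1 hp
      exact ⟨(hβ n).2.1 h1, by rw [h2]; exact (hβ n).2.1 h1⟩
    · simp only [hFp n, fst_image_idg]
      exact subset_rfl
    · simp only [hFp n, snd_image_idg]
      exact subset_rfl
    · rintro m rfl
      simp only [hFp]
      exact idg_mono ((hβ (m+1)).2.2 m rfl)
  · have : ⋃ n, Fp (iI ((histMoves β n).getLastD 0)) = idg (⋃ n, X (β n)) := by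
      simp only [hFp, idg, Set.image_iUnion]
    rw [this]
    exact isPartialIso_idg A _

lemma symm_win {L' : Language} {A B : L'.Structure Ordinal} {α κo : Ordinal.{0}}
    {X : Ordinal → Set Ordinal} {Fp : Ordinal → Set (Ordinal × Ordinal)}
    {σ : List Ordinal → Ordinal} (hα : α < κo) (iW : Ordinal → Ordinal)
    (hiW : ∀ a < κo, (∀ p ∈ Fp a, ∀ q ∈ Fp a, p.2 = q.2 → p.1 = q.1) →
      Fp (iW a) = Prod.swap '' Fp a)
    (hclW : ∀ a < α, iW a < α)
    (hw : IsWinRes A B α X Fp σ) : IsWinRes B A α X Fp (fun l => iW (σ l)) := by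
  intro β hβ
  obtain ⟨hII, hiso⟩ := hw β hβ
  have hswap : ∀ n, Fp (iW (σ (histMoves β n))) = Prod.swap '' Fp (σ (histMoves β n)) := by
    intro n
    refine hiW _ ((hII n).1.trans hα) ?_
    intro p hp q hq h2
    exact hiso.2.1 p (Set.mem_iUnion.2 ⟨n, hp⟩) q (Set.mem_iUnion.2 ⟨n, hq⟩) h2
  constructor
  · intro n
    obtain ⟨h1, h2, h3, h4, h5⟩ := hII n
    refine ⟨hclW _ h1, ?_, ?_, ?_, ?_⟩
    · rw [hswap n]
      rintro p hp
      have := h2 (mem_swap_image.1 hp)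
      exact ⟨this.2, this.1⟩
    · rw [hswap n, fst_image_swap]; exact h4
    · rw [hswap n, snd_image_swap]; exact h3
    · rintro m rfl
      rw [hswap, hswap]
      exact Set.image_mono (h5 m rfl)
  · have : ⋃ n, Fp (iW (σ (histMoves β n))) =
        Prod.swap '' ⋃ n, Fp (σ (histMoves β n)) := by
      simp only [hswap, Set.image_iUnion]
    rw [this]
    exact isPartialIso_swap hiso

/-! #### The composition (transitivity) strategy -/

/-- One round of the simulation of the two auxiliary games: given I's new move `x`
in the main game and the histories `p` of I's moves in the two auxiliary games,
compute two more rounds of each auxiliary game. -/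
def step (σ₁ σ₂ : List Ordinal.{0} → Ordinal.{0})
    (iS : Ordinal.{0} → Ordinal.{0} → Ordinal.{0} → Ordinal.{0} → Ordinal.{0}) (e x : Ordinal.{0})
    (p : List Ordinal.{0} × List Ordinal.{0}) : List Ordinal.{0} × List Ordinal.{0} :=
  let u := iS x (p.1.getLastD x) e e
  let l1 := p.1 ++ [u]
  let w := iS x (p.2.getLastD x) (σ₁ l1) e
  let l2 := p.2 ++ [w]
  let u' := iS u u (σ₁ l1) (σ₂ l2)
  let l1' := l1 ++ [u']
  let w' := iS w w (σ₁ l1') e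
  (l1', l2 ++ [w'])

/-- The auxiliary-game histories generated by a history of the main game. -/
noncomputable def Bp (σ₁ σ₂ : List Ordinal.{0} → Ordinal.{0})
    (iS : Ordinal.{0} → Ordinal.{0} → Ordinal.{0} → Ordinal.{0} → Ordinal.{0}) (e : Ordinal.{0})
    (l : List Ordinal.{0}) : List Ordinal.{0} × List Ordinal.{0} :=
  if h : l = [] then ([], [])
  else step σ₁ σ₂ iS e (l.getLastD 0) (Bp σ₁ σ₂ iS e l.dropLast)
  termination_by l.length
  decreasing_by
    have := List.length_pos_iff.2 h
    rw [List.length_dropLast]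
    omega

lemma Bp_nil (σ₁ σ₂ : List Ordinal.{0} → Ordinal.{0}) (iS) (e) :
    Bp σ₁ σ₂ iS e [] = ([], []) := by
  rw [Bp.eq_def]
  simp

lemma Bp_ne (σ₁ σ₂ : List Ordinal.{0} → Ordinal.{0}) (iS) (e) {l : List Ordinal.{0}}
    (h : l ≠ []) :
    Bp σ₁ σ₂ iS e l = step σ₁ σ₂ iS e (l.getLastD 0) (Bp σ₁ σ₂ iS e l.dropLast) := by
  rw [Bp.eq_def]
  simp [h]

/-- The key invariant-propagation step for the composed strategy. -/
lemma step_inv {L' : Language} {M1 M2 M3 : L'.Structure Ordinal} {α κo : Ordinal.{0}}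
    {X : Ordinal → Set Ordinal} {Fp : Ordinal → Set (Ordinal × Ordinal)}
    {σ₁ σ₂ : List Ordinal → Ordinal} (hα : α < κo)
    (iS : Ordinal → Ordinal → Ordinal → Ordinal → Ordinal) (e : Ordinal)
    (hiS : ∀ a b c d, a < κo → b < κo → c < κo → d < κo →
      X (iS a b c d) = X a ∪ X b ∪ Prod.snd '' Fp c ∪ Prod.fst '' Fp d)
    (hclS : ∀ a b c d, a < α → b < α → c < α → d < α → iS a b c d < α)
    (he : Fp e = ∅) (hce : e < α)
    (hw1 : IsWinRes M1 M2 α X Fp σ₁) (hw2 : IsWinRes M2 M3 α X Fp σ₂)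
    {x : Ordinal} (hx : x < α) (hX : X x ⊆ Set.Iio α)
    {p : List Ordinal × List Ordinal} (hg1 : GoodH α X p.1) (hg2 : GoodH α X p.2) :
    GoodH α X (step σ₁ σ₂ iS e x p).1 ∧ GoodH α X (step σ₁ σ₂ iS e x p).2 ∧
    (step σ₁ σ₂ iS e x p).1.length = p.1.length + 2 ∧
    (step σ₁ σ₂ iS e x p).2.length = p.2.length + 2 ∧
    (step σ₁ σ₂ iS e x p).1.dropLast.dropLast = p.1 ∧
    (step σ₁ σ₂ iS e x p).2.dropLast.dropLast = p.2 ∧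
    X x ⊆ X ((step σ₁ σ₂ iS e x p).1.dropLast.getLastD 0) ∧
    X x ⊆ X ((step σ₁ σ₂ iS e x p).2.dropLast.getLastD 0) ∧
    Prod.snd '' Fp (σ₁ (step σ₁ σ₂ iS e x p).1) ⊆
      X ((step σ₁ σ₂ iS e x p).2.getLastD 0) ∧
    Prod.fst '' Fp (σ₂ (step σ₁ σ₂ iS e x p).2.dropLast) ⊆
      X ((step σ₁ σ₂ iS e x p).1.getLastD 0) ∧
    X ((step σ₁ σ₂ iS e x p).1.dropLast.getLastD 0) ⊆
      X ((step σ₁ σ₂ iS e x p).1.getLastD 0) ∧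
    X ((step σ₁ σ₂ iS e x p).2.dropLast.getLastD 0) ⊆
      X ((step σ₁ σ₂ iS e x p).2.getLastD 0) := by
  have hκ : ∀ {a : Ordinal}, a < α → a < κo := fun h => h.trans hα
  -- previous last moves
  have hp1last : p.1.getLastD x < α ∧ X (p.1.getLastD x) ⊆ Set.Iio α := by
    rcases eq_or_ne p.1 [] with h | h
    · rw [h]; exact ⟨hx, hX⟩
    · exact hg1.1 _ (getLastD_mem h x)
  have hp2last : p.2.getLastD x < α ∧ X (p.2.getLastD x) ⊆ Set.Iio α := by
    rcases eq_or_ne p.2 [] with h | h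
    · rw [h]; exact ⟨hx, hX⟩
    · exact hg2.1 _ (getLastD_mem h x)
  -- round 2n of game 1
  set u : Ordinal := iS x (p.1.getLastD x) e e with hu
  have hXu : X u = X x ∪ X (p.1.getLastD x) := by
    rw [hu, hiS _ _ _ _ (hκ hx) (hκ hp1last.1) (hκ hce) (hκ hce), he]
    simp
  have hult : u < α := hclS _ _ _ _ hx hp1last.1 hce hce
  have hXusub : X u ⊆ Set.Iio α := by
    rw [hXu]; exact Set.union_subset hX hp1last.2
  set l1 : List Ordinal := p.1 ++ [u] with hl1
  have hgl1 : GoodH α X l1 := by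
    refine goodH_append hg1 hult hXusub fun hne => ?_
    rw [getLastD_of_ne_nil hne 0 x, hXu]
    exact Set.subset_union_right
  have hl1ne : l1 ≠ [] := by simp [hl1]
  have hl1last : l1.getLastD 0 = u := List.getLastD_concat
  obtain ⟨hs1lt, hs1sub, hs1cov1, hs1cov2, _⟩ := win_facts hw1 hl1ne hgl1
  rw [hl1last] at hs1cov1 hs1cov2
  have hsnds1 : Prod.snd '' Fp (σ₁ l1) ⊆ Set.Iio α := by
    rintro y ⟨q, hq, rfl⟩; exact (hs1sub hq).2
  -- round 2n of game 2
  set w : Ordinal := iS x (p.2.getLastD x) (σ₁ l1) e with hw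
  have hXw : X w = X x ∪ X (p.2.getLastD x) ∪ Prod.snd '' Fp (σ₁ l1) := by
    rw [hw, hiS _ _ _ _ (hκ hx) (hκ hp2last.1) (hκ hs1lt) (hκ hce), he]
    simp
  have hwlt : w < α := hclS _ _ _ _ hx hp2last.1 hs1lt hce
  have hXwsub : X w ⊆ Set.Iio α := by
    rw [hXw]
    exact Set.union_subset (Set.union_subset hX hp2last.2) hsnds1
  set l2 : List Ordinal := p.2 ++ [w] with hl2
  have hgl2 : GoodH α X l2 := by
    refine goodH_append hg2 hwlt hXwsub fun hne => ?_
    rw [getLastD_of_ne_nil hne 0 x, hXw]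
    exact (Set.subset_union_right).trans Set.subset_union_left
  have hl2ne : l2 ≠ [] := by simp [hl2]
  have hl2last : l2.getLastD 0 = w := List.getLastD_concat
  obtain ⟨hs2lt, hs2sub, hs2cov1, hs2cov2, _⟩ := win_facts hw2 hl2ne hgl2
  rw [hl2last] at hs2cov1 hs2cov2
  have hfsts2 : Prod.fst '' Fp (σ₂ l2) ⊆ Set.Iio α := by
    rintro y ⟨q, hq, rfl⟩; exact (hs2sub hq).1
  -- round 2n+1 of game 1
  set u' : Ordinal := iS u u (σ₁ l1) (σ₂ l2) with hu'
  have hXu' : X u' = X u ∪ X u ∪ Prod.snd '' Fp (σ₁ l1) ∪ Prod.fst '' Fp (σ₂ l2) := by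
    rw [hu', hiS _ _ _ _ (hκ hult) (hκ hult) (hκ hs1lt) (hκ hs2lt)]
  have hu'lt : u' < α := hclS _ _ _ _ hult hult hs1lt hs2lt
  have hXu'sub : X u' ⊆ Set.Iio α := by
    rw [hXu']
    exact Set.union_subset (Set.union_subset (Set.union_subset hXusub hXusub) hsnds1) hfsts2
  set l1' : List Ordinal := l1 ++ [u'] with hl1'
  have hgl1' : GoodH α X l1' := by
    refine goodH_append hgl1 hu'lt hXu'sub fun _ => ?_
    rw [hl1last, hXu']
    exact (Set.subset_union_left).trans ((Set.subset_union_left).trans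
      ((Set.subset_union_left).trans subset_rfl))
  have hl1'ne : l1' ≠ [] := by simp [hl1']
  have hl1'last : l1'.getLastD 0 = u' := List.getLastD_concat
  obtain ⟨hs1'lt, hs1'sub, hs1'cov1, hs1'cov2, _⟩ := win_facts hw1 hl1'ne hgl1'
  rw [hl1'last] at hs1'cov1 hs1'cov2
  have hsnds1' : Prod.snd '' Fp (σ₁ l1') ⊆ Set.Iio α := by
    rintro y ⟨q, hq, rfl⟩; exact (hs1'sub hq).2
  -- round 2n+1 of game 2
  set w' : Ordinal := iS w w (σ₁ l1') e with hw'
  have hXw' : X w' = X w ∪ X w ∪ Prod.snd '' Fp (σ₁ l1') := by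
    rw [hw', hiS _ _ _ _ (hκ hwlt) (hκ hwlt) (hκ hs1'lt) (hκ hce), he]
    simp
  have hw'lt : w' < α := hclS _ _ _ _ hwlt hwlt hs1'lt hce
  have hXw'sub : X w' ⊆ Set.Iio α := by
    rw [hXw']
    exact Set.union_subset (Set.union_subset hXwsub hXwsub) hsnds1'
  set l2' : List Ordinal := l2 ++ [w'] with hl2'
  have hgl2' : GoodH α X l2' := by
    refine goodH_append hgl2 hw'lt hXw'sub fun _ => ?_
    rw [hl2last, hXw']
    exact (Set.subset_union_left).trans Set.subset_union_left
  -- identify the result of `step`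
  have hstep : step σ₁ σ₂ iS e x p = (l1', l2') := rfl
  rw [hstep]
  have hd1 : l1'.dropLast = l1 := List.dropLast_concat
  have hd2 : l2'.dropLast = l2 := List.dropLast_concat
  have hl2'last : l2'.getLastD 0 = w' := List.getLastD_concat
  refine ⟨hgl1', hgl2', ?_, ?_, ?_, ?_, ?_, ?_, ?_, ?_, ?_, ?_⟩
  · simp [hl1', hl1]
  · simp [hl2', hl2]
  · rw [hd1, hl1, List.dropLast_concat]
  · rw [hd2, hl2, List.dropLast_concat]
  · rw [hd1, hl1last, hXu]
    exact Set.subset_union_left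
  · rw [hd2, hl2last, hXw]
    exact Set.subset_union_left.trans Set.subset_union_left
  · rw [hl2'last, hXw']
    exact Set.subset_union_right
  · rw [hd2, hl1'last, hXu']
    exact Set.subset_union_right
  · rw [hd1, hl1last, hl1'last, hXu']
    exact fun y hy => Set.subset_union_left (Set.subset_union_left
      (Set.subset_union_left hy))
  · rw [hd2, hl2last, hl2'last, hXw']
    exact fun y hy => Set.subset_union_left (Set.subset_union_left hy)

lemma getD_of_dropLast_dropLast {l l' : List Ordinal.{0}} (h : l.dropLast.dropLast = l')
    {m : ℕ} (hm : m < l'.length) : l.getD m 0 = l'.getD m 0 := by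
  subst h
  have h1 : m < l.dropLast.length := lt_of_lt_of_le hm (by rw [List.length_dropLast]; omega)
  have h2 : m < l.length := lt_of_lt_of_le h1 (by rw [List.length_dropLast]; omega)
  rw [List.getD_eq_getElem _ _ h2, List.getD_eq_getElem _ _ hm,
    List.getElem_dropLast, List.getElem_dropLast]

lemma trans_win {L' : Language} {M1 M2 M3 : L'.Structure Ordinal} {α κo : Ordinal.{0}}
    {X : Ordinal → Set Ordinal} {Fp : Ordinal → Set (Ordinal × Ordinal)}
    {σ₁ σ₂ : List Ordinal → Ordinal} (hα : α < κo)
    (iS : Ordinal → Ordinal → Ordinal → Ordinal → Ordinal) (iC : Ordinal → Ordinal → Ordinal)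
    (e : Ordinal)
    (hiS : ∀ a b c d, a < κo → b < κo → c < κo → d < κo →
      X (iS a b c d) = X a ∪ X b ∪ Prod.snd '' Fp c ∪ Prod.fst '' Fp d)
    (hiC : ∀ a b, a < κo → b < κo → Fp (iC a b) = comp2 (Fp a) (Fp b))
    (hclS : ∀ a b c d, a < α → b < α → c < α → d < α → iS a b c d < α)
    (hclC : ∀ a b, a < α → b < α → iC a b < α)
    (he : Fp e = ∅) (hce : e < α)
    (hw1 : IsWinRes M1 M2 α X Fp σ₁) (hw2 : IsWinRes M2 M3 α X Fp σ₂) :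
    IsWinRes M1 M3 α X Fp
      (fun l => iC (σ₁ (Bp σ₁ σ₂ iS e l).1) (σ₂ (Bp σ₁ σ₂ iS e l).2)) := by
  intro β hβ
  set P : ℕ → List Ordinal × List Ordinal := fun n => Bp σ₁ σ₂ iS e (histMoves β n)
    with hPdef
  have hP0 : P 0 = step σ₁ σ₂ iS e (β 0) ([], []) := by
    rw [hPdef]
    simp only
    rw [Bp_ne _ _ _ _ (histMoves_ne_nil β 0), histMoves_getLastD, histMoves_zero]
    simp [Bp_nil]
  have hPS : ∀ n, P (n + 1) = step σ₁ σ₂ iS e (β (n + 1)) (P n) := by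
    intro n
    rw [hPdef]
    simp only
    rw [Bp_ne _ _ _ _ (histMoves_ne_nil β (n + 1)), histMoves_getLastD, histMoves_dropLast]
  -- the basic invariant
  have key : ∀ n, GoodH α X (P n).1 ∧ GoodH α X (P n).2 ∧
      (P n).1.length = 2 * n + 2 ∧ (P n).2.length = 2 * n + 2 := by
    intro n
    induction n with
    | zero =>
      rw [hP0]
      have h := step_inv hα iS e hiS hclS he hce hw1 hw2 (hβ 0).1 (hβ 0).2.1
        (p := ([], [])) goodH_nil goodH_nil
      exact ⟨h.1, h.2.1, by rw [h.2.2.1]; rfl, by rw [h.2.2.2.1]; rfl⟩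
    | succ n ih =>
      rw [hPS n]
      have h := step_inv hα iS e hiS hclS he hce hw1 hw2 (hβ (n+1)).1 (hβ (n+1)).2.1
        ih.1 ih.2.1
      refine ⟨h.1, h.2.1, ?_, ?_⟩
      · rw [h.2.2.1, ih.2.2.1]; ring
      · rw [h.2.2.2.1, ih.2.2.2]; ring
  -- full step-invariant facts at each round
  have SI : ∀ n,
      (P n).1.dropLast.dropLast = (if n = 0 then ([], []) else P (n-1)).1 ∧
      (P n).2.dropLast.dropLast = (if n = 0 then ([], []) else P (n-1)).2 ∧
      X (β n) ⊆ X ((P n).1.dropLast.getLastD 0) ∧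
      X (β n) ⊆ X ((P n).2.dropLast.getLastD 0) ∧
      Prod.snd '' Fp (σ₁ (P n).1) ⊆ X ((P n).2.getLastD 0) ∧
      Prod.fst '' Fp (σ₂ (P n).2.dropLast) ⊆ X ((P n).1.getLastD 0) ∧
      X ((P n).1.dropLast.getLastD 0) ⊆ X ((P n).1.getLastD 0) ∧
      X ((P n).2.dropLast.getLastD 0) ⊆ X ((P n).2.getLastD 0) := by
    intro n
    cases n with
    | zero =>
      rw [hP0]
      have h := step_inv hα iS e hiS hclS he hce hw1 hw2 (hβ 0).1 (hβ 0).2.1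
        (p := ([], [])) goodH_nil goodH_nil
      simpa using h.2.2.2.2
    | succ n =>
      rw [hPS n]
      have h := step_inv hα iS e hiS hclS he hce hw1 hw2 (hβ (n+1)).1 (hβ (n+1)).2.1
        (key n).1 (key n).2.1
      simpa using h.2.2.2.2
  -- facts from the two winning strategies about the (odd and even) histories
  have hne1 : ∀ n, (P n).1 ≠ [] := fun n => by
    have := (key n).2.2.1
    intro h; rw [h] at this; simp at this
  have hne2 : ∀ n, (P n).2 ≠ [] := fun n => by
    have := (key n).2.2.2
    intro h; rw [h] at this; simp at this
  have hlen1d : ∀ n, (P n).1.dropLast.length = 2 * n + 1 := fun n => by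
    rw [List.length_dropLast, (key n).2.2.1]
    omega
  have hlen2d : ∀ n, (P n).2.dropLast.length = 2 * n + 1 := fun n => by
    rw [List.length_dropLast, (key n).2.2.2]
    omega
  have hne1d : ∀ n, (P n).1.dropLast ≠ [] := fun n => by
    have := hlen1d n; intro h; rw [h] at this; simp at this
  have hne2d : ∀ n, (P n).2.dropLast ≠ [] := fun n => by
    have := hlen2d n; intro h; rw [h] at this; simp at this
  have W1o := fun n => win_facts hw1 (hne1 n) (key n).1
  have W2o := fun n => win_facts hw2 (hne2 n) (key n).2.1
  have W1e := fun n => win_facts hw1 (hne1d n) (goodH_dropLast (key n).1)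
  have W2e := fun n => win_facts hw2 (hne2d n) (goodH_dropLast (key n).2.1)
  -- the cross-round monotonicity chains
  have hmono1 : ∀ n, Fp (σ₁ (P n).1) ⊆ Fp (σ₁ (P (n+1)).1) := by
    intro n
    have h1 : (P (n+1)).1.dropLast.dropLast = (P n).1 := by
      have := (SI (n+1)).1; simpa using this
    have h2 := (W1e (n+1)).2.2.2.2 (by rw [hlen1d]; omega)
    rw [h1] at h2
    exact h2.trans ((W1o (n+1)).2.2.2.2 (by rw [(key (n+1)).2.2.1]; omega))
  have hmono2 : ∀ n, Fp (σ₂ (P n).2) ⊆ Fp (σ₂ (P (n+1)).2) := by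
    intro n
    have h1 : (P (n+1)).2.dropLast.dropLast = (P n).2 := by
      have := (SI (n+1)).2.1; simpa using this
    have h2 := (W2e (n+1)).2.2.2.2 (by rw [hlen2d]; omega)
    rw [h1] at h2
    exact h2.trans ((W2o (n+1)).2.2.2.2 (by rw [(key (n+1)).2.2.2]; omega))
  -- the composed responses
  have hθ : ∀ n, Fp (iC (σ₁ (P n).1) (σ₂ (P n).2)) =
      comp2 (Fp (σ₁ (P n).1)) (Fp (σ₂ (P n).2)) := fun n =>
    hiC _ _ ((W1o n).1.trans hα) ((W2o n).1.trans hα)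
  constructor
  · -- legality of the composed responses
    intro n
    refine ⟨hclC _ _ (W1o n).1 (W2o n).1, ?_, ?_, ?_, ?_⟩
    · show Fp (iC (σ₁ (P n).1) (σ₂ (P n).2)) ⊆ _
      rw [hθ n]
      rintro ⟨a, c⟩ ⟨y, h1, h2⟩
      exact ⟨((W1o n).2.1 h1).1, ((W2o n).2.1 h2).2⟩
    · show X (β n) ⊆ Prod.fst '' Fp (iC (σ₁ (P n).1) (σ₂ (P n).2))
      rw [hθ n]
      intro x hx
      have hx1 : x ∈ X ((P n).1.getLastD 0) :=
        (SI n).2.2.2.2.2.2.1 ((SI n).2.2.1 hx)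
      obtain ⟨q, hf, hq⟩ := (W1o n).2.2.1 hx1
      have hf' : (x, q.2) ∈ Fp (σ₁ (P n).1) := by
        rw [← hq]; simpa using hf
      have hy : q.2 ∈ X ((P n).2.getLastD 0) := (SI n).2.2.2.2.1 ⟨q, hf, rfl⟩
      obtain ⟨r, hg, hr⟩ := (W2o n).2.2.1 hy
      have hg' : (q.2, r.2) ∈ Fp (σ₂ (P n).2) := by
        rw [← hr]; simpa using hg
      exact ⟨(x, r.2), ⟨q.2, hf', hg'⟩, rfl⟩
    · show X (β n) ⊆ Prod.snd '' Fp (iC (σ₁ (P n).1) (σ₂ (P n).2))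
      rw [hθ n]
      intro x hx
      have hx2 : x ∈ X ((P n).2.dropLast.getLastD 0) := (SI n).2.2.2.1 hx
      obtain ⟨q, hg, hq⟩ := (W2e n).2.2.2.1 hx2
      have hg' : (q.1, x) ∈ Fp (σ₂ (P n).2.dropLast) := by
        rw [← hq]; simpa using hg
      have hgo : (q.1, x) ∈ Fp (σ₂ (P n).2) :=
        (W2o n).2.2.2.2 (by rw [(key n).2.2.2]; omega) hg'
      have hb : q.1 ∈ X ((P n).1.getLastD 0) := (SI n).2.2.2.2.2.1 ⟨q, hg, rfl⟩
      obtain ⟨r, hf, hr⟩ := (W1o n).2.2.2.1 hb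
      have hf' : (r.1, q.1) ∈ Fp (σ₁ (P n).1) := by
        rw [← hr]; simpa using hf
      exact ⟨(r.1, x), ⟨q.1, hf', hgo⟩, rfl⟩
    · rintro m rfl
      show Fp (iC (σ₁ (P m).1) (σ₂ (P m).2)) ⊆ Fp (iC (σ₁ (P (m+1)).1) (σ₂ (P (m+1)).2))
      rw [hθ m, hθ (m+1)]
      exact comp2_mono (hmono1 m) (hmono2 m)
  · -- the union is a partial isomorphism
    -- stability of the auxiliary histories
    have stab1 : ∀ n k m, m < 2 * n + 2 → (P (n + k)).1.getD m 0 = (P n).1.getD m 0 := by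
      intro n k
      induction k with
      | zero => intro m _; rfl
      | succ k ih =>
        intro m hm
        have h1 : (P (n + k + 1)).1.dropLast.dropLast = (P (n + k)).1 := by
          have := (SI (n + k + 1)).1; simpa using this
        rw [show n + (k+1) = (n + k) + 1 by omega,
          getD_of_dropLast_dropLast h1 (by rw [(key (n+k)).2.2.1]; omega), ih m hm]
    have stab2 : ∀ n k m, m < 2 * n + 2 → (P (n + k)).2.getD m 0 = (P n).2.getD m 0 := by
      intro n k
      induction k with
      | zero => intro m _; rfl
      | succ k ih =>
        intro m hm
        have h1 : (P (n + k + 1)).2.dropLast.dropLast = (P (n + k)).2 := by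
          have := (SI (n + k + 1)).2.1; simpa using this
        rw [show n + (k+1) = (n + k) + 1 by omega,
          getD_of_dropLast_dropLast h1 (by rw [(key (n+k)).2.2.2]; omega), ih m hm]
    set b1 : ℕ → Ordinal := fun m => (P m).1.getD m 0 with hb1
    set b2 : ℕ → Ordinal := fun m => (P m).2.getD m 0 with hb2
    have hb1n : ∀ n m, m ≤ 2 * n + 1 → (P n).1.getD m 0 = b1 m := by
      intro n m hm
      rcases le_total n m with h | h
      · rw [hb1]
        simp only
        rw [show m = n + (m - n) by omega] at hm ⊢
        rw [stab1 n (m - n) _ (by omega)]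
      · rw [hb1]
        simp only
        rw [show n = m + (n - m) by omega, stab1 m (n - m) m (by omega)]
    have hb2n : ∀ n m, m ≤ 2 * n + 1 → (P n).2.getD m 0 = b2 m := by
      intro n m hm
      rcases le_total n m with h | h
      · rw [hb2]
        simp only
        rw [show m = n + (m - n) by omega] at hm ⊢
        rw [stab2 n (m - n) _ (by omega)]
      · rw [hb2]
        simp only
        rw [show n = m + (n - m) by omega, stab2 m (n - m) m (by omega)]
    have hist1 : ∀ n m, m ≤ 2 * n + 1 → histMoves b1 m = (P n).1.take (m + 1) := by
      intro n m hm
      apply List.ext_getElem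
      · rw [histMoves_length, List.length_take, (key n).2.2.1]; omega
      · intro i h1 h2
        rw [histMoves_getElem, List.getElem_take]
        rw [histMoves_length] at h1
        rw [← hb1n n i (by omega), List.getD_eq_getElem _ _ (by rw [(key n).2.2.1]; omega)]
    have hist2 : ∀ n m, m ≤ 2 * n + 1 → histMoves b2 m = (P n).2.take (m + 1) := by
      intro n m hm
      apply List.ext_getElem
      · rw [histMoves_length, List.length_take, (key n).2.2.2]; omega
      · intro i h1 h2
        rw [histMoves_getElem, List.getElem_take]
        rw [histMoves_length] at h1
        rw [← hb2n n i (by omega), List.getD_eq_getElem _ _ (by rw [(key n).2.2.2]; omega)]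
    have hist1o : ∀ n, histMoves b1 (2 * n + 1) = (P n).1 := by
      intro n
      rw [hist1 n _ le_rfl, show 2*n+1+1 = (P n).1.length by rw [(key n).2.2.1],
        List.take_length]
    have hist2o : ∀ n, histMoves b2 (2 * n + 1) = (P n).2 := by
      intro n
      rw [hist2 n _ le_rfl, show 2*n+1+1 = (P n).2.length by rw [(key n).2.2.2],
        List.take_length]
    -- legality of b1 and b2
    have hleg1 : ∀ m, ILegalResAt α X b1 m := by
      intro m
      have hmem : b1 m ∈ (P m).1 := by
        rw [hb1]
        simp only
        rw [List.getD_eq_getElem _ _ (by rw [(key m).2.2.1]; omega)]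
        exact List.getElem_mem _
      refine ⟨((key m).1.1 _ hmem).1, ((key m).1.1 _ hmem).2, ?_⟩
      rintro m' rfl
      rw [← hb1n m' _ (by omega), ← hb1n m' (m'+1) (by omega)]
      rw [List.getD_eq_getElem _ _ (by rw [(key m').2.2.1]; omega),
        List.getD_eq_getElem _ _ (by rw [(key m').2.2.1]; omega)]
      have := List.isChain_iff_getElem.1 (key m').1.2 m' (by rw [(key m').2.2.1]; omega)
      simpa [List.get_eq_getElem] using this
    have hleg2 : ∀ m, ILegalResAt α X b2 m := by
      intro m
      have hmem : b2 m ∈ (P m).2 := by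
        rw [hb2]
        simp only
        rw [List.getD_eq_getElem _ _ (by rw [(key m).2.2.2]; omega)]
        exact List.getElem_mem _
      refine ⟨((key m).2.1.1 _ hmem).1, ((key m).2.1.1 _ hmem).2, ?_⟩
      rintro m' rfl
      rw [← hb2n m' _ (by omega), ← hb2n m' (m'+1) (by omega)]
      rw [List.getD_eq_getElem _ _ (by rw [(key m').2.2.2]; omega),
        List.getD_eq_getElem _ _ (by rw [(key m').2.2.2]; omega)]
      have := List.isChain_iff_getElem.1 (key m').2.1.2 m' (by rw [(key m').2.2.2]; omega)
      simpa [List.get_eq_getElem] using this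
    obtain ⟨_, hiso1⟩ := hw1 b1 hleg1
    obtain ⟨_, hiso2⟩ := hw2 b2 hleg2
    refine isPartialIso_mono (isPartialIso_comp hiso1 hiso2) ?_
    intro p hp
    obtain ⟨n, hn⟩ := Set.mem_iUnion.1 hp
    have hn' : p ∈ comp2 (Fp (σ₁ (P n).1)) (Fp (σ₂ (P n).2)) := by
      rw [← hθ n]; exact hn
    obtain ⟨y, h1, h2⟩ := hn'
    refine ⟨y, Set.mem_iUnion.2 ⟨2*n+1, ?_⟩, Set.mem_iUnion.2 ⟨2*n+1, ?_⟩⟩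
    · rw [hist1o n]; exact h1
    · rw [hist2o n]; exact h2

end Aux

/-- For a complete first-order theory `T` in a countable relational vocabulary,
there are club-many `α < κ` such that `R_EF^α` is an equivalence relation. -/
theorem REF_equivalence_club (κ : Cardinal.{0}) (hκ : κ.IsRegular) (hκω : ℵ₀ < κ)
    (hκpow : ∀ lam < κ, ℵ₀ ≤ lam → κ ^ lam = κ)
    (ar : ℕ → ℕ) (π : ℕ × List Ordinal → Ordinal)
    (hπlt : ∀ (m : ℕ) (l : List Ordinal), (∀ x ∈ l, x < κ.ord) → π (m, l) < κ.ord)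
    (hπinj : Function.Injective π)
    (hπsurj : ∀ β < κ.ord, ∃ (m : ℕ) (l : List Ordinal), (∀ x ∈ l, x < κ.ord) ∧ π (m, l) = β)
    (T : (Lang ar).Theory) (hT : T.IsComplete)
    (X : Ordinal → Set Ordinal) (Fp : Ordinal → Set (Ordinal × Ordinal))
    (hEnum : GoodEnum κ X Fp) :
    ∃ C : Set Ordinal, IsClubIn κ C ∧
      ∀ α ∈ C, Equivalence (REF ar π T X Fp α) := by
  classical
  obtain ⟨hXp, hXsur, hFprop, hFsur⟩ := hEnum
  have hκo : (0 : Ordinal) < κ.ord := by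
    rw [Cardinal.lt_ord, Ordinal.card_zero]
    exact hκ.pos
  have haleph : ℵ₀ ≤ Cardinal.lift.{1} κ := Cardinal.aleph0_le_lift.2 hκ.aleph0_le
  have hUn : ∀ s t : Set Ordinal, #s < Cardinal.lift.{1} κ → #t < Cardinal.lift.{1} κ →
      #(↥(s ∪ t)) < Cardinal.lift.{1} κ := fun s t hs ht =>
    lt_of_le_of_lt (Cardinal.mk_union_le s t) (Cardinal.add_lt_of_lt haleph hs ht)
  -- index of the empty partial function
  obtain ⟨e0, he0lt, he0⟩ := hFsur ∅ (Set.empty_subset _)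
    (by rw [Cardinal.mk_emptyCollection]; exact lt_of_lt_of_le Cardinal.aleph0_pos haleph)
    (by simp)
  -- index function for identity graphs
  have hId0 : ∀ γ, ∃ δ, δ < κ.ord ∧ (γ < κ.ord → Fp δ = idg (X γ)) := by
    intro γ
    by_cases h : γ < κ.ord
    · obtain ⟨hsub, hcard⟩ := hXp γ h
      have h1 : idg (X γ) ⊆ (Set.Iio κ.ord) ×ˢ (Set.Iio κ.ord) := by
        rintro p hp
        obtain ⟨h1, h2⟩ := mem_idg.1 hp
        exact ⟨hsub h1, by rw [h2]; exact hsub h1⟩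
      have h2 : #(idg (X γ)) < Cardinal.lift.{1} κ := by
        rw [idg, Cardinal.mk_image_eq (fun a b hab => (Prod.ext_iff.1 hab).1)]
        exact hcard
      have h3 : ∀ p ∈ idg (X γ), ∀ q ∈ idg (X γ), p.1 = q.1 → p.2 = q.2 := by
        rintro p hp q hq hh
        rw [(mem_idg.1 hp).2, (mem_idg.1 hq).2, hh]
      obtain ⟨δ, hδ, hFδ⟩ := hFsur _ h1 h2 h3
      exact ⟨δ, hδ, fun _ => hFδ⟩
    · exact ⟨e0, he0lt, fun h' => absurd h' h⟩
  choose iI hiI using hId0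
  -- index function for swapped graphs
  have hSw0 : ∀ γ, ∃ δ, δ < κ.ord ∧ (γ < κ.ord →
      (∀ p ∈ Fp γ, ∀ q ∈ Fp γ, p.2 = q.2 → p.1 = q.1) → Fp δ = Prod.swap '' Fp γ) := by
    intro γ
    by_cases h : γ < κ.ord ∧ ∀ p ∈ Fp γ, ∀ q ∈ Fp γ, p.2 = q.2 → p.1 = q.1
    · obtain ⟨hγ, hinj⟩ := h
      obtain ⟨hsub, hcard, hfun⟩ := hFprop γ hγ
      have h1 : Prod.swap '' Fp γ ⊆ (Set.Iio κ.ord) ×ˢ (Set.Iio κ.ord) := by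
        rintro p hp
        have := hsub (mem_swap_image.1 hp)
        exact ⟨this.2, this.1⟩
      have h2 : #(Prod.swap '' Fp γ) < Cardinal.lift.{1} κ :=
        Cardinal.mk_image_le.trans_lt hcard
      have h3 : ∀ p ∈ Prod.swap '' Fp γ, ∀ q ∈ Prod.swap '' Fp γ,
          p.1 = q.1 → p.2 = q.2 := by
        rintro p hp q hq hh
        exact hinj _ (mem_swap_image.1 hp) _ (mem_swap_image.1 hq) hh
      obtain ⟨δ, hδ, hFδ⟩ := hFsur _ h1 h2 h3
      exact ⟨δ, hδ, fun _ _ => hFδ⟩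
    · exact ⟨e0, he0lt, fun h1 h2 => absurd ⟨h1, h2⟩ h⟩
  choose iW hiW using hSw0
  -- index function for compositions
  have hC0 : ∀ γ δ, ∃ ε, ε < κ.ord ∧
      (γ < κ.ord → δ < κ.ord → Fp ε = comp2 (Fp γ) (Fp δ)) := by
    intro γ δ
    by_cases h : γ < κ.ord ∧ δ < κ.ord
    · obtain ⟨hγ, hδ⟩ := h
      obtain ⟨hsub1, hcard1, hfun1⟩ := hFprop γ hγ
      obtain ⟨hsub2, hcard2, hfun2⟩ := hFprop δ hδ
      have h1 : comp2 (Fp γ) (Fp δ) ⊆ (Set.Iio κ.ord) ×ˢ (Set.Iio κ.ord) := by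
        rintro p ⟨y, hy1, hy2⟩
        exact ⟨(hsub1 hy1).1, (hsub2 hy2).2⟩
      have hfun : ∀ p ∈ comp2 (Fp γ) (Fp δ), ∀ q ∈ comp2 (Fp γ) (Fp δ),
          p.1 = q.1 → p.2 = q.2 := by
        rintro p ⟨y, hp1, hp2⟩ q ⟨z, hq1, hq2⟩ hh
        have hyz : y = z := hfun1 (p.1, y) hp1 (q.1, z) hq1 hh
        exact hfun2 (y, p.2) hp2 (z, q.2) hq2 hyz
      have hinj : Set.InjOn Prod.fst (comp2 (Fp γ) (Fp δ)) := fun p hp q hq hh =>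
        Prod.ext hh (hfun p hp q hq hh)
      have h2 : #(comp2 (Fp γ) (Fp δ)) < Cardinal.lift.{1} κ := by
        rw [← Cardinal.mk_image_eq_of_injOn _ _ hinj]
        have hsubim : Prod.fst '' comp2 (Fp γ) (Fp δ) ⊆ Prod.fst '' Fp γ := by
          rintro x ⟨p, ⟨y, hy1, _⟩, rfl⟩
          exact ⟨(p.1, y), hy1, rfl⟩
        exact lt_of_le_of_lt (Cardinal.mk_le_mk_of_subset hsubim)
          ((Cardinal.mk_image_le (f := (Prod.fst : Ordinal.{0} × Ordinal.{0} → Ordinal.{0})) (s := Fp γ)).trans_lt hcard1)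
      obtain ⟨ε, hε, hFε⟩ := hFsur _ h1 h2 hfun
      exact ⟨ε, hε, fun _ _ => hFε⟩
    · exact ⟨e0, he0lt, fun h1 h2 => absurd ⟨h1, h2⟩ h⟩
  choose iC hiC using hC0
  -- index function for union sets
  have hS0 : ∀ a b c d, ∃ ε, ε < κ.ord ∧ (a < κ.ord → b < κ.ord → c < κ.ord → d < κ.ord →
      X ε = X a ∪ X b ∪ Prod.snd '' Fp c ∪ Prod.fst '' Fp d) := by
    intro a b c d
    by_cases h : a < κ.ord ∧ b < κ.ord ∧ c < κ.ord ∧ d < κ.ord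
    · obtain ⟨ha, hb, hc, hd⟩ := h
      obtain ⟨hsuba, hcarda⟩ := hXp a ha
      obtain ⟨hsubb, hcardb⟩ := hXp b hb
      obtain ⟨hsubc, hcardc, _⟩ := hFprop c hc
      obtain ⟨hsubd, hcardd, _⟩ := hFprop d hd
      have h1 : X a ∪ X b ∪ Prod.snd '' Fp c ∪ Prod.fst '' Fp d ⊆ Set.Iio κ.ord := by
        refine Set.union_subset (Set.union_subset (Set.union_subset hsuba hsubb) ?_) ?_
        · rintro y ⟨q, hq, rfl⟩; exact (hsubc hq).2
        · rintro y ⟨q, hq, rfl⟩; exact (hsubd hq).1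
      have h2 : #(↥(X a ∪ X b ∪ Prod.snd '' Fp c ∪ Prod.fst '' Fp d)) <
          Cardinal.lift.{1} κ := by
        refine hUn _ _ (hUn _ _ (hUn _ _ hcarda hcardb) ?_) ?_
        · exact Cardinal.mk_image_le.trans_lt hcardc
        · exact Cardinal.mk_image_le.trans_lt hcardd
      obtain ⟨ε, hε, hXε⟩ := hXsur _ h1 h2
      exact ⟨ε, hε, fun _ _ _ _ => hXε⟩
    · exact ⟨0, hκo, fun h1 h2 h3 h4 => absurd ⟨h1, h2, h3, h4⟩ h⟩
  choose iS hiS using hS0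
  -- the closure function and the club
  set Hf : Ordinal → Ordinal → Ordinal → Ordinal → Ordinal := fun a b c d =>
    max (max (max (iI a) (iW a)) (max (iC a b) (iS a b c d))) e0 with hHf
  have hHflt : ∀ a b c d, Hf a b c d < κ.ord := fun a b c d => by
    rw [hHf]
    simp only [max_lt_iff]
    exact ⟨⟨⟨(hiI a).1, (hiW a).1⟩, (hiC a b).1, (hiS a b c d).1⟩, he0lt⟩
  set Cs : Set Ordinal := {α | α < κ.ord ∧ 0 < α ∧
    ∀ a < α, ∀ b < α, ∀ c < α, ∀ d < α, Hf a b c d < α} with hCs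
  have hHf1 : ∀ a b c d, iI a ≤ Hf a b c d := fun a b c d =>
    le_max_of_le_left (le_max_of_le_left (le_max_left _ _))
  have hHf2 : ∀ a b c d, iW a ≤ Hf a b c d := fun a b c d =>
    le_max_of_le_left (le_max_of_le_left (le_max_right _ _))
  have hHf3 : ∀ a b c d, iC a b ≤ Hf a b c d := fun a b c d =>
    le_max_of_le_left (le_max_of_le_right (le_max_left _ _))
  have hHf4 : ∀ a b c d, iS a b c d ≤ Hf a b c d := fun a b c d =>
    le_max_of_le_left (le_max_of_le_right (le_max_right _ _))
  have hHf5 : ∀ a b c d, e0 ≤ Hf a b c d := fun a b c d => le_max_right _ _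
  have hcl : ∀ α ∈ Cs, e0 < α ∧ (∀ a < α, iI a < α ∧ iW a < α) ∧
      (∀ a < α, ∀ b < α, iC a b < α) ∧
      (∀ a < α, ∀ b < α, ∀ c < α, ∀ d < α, iS a b c d < α) := by
    intro α hα
    obtain ⟨hα1, hα2, hα3⟩ := hα
    refine ⟨lt_of_le_of_lt (hHf5 0 0 0 0) (hα3 0 hα2 0 hα2 0 hα2 0 hα2), ?_, ?_, ?_⟩
    · intro a ha
      exact ⟨lt_of_le_of_lt (hHf1 a 0 0 0) (hα3 a ha 0 hα2 0 hα2 0 hα2),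
        lt_of_le_of_lt (hHf2 a 0 0 0) (hα3 a ha 0 hα2 0 hα2 0 hα2)⟩
    · intro a ha b hb
      exact lt_of_le_of_lt (hHf3 a b 0 0) (hα3 a ha b hb 0 hα2 0 hα2)
    · intro a ha b hb c hc d hd
      exact lt_of_le_of_lt (hHf4 a b c d) (hα3 a ha b hb c hc d hd)
  have hCsub : ∀ α ∈ Cs, α < κ.ord := fun α hα => hα.1
  refine ⟨Cs, ⟨fun α hα => hα.1, ?_, ?_⟩, ?_⟩
  · -- unboundedness
    intro β0 hβ0
    have hcof : κ.ord.cof = κ := hκ.cof_eq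
    set N : Ordinal → Ordinal := fun x => Ordinal.blsub x fun a _ =>
      Ordinal.blsub x fun b _ => Ordinal.blsub x fun c _ =>
      Ordinal.blsub x fun d _ => Hf a b c d with hN
    have hxcard : ∀ x < κ.ord, x.card < κ.ord.cof := by
      intro x hx; rw [hcof]; exact Cardinal.lt_ord.1 hx
    have hNlt : ∀ x < κ.ord, N x < κ.ord := by
      intro x hx
      rw [hN]
      refine Ordinal.blsub_lt_ord (hxcard x hx) fun a _ => ?_
      refine Ordinal.blsub_lt_ord (hxcard x hx) fun b _ => ?_
      refine Ordinal.blsub_lt_ord (hxcard x hx) fun c _ => ?_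
      exact Ordinal.blsub_lt_ord (hxcard x hx) fun d _ => hHflt a b c d
    have hNgt : ∀ x a b c d, a < x → b < x → c < x → d < x → Hf a b c d < N x := by
      intro x a b c d ha hb hc hd
      rw [hN]
      refine lt_trans (lt_trans (lt_trans
        (Ordinal.lt_blsub (fun d _ => Hf a b c d) d hd)
        (Ordinal.lt_blsub (fun c _ => Ordinal.blsub x fun d _ => Hf a b c d) c hc))
        (Ordinal.lt_blsub (fun b _ => Ordinal.blsub x fun c _ =>
          Ordinal.blsub x fun d _ => Hf a b c d) b hb))
        (Ordinal.lt_blsub _ a ha)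
    set aseq : ℕ → Ordinal := fun k => Nat.rec (β0 + 1) (fun _ x => max (x + 1) (N x)) k
      with haseq
    have ha0 : aseq 0 = β0 + 1 := rfl
    have haS : ∀ k, aseq (k + 1) = max (aseq k + 1) (N (aseq k)) := fun k => rfl
    have hlim := Cardinal.isSuccLimit_ord hκ.aleph0_le
    have hsucclt : ∀ x, x < κ.ord → x + 1 < κ.ord := by
      intro x hx
      rw [Ordinal.add_one_eq_succ]
      exact hlim.succ_lt hx
    have haklt : ∀ k, aseq k < κ.ord := by
      intro k
      induction k with
      | zero => rw [ha0]; exact hsucclt _ hβ0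
      | succ k ih => rw [haS]; exact max_lt (hsucclt _ ih) (hNlt _ ih)
    have hlt1 : ∀ x : Ordinal, x < x + 1 := fun x => by
      rw [Ordinal.add_one_eq_succ]; exact Order.lt_succ _
    have hamono : StrictMono aseq := strictMono_nat_of_lt_succ fun k => by
      rw [haS]; exact lt_max_of_lt_left (hlt1 _)
    have hAlt' : (⨆ k : ℕ, aseq k) < κ.ord := by
      refine Ordinal.iSup_lt_ord_lift (f := aseq) ?_ haklt
      rw [hcof]
      simpa using hκω
    have hle : ∀ k, aseq k ≤ ⨆ k : ℕ, aseq k := fun k => Ordinal.le_iSup aseq k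
    refine ⟨⨆ k : ℕ, aseq k, ⟨hAlt', ?_, ?_⟩, ?_⟩
    · exact lt_of_le_of_lt (zero_le (a := β0))
        (lt_of_lt_of_le (ha0 ▸ hlt1 β0) (hle 0))
    · intro a ha b hb c hc d hd
      obtain ⟨ia, hia⟩ := Ordinal.lt_iSup_iff.1 ha
      obtain ⟨ib, hib⟩ := Ordinal.lt_iSup_iff.1 hb
      obtain ⟨ic, hic⟩ := Ordinal.lt_iSup_iff.1 hc
      obtain ⟨id', hid⟩ := Ordinal.lt_iSup_iff.1 hd
      set km := max (max ia ib) (max ic id') with hkm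
      have hka : a < aseq km := lt_of_lt_of_le hia (hamono.monotone (by omega))
      have hkb : b < aseq km := lt_of_lt_of_le hib (hamono.monotone (by omega))
      have hkc : c < aseq km := lt_of_lt_of_le hic (hamono.monotone (by omega))
      have hkd : d < aseq km := lt_of_lt_of_le hid (hamono.monotone (by omega))
      refine lt_of_lt_of_le (hNgt _ _ _ _ _ hka hkb hkc hkd) ?_
      refine le_trans ?_ (hle (km + 1))
      rw [haS]
      exact le_max_right _ _
    · exact lt_of_lt_of_le (ha0 ▸ hlt1 β0) (hle 0)
  · -- closure under suprema
    intro B hBC hBne hBlt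
    have hBdd : BddAbove B := ⟨κ.ord, fun x hx => (hBC hx).1.le⟩
    refine ⟨hBlt, ?_, ?_⟩
    · obtain ⟨b0, hb0⟩ := hBne
      exact lt_of_lt_of_le (hBC hb0).2.1 (le_csSup hBdd hb0)
    · intro a ha b hb c hc d hd
      obtain ⟨xa, hxa, ha'⟩ := (lt_csSup_iff hBdd hBne).1 ha
      obtain ⟨xb, hxb, hb'⟩ := (lt_csSup_iff hBdd hBne).1 hb
      obtain ⟨xc, hxc, hc'⟩ := (lt_csSup_iff hBdd hBne).1 hc
      obtain ⟨xd, hxd, hd'⟩ := (lt_csSup_iff hBdd hBne).1 hd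
      have hm1 : max xa xb ∈ B := by
        rcases max_cases xa xb with ⟨h, _⟩ | ⟨h, _⟩ <;> rw [h] <;> assumption
      have hm2 : max xc xd ∈ B := by
        rcases max_cases xc xd with ⟨h, _⟩ | ⟨h, _⟩ <;> rw [h] <;> assumption
      have hm : max (max xa xb) (max xc xd) ∈ B := by
        rcases max_cases (max xa xb) (max xc xd) with ⟨h, _⟩ | ⟨h, _⟩ <;>
          rw [h] <;> assumption
      have hHlt := (hBC hm).2.2 a
        (lt_of_lt_of_le ha' (le_max_of_le_left (le_max_left _ _))) b
        (lt_of_lt_of_le hb' (le_max_of_le_left (le_max_right _ _))) c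
        (lt_of_lt_of_le hc' (le_max_of_le_right (le_max_left _ _))) d
        (lt_of_lt_of_le hd' (le_max_of_le_right (le_max_right _ _)))
      exact lt_of_lt_of_le hHlt (le_csSup hBdd hm)
  · -- the equivalence relation
    intro α hα
    have hαlt : α < κ.ord := hα.1
    obtain ⟨hclE, hclIW, hclC, hclS⟩ := hcl α hα
    constructor
    · -- reflexivity
      intro η
      by_cases h : ModelsRes ar π T η α
      · refine Or.inr ⟨h, h, fun l => iI (l.getLastD 0), ?_⟩
        exact refl_win _ hαlt iI (fun a ha => (hiI a).2 ha)
          (fun a ha => (hclIW a ha).1)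
      · exact Or.inl ⟨h, h⟩
    · -- symmetry
      intro η ξ h
      rcases h with ⟨h1, h2⟩ | ⟨h1, h2, σ, hσ⟩
      · exact Or.inl ⟨h2, h1⟩
      · refine Or.inr ⟨h2, h1, fun l => iW (σ l), ?_⟩
        exact symm_win hαlt iW (fun a ha => (hiW a).2 ha)
          (fun a ha => (hclIW a ha).2) hσ
    · -- transitivity
      intro η ξ ζ hxy hyz
      rcases hxy with ⟨h1, h2⟩ | ⟨h1, h2, σa, hσa⟩
      · rcases hyz with ⟨h3, h4⟩ | ⟨h3, h4, σb, hσb⟩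
        · exact Or.inl ⟨h1, h4⟩
        · exact absurd h3 h2
      · rcases hyz with ⟨h3, h4⟩ | ⟨h3, h4, σb, hσb⟩
        · exact absurd h2 h3
        · refine Or.inr ⟨h1, h4, ?_⟩
          exact ⟨_, trans_win hαlt iS iC e0
            (fun a b c d ha hb hc hd => (hiS a b c d).2 ha hb hc hd)
            (fun a b ha hb => (hiC a b).2 ha hb)
            (fun a b c d ha hb hc hd => hclS a ha b hb c hc d hd)
            (fun a b ha hb => hclC a ha b hb)
            he0 hclE hσa hσb⟩
end
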